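/- arXiv:1409.3922 — 4 statements merged into one kernel-verified Lean document; each statement's English description precedes it below -/
import Mathlib

section
/- Let (X,μ) be a good Cantor measure space (X homeomorphic to the Cantor set, μ a continuous strictly positive Borel probability-type measure satisfying the Subset Condition). Let U ⊆ X be clopen, K ⊆ U compact, and let α be in the clopen values set μ(Clop(X)) with μ(K) < α ≤ μ(U). Then there exists a clopen set V with K ⊆ V ⊆ U and μ(V) = α. -/
open MeasureTheory Set

/-- Improved Subset Condition in good Cantor measure spaces. -/
theorem stmt0 {X : Type*} [TopologicalSpace X] [CompactSpace X] [T2Space X]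
    [TopologicalSpace.MetrizableSpace X] [TotallyDisconnectedSpace X]
    [MeasurableSpace X] [BorelSpace X]
    (μ : Measure X) [IsFiniteMeasure μ]
    (hperf : ∀ x : X, ¬ IsOpen ({x} : Set X))
    (hcont : ∀ x : X, μ {x} = 0)
    (hpos : ∀ U : Set X, IsOpen U → U.Nonempty → 0 < μ U)
    (hsc : ∀ U V : Set X, IsClopen U → IsClopen V → μ U < μ V →
      ∃ W, W ⊆ V ∧ IsClopen W ∧ μ W = μ U)
    (U : Set X) (hU : IsClopen U) (K : Set X) (hK : IsCompact K) (hKU : K ⊆ U)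
    (α : ENNReal) (hα : ∃ A : Set X, IsClopen A ∧ μ A = α)
    (h1 : μ K < α) (h2 : α ≤ μ U) :
    ∃ V : Set X, IsClopen V ∧ K ⊆ V ∧ V ⊆ U ∧ μ V = α := by
  haveI : μ.WeaklyRegular :=
    MeasureTheory.Measure.WeaklyRegular.of_pseudoMetrizableSpace_of_isFiniteMeasure μ
  -- find an open set O ⊇ K inside U with μ O < α
  obtain ⟨O, hKO, hOopen, hOlt⟩ := Set.exists_isOpen_lt_of_lt K α h1
  set O' : Set X := O ∩ U with hO'
  have hO'open : IsOpen O' := hOopen.inter hU.isOpen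
  have hKO' : K ⊆ O' := subset_inter hKO hKU
  have hO'lt : μ O' < α := lt_of_le_of_lt (measure_mono inter_subset_left) hOlt
  -- cover K by clopen sets inside O'
  have hcov : ∀ x ∈ K, ∃ V : Set X, IsClopen V ∧ x ∈ V ∧ V ⊆ O' := fun x hx =>
    compact_exists_isClopen_in_isOpen hO'open (hKO' hx)
  choose! f hf1 hf2 hf3 using hcov
  obtain ⟨t, ht⟩ := hK.elim_finite_subcover (fun x : K => f x) (fun x => (hf1 x x.2).isOpen)
    (fun x hx => mem_iUnion.2 ⟨⟨x, hx⟩, hf2 x hx⟩)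
  set V0 : Set X := ⋃ x ∈ t, f x with hV0def
  have hV0clopen : IsClopen V0 := isClopen_biUnion_finset (fun x _ => hf1 x x.2)
  have hKV0 : K ⊆ V0 := by
    intro x hx
    rcases mem_iUnion.1 (ht hx) with ⟨i, hi⟩
    rcases mem_iUnion.1 hi with ⟨hit, hxi⟩
    exact mem_iUnion.2 ⟨i, mem_iUnion.2 ⟨hit, hxi⟩⟩
  have hV0O' : V0 ⊆ O' := iUnion₂_subset fun x _ => hf3 x x.2
  have hV0U : V0 ⊆ U := hV0O'.trans inter_subset_right
  have hV0lt : μ V0 < α := lt_of_le_of_lt (measure_mono hV0O') hO'lt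
  -- get a clopen set D with μ D = α - μ V0
  obtain ⟨A, hA, hAα⟩ := hα
  obtain ⟨W, hWA, hWclopen, hWμ⟩ := hsc V0 A hV0clopen hA (by rw [hAα]; exact hV0lt)
  set D : Set X := A \ W with hDdef
  have hDclopen : IsClopen D := hA.diff hWclopen
  have hDμ : μ D = α - μ V0 := by
    rw [hDdef, measure_diff hWA hWclopen.isOpen.measurableSet.nullMeasurableSet (measure_ne_top μ W),
      hAα, hWμ]
  have hfin : μ V0 ≠ ⊤ := measure_ne_top μ V0
  have hUV0 : μ (U \ V0) = μ U - μ V0 :=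
    measure_diff hV0U hV0clopen.isOpen.measurableSet.nullMeasurableSet hfin
  have hDle : μ D ≤ μ (U \ V0) := by
    rw [hDμ, hUV0]; exact tsub_le_tsub_right h2 _
  rcases eq_or_lt_of_le hDle with heq | hlt
  · refine ⟨U, hU, hKU, subset_rfl, ?_⟩
    have : μ V0 + μ (U \ V0) = μ U := by
      rw [hUV0, add_tsub_cancel_of_le (measure_mono hV0U)]
    rw [← this, ← heq, hDμ, add_tsub_cancel_of_le hV0lt.le]
  · obtain ⟨W', hW'sub, hW'clopen, hW'μ⟩ := hsc D (U \ V0) hDclopen (hU.diff hV0clopen) hlt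
    refine ⟨V0 ∪ W', hV0clopen.union hW'clopen, hKV0.trans subset_union_left,
      union_subset hV0U (hW'sub.trans diff_subset), ?_⟩
    have hdisj : Disjoint V0 W' :=
      Set.disjoint_of_subset_right hW'sub disjoint_sdiff_right
    rw [measure_union hdisj hW'clopen.isOpen.measurableSet, hW'μ, hDμ,
      add_tsub_cancel_of_le hV0lt.le]
end

section
/- Any homeomorphism f : A → B between closed nowhere dense subsets A, B of the Cantor cube X = {0,1}^ω extends to a homeomorphism of X onto itself. -/
open Set
namespace KR
abbrev X := ℕ → Bool

/-- The set of points agreeing with `x` on the first `n` coordinates. -/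
def Ag (n : ℕ) (x : X) : Set X := {y | ∀ i < n, y i = x i}

lemma mem_Ag_self (n : ℕ) (x : X) : x ∈ Ag n x := fun _ _ => rfl

lemma isClopen_Ag (n : ℕ) (x : X) : IsClopen (Ag n x) := by
  have : Ag n x = ⋂ i ∈ Finset.range n, (fun y : X => y i) ⁻¹' {x i} := by
    ext y; simp [Ag]
  rw [this]
  exact Finite.isClopen_biInter (Finset.finite_toSet _)
    (fun i _ => (isClopen_discrete {x i}).preimage (continuous_apply i))

/-- Basic neighborhoods in the Cantor cube. -/
lemma exists_Ag_subset {U : Set X} (hU : IsOpen U) {x : X} (hx : x ∈ U) :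
    ∃ n, Ag n x ⊆ U := by
  obtain ⟨I, u, hu, hsub⟩ := isOpen_pi_iff.1 hU x hx
  refine ⟨(I.sup id) + 1, fun y hy => hsub ?_⟩
  intro a ha
  have : y a = x a := hy a (Nat.lt_succ_of_le (Finset.le_sup (f := id) ha))
  rw [this]; exact (hu a ha).2

lemma mem_closure_of_Ag {A : Set X} {x : X} (h : ∀ n, ∃ a ∈ A, a ∈ Ag n x) :
    x ∈ closure A := by
  rw [mem_closure_iff]
  intro U hU hx
  obtain ⟨n, hn⟩ := exists_Ag_subset hU hx
  obtain ⟨a, haA, ha⟩ := h n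
  exact ⟨a, hn (fun i hi => (ha i hi)), haA⟩

/-- Clopen separation: a compact set inside an open set, avoiding a closed set. -/
lemma sep2 {K U F : Set X} (hK : IsCompact K) (hU : IsOpen U) (hF : IsClosed F)
    (hKU : K ⊆ U) (hKF : Disjoint K F) :
    ∃ C : Set X, IsClopen C ∧ K ⊆ C ∧ C ⊆ U ∧ Disjoint C F := by
  have hopen : IsOpen (U ∩ Fᶜ) := hU.inter hF.isOpen_compl
  have : ∀ x : K, ∃ n : ℕ, Ag n x ⊆ U ∩ Fᶜ := by
    intro ⟨x, hx⟩
    exact exists_Ag_subset hopen ⟨hKU hx, disjoint_left.1 hKF hx⟩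
  choose n hn using this
  obtain ⟨t, ht⟩ := hK.elim_finite_subcover (fun x : K => Ag (n x) x)
    (fun x => (isClopen_Ag _ _).isOpen)
    (fun x hx => mem_iUnion.2 ⟨⟨x, hx⟩, mem_Ag_self _ _⟩)
  refine ⟨⋃ x ∈ t, Ag (n x) x, ?_, ht, ?_, ?_⟩
  · exact Finite.isClopen_biUnion t.finite_toSet (fun x _ => isClopen_Ag _ _)
  · refine iUnion₂_subset (fun x _ => (hn x).trans inter_subset_left)
  · rw [disjoint_left]
    intro y hy
    obtain ⟨x, -, hx⟩ := mem_iUnion₂.1 hy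
    exact (hn x hx).2

def cons (b : Bool) (y : X) : X := fun i => Nat.casesOn i b y
def tl (x : X) : X := fun k => x (k + 1)

@[simp] lemma cons_zero (b : Bool) (y : X) : cons b y 0 = b := rfl
@[simp] lemma cons_succ (b : Bool) (y : X) (k : ℕ) : cons b y (k+1) = y k := rfl
@[simp] lemma tl_cons (b : Bool) (y : X) : tl (cons b y) = y := rfl
lemma cons_tl_self (x : X) : cons (x 0) (tl x) = x := by
  funext i; cases i <;> rfl

lemma continuous_tl : Continuous tl :=
  continuous_pi fun k => continuous_apply (k+1)

lemma continuous_cons (b : Bool) : Continuous (cons b) :=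
  continuous_pi fun i => by
    cases i with
    | zero => exact continuous_const
    | succ k => exact continuous_apply k

/-- Function-level homeomorphism between subsets. -/
def HomF (C D : Set X) (g g' : X → X) : Prop :=
  MapsTo g C D ∧ MapsTo g' D C ∧ (∀ x ∈ C, g' (g x) = x) ∧ (∀ y ∈ D, g (g' y) = y) ∧
    ContinuousOn g C ∧ ContinuousOn g' D

def Determined (n : ℕ) (C : Set X) : Prop :=
  ∀ x y : X, (∀ i < n, x i = y i) → x ∈ C → y ∈ C

lemma continuousOn_union_of_isOpen {g : X → X} {U V : Set X} (hU : IsOpen U) (hV : IsOpen V)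
    (h1 : ContinuousOn g U) (h2 : ContinuousOn g V) : ContinuousOn g (U ∪ V) := by
  intro x hx
  rcases hx with hx | hx
  · exact ((h1.continuousAt (hU.mem_nhds hx))).continuousWithinAt
  · exact ((h2.continuousAt (hV.mem_nhds hx))).continuousWithinAt

lemma determined_exists {C : Set X} (hC : IsClopen C) : ∃ n, Determined n C := by
  have hcomp : IsCompact C := hC.isClosed.isCompact
  have : ∀ x : C, ∃ n : ℕ, {y | ∀ i < n, y i = (x : X) i} ⊆ C := by
    intro ⟨x, hx⟩
    obtain ⟨I, u, hu, hsub⟩ := isOpen_pi_iff.1 hC.isOpen x hx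
    refine ⟨(I.sup id) + 1, fun y hy => hsub ?_⟩
    intro a ha
    rw [hy a (Nat.lt_succ_of_le (Finset.le_sup (f := id) ha))]
    exact (hu a ha).2
  choose n hn using this
  obtain ⟨t, ht⟩ := hcomp.elim_finite_subcover (fun x : C => {y | ∀ i < n x, y i = (x : X) i})
    (fun x => by
      show IsOpen {y : X | ∀ i < n x, y i = (x : X) i}
      have : {y : X | ∀ i < n x, y i = (x : X) i} = ⋂ i ∈ Finset.range (n x), (fun y : X => y i) ⁻¹' {(x : X) i} := by
        ext y; simp
      rw [this]
      exact isOpen_biInter_finset fun i _ => (isOpen_discrete _).preimage (continuous_apply i))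
    (fun x hx => mem_iUnion.2 ⟨⟨x, hx⟩, fun i _ => rfl⟩)
  refine ⟨t.sup n, fun x y hxy hx => ?_⟩
  obtain ⟨z, hz, hxz⟩ := mem_iUnion₂.1 (ht hx)
  refine hn z (fun i hi => ?_)
  rw [← hxy i (lt_of_lt_of_le hi (Finset.le_sup hz))]
  exact hxz i hi

lemma clopen_homF_univ : ∀ (n : ℕ) (C : Set X), IsClopen C → C.Nonempty → Determined n C →
    ∃ g g', HomF C univ g g' := by
  intro n
  induction n with
  | zero =>
    intro C _ ⟨w, hw⟩ hdet
    have : C = univ := eq_univ_of_forall fun y => hdet w y (by omega) hw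
    subst this
    exact ⟨id, id, mapsTo_univ _ _, mapsTo_univ _ _, fun _ _ => rfl, fun _ _ => rfl,
      continuousOn_id, continuousOn_id⟩
  | succ n ih =>
    intro C hC hCne hdet
    set D : Bool → Set X := fun b => (cons b) ⁻¹' C with hD
    have hDclop : ∀ b, IsClopen (D b) := fun b => hC.preimage (continuous_cons b)
    have hDdet : ∀ b, Determined n (D b) := by
      intro b y y' hyy' hy
      refine hdet (cons b y) (cons b y') (fun i hi => ?_) hy
      cases i with
      | zero => rfl
      | succ k => exact hyy' k (by omega)
    have hmemD : ∀ x ∈ C, tl x ∈ D (x 0) := by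
      intro x hx
      show cons (x 0) (tl x) ∈ C
      rw [cons_tl_self x]; exact hx
    -- single-branch helper
    have single : ∀ b : Bool, (D b).Nonempty → (∀ x ∈ C, x 0 = b) →
        ∃ g g', HomF C univ g g' := by
      intro b hne hall
      obtain ⟨g1, g1', hg1⟩ := ih (D b) (hDclop b) hne (hDdet b)
      refine ⟨fun x => g1 (tl x), fun y => cons b (g1' y), mapsTo_univ _ _, ?_, ?_, ?_, ?_, ?_⟩
      · intro y _
        exact hg1.2.1 (mem_univ _)
      · intro x hx
        have h1 : tl x ∈ D b := by rw [← hall x hx]; exact hmemD x hx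
        show cons b (g1' (g1 (tl x))) = x
        rw [hg1.2.2.1 _ h1, ← hall x hx, cons_tl_self x]
      · intro y _
        show g1 (tl (cons b (g1' y))) = y
        rw [tl_cons, hg1.2.2.2.1 _ (mem_univ _)]
      · refine hg1.2.2.2.2.1.comp continuous_tl.continuousOn ?_
        intro x hx
        rw [← hall x hx]; exact hmemD x hx
      · exact ((continuous_cons b).comp_continuousOn
          (hg1.2.2.2.2.2.mono (subset_univ _))).mono (subset_univ _)
    by_cases h0 : (D false).Nonempty <;> by_cases h1 : (D true).Nonempty
    · -- both halves nonempty
      obtain ⟨g0, g0', hg0⟩ := ih (D false) (hDclop false) h0 (hDdet false)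
      obtain ⟨g1, g1', hg1⟩ := ih (D true) (hDclop true) h1 (hDdet true)
      have ifT : ∀ (u v : X), (if (true : Bool) = true then u else v) = u := fun u v => if_pos rfl
      have ifF : ∀ (u v : X), (if (false : Bool) = true then u else v) = v :=
        fun u v => if_neg (by simp)
      refine ⟨fun x => cons (x 0) (if x 0 = true then g1 (tl x) else g0 (tl x)),
              fun y => cons (y 0) (if y 0 = true then g1' (tl y) else g0' (tl y)),
              mapsTo_univ _ _, ?_, ?_, ?_, ?_, ?_⟩
      · intro y _
        show cons (y 0) (if y 0 = true then g1' (tl y) else g0' (tl y)) ∈ C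
        rcases Bool.eq_false_or_eq_true (y 0) with hb | hb <;> rw [hb]
        · rw [ifT]; exact hg1.2.1 (mem_univ _)
        · rw [ifF]; exact hg0.2.1 (mem_univ _)
      · intro x hx
        have hm := hmemD x hx
        show cons (cons (x 0) (if x 0 = true then g1 (tl x) else g0 (tl x)) 0)
          (if (cons (x 0) (if x 0 = true then g1 (tl x) else g0 (tl x))) 0 = true
            then g1' (tl (cons (x 0) (if x 0 = true then g1 (tl x) else g0 (tl x))))
            else g0' (tl (cons (x 0) (if x 0 = true then g1 (tl x) else g0 (tl x))))) = x
        simp only [cons_zero, tl_cons]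
        rcases Bool.eq_false_or_eq_true (x 0) with hb | hb <;> rw [hb] at hm ⊢
        · show cons true (g1' (g1 (tl x))) = x; rw [hg1.2.2.1 _ hm]
          conv_rhs => rw [← cons_tl_self x, hb]
        · show cons false (g0' (g0 (tl x))) = x; rw [hg0.2.2.1 _ hm]
          conv_rhs => rw [← cons_tl_self x, hb]
      · intro y _
        show cons (cons (y 0) (if y 0 = true then g1' (tl y) else g0' (tl y)) 0)
          (if (cons (y 0) (if y 0 = true then g1' (tl y) else g0' (tl y))) 0 = true
            then g1 (tl (cons (y 0) (if y 0 = true then g1' (tl y) else g0' (tl y))))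
            else g0 (tl (cons (y 0) (if y 0 = true then g1' (tl y) else g0' (tl y))))) = y
        simp only [cons_zero, tl_cons]
        rcases Bool.eq_false_or_eq_true (y 0) with hb | hb <;> rw [hb]
        · show cons true (g1 (g1' (tl y))) = y; rw [hg1.2.2.2.1 _ (mem_univ _)]
          conv_rhs => rw [← cons_tl_self y, hb]
        · show cons false (g0 (g0' (tl y))) = y; rw [hg0.2.2.2.1 _ (mem_univ _)]
          conv_rhs => rw [← cons_tl_self y, hb]
      · -- ContinuousOn g C
        have hop : ∀ b : Bool, IsOpen {x : X | x 0 = b} := by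
          intro b
          have : {x : X | x 0 = b} = (fun p : X => p 0) ⁻¹' {b} := by ext x; simp
          rw [this]; exact (isOpen_discrete _).preimage (continuous_apply 0)
        have hsub : C ⊆ (C ∩ {x : X | x 0 = true}) ∪ (C ∩ {x : X | x 0 = false}) := by
          intro x hx
          rcases Bool.eq_false_or_eq_true (x 0) with hb | hb
          · exact Or.inl ⟨hx, hb⟩
          · exact Or.inr ⟨hx, hb⟩
        refine ContinuousOn.mono ?_ hsub
        refine continuousOn_union_of_isOpen (hC.isOpen.inter (hop true))
          (hC.isOpen.inter (hop false)) ?_ ?_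
        · refine ContinuousOn.congr (f := fun x => cons true (g1 (tl x))) ?_ ?_
          · refine (continuous_cons true).comp_continuousOn
              (hg1.2.2.2.2.1.comp continuous_tl.continuousOn ?_)
            intro x hx
            have h2 : tl x ∈ D (x 0) := hmemD x hx.1
            rwa [hx.2] at h2
          · intro x hx
            show cons (x 0) _ = _
            rw [hx.2, ifT]
        · refine ContinuousOn.congr (f := fun x => cons false (g0 (tl x))) ?_ ?_
          · refine (continuous_cons false).comp_continuousOn
              (hg0.2.2.2.2.1.comp continuous_tl.continuousOn ?_)
            intro x hx
            have h2 : tl x ∈ D (x 0) := hmemD x hx.1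
            rwa [hx.2] at h2
          · intro x hx
            show cons (x 0) _ = _
            rw [hx.2, ifF]
      · -- ContinuousOn g' univ
        have hop : ∀ b : Bool, IsOpen {x : X | x 0 = b} := by
          intro b
          have : {x : X | x 0 = b} = (fun p : X => p 0) ⁻¹' {b} := by ext x; simp
          rw [this]; exact (isOpen_discrete _).preimage (continuous_apply 0)
        have hsub : (univ : Set X) ⊆ {x : X | x 0 = true} ∪ {x : X | x 0 = false} := by
          intro x _
          rcases Bool.eq_false_or_eq_true (x 0) with hb | hb
          · exact Or.inl hb
          · exact Or.inr hb
        refine ContinuousOn.mono ?_ hsub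
        refine continuousOn_union_of_isOpen (hop true) (hop false) ?_ ?_
        · refine ContinuousOn.congr (f := fun y => cons true (g1' (tl y))) ?_ ?_
          · exact ((continuous_cons true).comp
              ((continuousOn_univ.mp hg1.2.2.2.2.2).comp continuous_tl)).continuousOn
          · intro y hy
            have hb : y 0 = true := hy
            show cons (y 0) _ = _
            rw [hb, ifT]
        · refine ContinuousOn.congr (f := fun y => cons false (g0' (tl y))) ?_ ?_
          · exact ((continuous_cons false).comp
              ((continuousOn_univ.mp hg0.2.2.2.2.2).comp continuous_tl)).continuousOn
          · intro y hy
            have hb : y 0 = false := hy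
            show cons (y 0) _ = _
            rw [hb, ifF]
    · -- only D false nonempty
      refine single false h0 (fun x hx => ?_)
      rcases Bool.eq_false_or_eq_true (x 0) with hb | hb
      · exact absurd ⟨tl x, by rw [← hb]; exact hmemD x hx⟩ h1
      · exact hb
    · refine single true h1 (fun x hx => ?_)
      rcases Bool.eq_false_or_eq_true (x 0) with hb | hb
      · exact hb
      · exact absurd ⟨tl x, by rw [← hb]; exact hmemD x hx⟩ h0
    · obtain ⟨w, hw⟩ := hCne
      have := hmemD w hw
      rcases Bool.eq_false_or_eq_true (w 0) with hb | hb <;> rw [hb] at this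
      · exact absurd ⟨tl w, this⟩ h1
      · exact absurd ⟨tl w, this⟩ h0

/-- Any two nonempty clopen subsets of the Cantor cube are homeomorphic (function form). -/
lemma clopen_homF {C D : Set X} (hC : IsClopen C) (hD : IsClopen D)
    (hCne : C.Nonempty) (hDne : D.Nonempty) : ∃ g g', HomF C D g g' := by
  obtain ⟨n, hn⟩ := determined_exists hC
  obtain ⟨m, hm⟩ := determined_exists hD
  obtain ⟨g1, g1', hg1⟩ := clopen_homF_univ n C hC hCne hn
  obtain ⟨g2, g2', hg2⟩ := clopen_homF_univ m D hD hDne hm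
  refine ⟨fun x => g2' (g1 x), fun y => g1' (g2 y), ?_, ?_, ?_, ?_, ?_, ?_⟩
  · exact fun x hx => hg2.2.1 (mem_univ _)
  · exact fun y hy => hg1.2.1 (mem_univ _)
  · intro x hx
    show g1' (g2 (g2' (g1 x))) = x
    rw [hg2.2.2.2.1 _ (mem_univ _), hg1.2.2.1 _ hx]
  · intro y hy
    show g2' (g1 (g1' (g2 y))) = y
    rw [hg1.2.2.2.1 _ (mem_univ _), hg2.2.2.1 _ hy]
  · exact (hg2.2.2.2.2.2.mono (subset_univ _)).comp hg1.2.2.2.2.1 (fun x _ => mem_univ _)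
  · exact (hg1.2.2.2.2.2.mono (subset_univ _)).comp hg2.2.2.2.2.1 (fun y _ => mem_univ _)


section Main

variable (A B : Set X) (f : A ≃ₜ B)

structure Pc where
  W : Set X
  Z : Set X
  g : X → X
  g' : X → X
  free : Bool

variable {A B}

def Compat (p : Pc) : Prop := ∀ a : A, ((a : X) ∈ p.W ↔ (f a : X) ∈ p.Z)

def FreeOK (A B : Set X) (p : Pc) : Prop :=
  HomF p.W p.Z p.g p.g' ∧ p.W ∩ A = ∅ ∧ p.Z ∩ B = ∅

def Small (n : ℕ) (S : Set X) : Prop := ∀ x ∈ S, ∀ y ∈ S, ∀ i < n, x i = y i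

def PcOK (n : ℕ) (p : Pc) : Prop :=
  IsClopen p.W ∧ IsClopen p.Z ∧ p.W.Nonempty ∧ p.Z.Nonempty ∧ Compat f p ∧
    (if p.free then FreeOK A B p
     else ((p.W ∩ A).Nonempty ∧ Small n p.W ∧ Small n p.Z))

def Inv (n : ℕ) (L : List Pc) : Prop :=
  (∀ x : X, ∃ p ∈ L, x ∈ p.W) ∧ (∀ x : X, ∃ p ∈ L, x ∈ p.Z) ∧
  (∀ p ∈ L, ∀ q ∈ L, p ≠ q → p.W ∩ q.W = ∅ ∧ p.Z ∩ q.Z = ∅) ∧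
  (∀ p ∈ L, PcOK f n p)

def Refines (L L' : List Pc) : Prop :=
  (∀ q ∈ L', ∃ p ∈ L, q.W ⊆ p.W ∧ q.Z ⊆ p.Z) ∧ (∀ p ∈ L, p.free = true → p ∈ L')

/-- Agreement set for a finite pattern. -/
def AgF {m : ℕ} (s : Fin m → Bool) : Set X := {x | ∀ i : Fin m, x (i : ℕ) = s i}

lemma isClopen_AgF {m : ℕ} (s : Fin m → Bool) : IsClopen (AgF s) := by
  have : AgF s = ⋂ i ∈ (Finset.univ : Finset (Fin m)), (fun y : X => y (i : ℕ)) ⁻¹' {s i} := by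
    ext y; simp [AgF]
  rw [this]
  exact Finite.isClopen_biInter (Finset.finite_toSet _)
    (fun i _ => (isClopen_discrete _).preimage (continuous_apply _))

lemma small_AgF {m : ℕ} (s : Fin m → Bool) : Small m (AgF s) := by
  intro x hx y hy i hi
  rw [hx ⟨i, hi⟩, hy ⟨i, hi⟩]

/-- Family clopen separation. -/
lemma sepFam {ι : Type} [Fintype ι] (K O : ι → Set X)
    (hK : ∀ i, IsCompact (K i)) (hO : ∀ i, IsOpen (O i)) (hKO : ∀ i, K i ⊆ O i)
    (hdisj : ∀ i j, i ≠ j → Disjoint (K i) (K j)) :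
    ∃ W : ι → Set X, (∀ i, IsClopen (W i)) ∧ (∀ i, K i ⊆ W i) ∧ (∀ i, W i ⊆ O i) ∧
      (∀ i j, i ≠ j → Disjoint (W i) (W j)) ∧ (∀ i j, i ≠ j → Disjoint (W i) (K j)) ∧
      (∀ i, K i = ∅ → W i = ∅) := by
  classical
  have hFcl : ∀ i : ι, IsClosed (⋃ j ∈ ({j | j ≠ i} : Set ι), K j) := by
    intro i
    exact Set.Finite.isClosed_biUnion (Set.toFinite _) (fun j _ => (hK j).isClosed)
  have hsep : ∀ i : ι, ∃ C : Set X, IsClopen C ∧ K i ⊆ C ∧ C ⊆ O i ∧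
      Disjoint C (⋃ j ∈ ({j | j ≠ i} : Set ι), K j) := by
    intro i
    refine sep2 (hK i) (hO i) (hFcl i) (hKO i) ?_
    rw [disjoint_left]
    intro x hx hx'
    obtain ⟨j, hj, hxj⟩ := mem_iUnion₂.1 hx'
    exact (disjoint_left.1 (hdisj i j (Ne.symm hj))) hx hxj
  choose C hC using hsep
  refine ⟨fun i => if K i = ∅ then ∅ else (C i \ ⋃ j ∈ ({j | j ≠ i} : Set ι), C j),
    ?_, ?_, ?_, ?_, ?_, ?_⟩
  · intro i
    dsimp only
    split
    · exact isClopen_empty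
    · exact ((hC i).1).diff (Finite.isClopen_biUnion (Set.toFinite _) (fun j _ => (hC j).1))
  · intro i
    dsimp only
    split
    · next h => rw [h]
    · next h =>
      intro x hx
      refine ⟨(hC i).2.1 hx, ?_⟩
      intro hx'
      obtain ⟨j, hj, hxj⟩ := mem_iUnion₂.1 hx'
      exact (disjoint_left.1 (hC j).2.2.2) hxj (mem_iUnion₂.2 ⟨i, Ne.symm hj, hx⟩)
  · intro i
    dsimp only
    split
    · exact empty_subset _
    · exact diff_subset.trans (hC i).2.2.1
  · intro i j hij
    rw [disjoint_left]
    dsimp only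
    intro x hxi hxj
    split at hxi
    · exact hxi
    · split at hxj
      · exact hxj
      · exact hxi.2 (mem_iUnion₂.2 ⟨j, Ne.symm hij, hxj.1⟩)
  · intro i j hij
    rw [disjoint_left]
    dsimp only
    intro x hxi hxj
    split at hxi
    · exact hxi
    · exact (disjoint_left.1 (hC i).2.2.2) hxi.1 (mem_iUnion₂.2 ⟨j, Ne.symm hij, hxj⟩)
  · intro i h
    simp [h]

/-- A nonempty open set is not contained in a nowhere dense set. -/
lemma exists_notMem_of_nwd {U : Set X} (hU : IsOpen U) (hUne : U.Nonempty)
    {A : Set X} (hAnd : IsNowhereDense A) : ∃ x ∈ U, x ∉ A := by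
  by_contra h
  push_neg at h
  have h1 : U ⊆ interior (closure A) :=
    interior_maximal (fun x hx => subset_closure (h x hx)) hU
  obtain ⟨x, hx⟩ := hUne
  rw [hAnd] at h1
  exact h1 hx

/-- The key refinement lemma. -/
lemma refineEx (hA : IsClosed A) (hAnd : IsNowhereDense A) (hB : IsClosed B)
    (hBnd : IsNowhereDense B) (n : ℕ) (U V : Set X) (hU : IsClopen U) (hV : IsClopen V)
    (hUA : (U ∩ A).Nonempty) (hcompat : ∀ a : A, ((a : X) ∈ U ↔ (f a : X) ∈ V)) :
    ∃ M : List Pc,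
      (∀ x ∈ U, ∃ q ∈ M, x ∈ q.W) ∧ (∀ y ∈ V, ∃ q ∈ M, y ∈ q.Z) ∧
      (∀ q ∈ M, q.W ⊆ U ∧ q.Z ⊆ V) ∧
      (∀ q ∈ M, ∀ q' ∈ M, q ≠ q' → q.W ∩ q'.W = ∅ ∧ q.Z ∩ q'.Z = ∅) ∧
      (∀ q ∈ M, PcOK f (n+1) q) := by
  classical
  haveI : CompactSpace A := isCompact_iff_compactSpace.1 hA.isCompact
  haveI : CompactSpace B := isCompact_iff_compactSpace.1 hB.isCompact
  set ι := (Fin (n+1) → Bool) × (Fin (n+1) → Bool) with hι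
  set SA : ι → Set A := fun σ => {a : A | (a : X) ∈ U ∧ (∀ i : Fin (n+1), (a : X) (i : ℕ) = σ.1 i) ∧
    (∀ i : Fin (n+1), (f a : X) (i : ℕ) = σ.2 i)} with hSA
  set KA : ι → Set X := fun σ => Subtype.val '' SA σ with hKA
  set SB : ι → Set B := fun σ => {b : B | (b : X) ∈ V ∧ (∀ i : Fin (n+1), ((f.symm b : A) : X) (i : ℕ) = σ.1 i) ∧
    (∀ i : Fin (n+1), (b : X) (i : ℕ) = σ.2 i)} with hSB
  set KB : ι → Set X := fun σ => Subtype.val '' SB σ with hKB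
  -- compactness
  have hSAcl : ∀ σ, IsClosed (SA σ) := by
    intro σ
    have e : SA σ = (fun a : A => (a : X)) ⁻¹' U ∩
        ((⋂ i : Fin (n+1), {a : A | (a : X) (i : ℕ) = σ.1 i}) ∩
         (⋂ i : Fin (n+1), {a : A | (f a : X) (i : ℕ) = σ.2 i})) := by
      ext a; simp [hSA]; try tauto
    rw [e]
    refine (hU.isClosed.preimage continuous_subtype_val).inter (IsClosed.inter ?_ ?_)
    · exact isClosed_iInter fun i => isClosed_eq
        ((continuous_apply (i : ℕ)).comp continuous_subtype_val) continuous_const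
    · exact isClosed_iInter fun i => isClosed_eq
        ((continuous_apply (i : ℕ)).comp (continuous_subtype_val.comp f.continuous))
        continuous_const
  have hSBcl : ∀ σ, IsClosed (SB σ) := by
    intro σ
    have e : SB σ = (fun b : B => (b : X)) ⁻¹' V ∩
        ((⋂ i : Fin (n+1), {b : B | ((f.symm b : A) : X) (i : ℕ) = σ.1 i}) ∩
         (⋂ i : Fin (n+1), {b : B | (b : X) (i : ℕ) = σ.2 i})) := by
      ext b; simp [hSB]; try tauto
    rw [e]
    refine (hV.isClosed.preimage continuous_subtype_val).inter (IsClosed.inter ?_ ?_)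
    · exact isClosed_iInter fun i => isClosed_eq
        ((continuous_apply (i : ℕ)).comp (continuous_subtype_val.comp f.symm.continuous))
        continuous_const
    · exact isClosed_iInter fun i => isClosed_eq
        ((continuous_apply (i : ℕ)).comp continuous_subtype_val) continuous_const
  have hKAcomp : ∀ σ, IsCompact (KA σ) := fun σ =>
    ((hSAcl σ).isCompact).image continuous_subtype_val
  have hKBcomp : ∀ σ, IsCompact (KB σ) := fun σ =>
    ((hSBcl σ).isCompact).image continuous_subtype_val
  -- membership characterizations
  have memKA : ∀ σ (a : A), ((a : X) ∈ KA σ ↔ ((a : X) ∈ U ∧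
      (∀ i : Fin (n+1), (a : X) (i : ℕ) = σ.1 i) ∧
      (∀ i : Fin (n+1), (f a : X) (i : ℕ) = σ.2 i))) := by
    intro σ a
    constructor
    · rintro ⟨a', ha', hval⟩
      have h2 : a' = a := Subtype.ext hval
      subst h2; exact ha'
    · intro h; exact ⟨a, h, rfl⟩
  have memKB : ∀ σ (b : B), ((b : X) ∈ KB σ ↔ ((b : X) ∈ V ∧
      (∀ i : Fin (n+1), ((f.symm b : A) : X) (i : ℕ) = σ.1 i) ∧
      (∀ i : Fin (n+1), (b : X) (i : ℕ) = σ.2 i))) := by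
    intro σ b
    constructor
    · rintro ⟨b', hb', hval⟩
      have h2 : b' = b := Subtype.ext hval
      subst h2; exact hb'
    · intro h; exact ⟨b, h, rfl⟩
  have hKA_A : ∀ σ, KA σ ⊆ A := by rintro σ x ⟨a, _, rfl⟩; exact a.2
  have hKB_B : ∀ σ, KB σ ⊆ B := by rintro σ x ⟨b, _, rfl⟩; exact b.2
  have link : ∀ σ (a : A), ((a : X) ∈ KA σ ↔ ((f a : X) ∈ KB σ)) := by
    intro σ a
    rw [memKA σ a, memKB σ (f a)]
    constructor
    · rintro ⟨h1, h2, h3⟩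
      refine ⟨(hcompat a).1 h1, ?_, h3⟩
      rw [f.symm_apply_apply]; exact h2
    · rintro ⟨h1, h2, h3⟩
      refine ⟨(hcompat a).2 h1, ?_, h3⟩
      rw [f.symm_apply_apply] at h2; exact h2
  -- canonical index
  have hcanA : ∀ x (hx : x ∈ A), x ∈ U →
      ∃ σ, x ∈ KA σ ∧ ∀ σ', x ∈ KA σ' → σ' = σ := by
    intro x hx hxU
    refine ⟨(fun i => x (i : ℕ), fun i => (f ⟨x, hx⟩ : X) (i : ℕ)), ?_, ?_⟩
    · exact ⟨⟨x, hx⟩, ⟨hxU, fun i => rfl, fun i => rfl⟩, rfl⟩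
    · rintro σ' ⟨a', ⟨_, h2, h3⟩, hval⟩
      have h4 : a' = ⟨x, hx⟩ := Subtype.ext hval
      subst h4
      refine Prod.ext ?_ ?_
      · funext i; exact (h2 i).symm
      · funext i; exact (h3 i).symm
  have hcanB : ∀ y (hy : y ∈ B), y ∈ V →
      ∃ σ, y ∈ KB σ ∧ ∀ σ', y ∈ KB σ' → σ' = σ := by
    intro y hy hyV
    refine ⟨(fun i => ((f.symm ⟨y, hy⟩ : A) : X) (i : ℕ), fun i => y (i : ℕ)), ?_, ?_⟩
    · exact ⟨⟨y, hy⟩, ⟨hyV, fun i => rfl, fun i => rfl⟩, rfl⟩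
    · rintro σ' ⟨b', ⟨_, h2, h3⟩, hval⟩
      have h4 : b' = ⟨y, hy⟩ := Subtype.ext hval
      subst h4
      refine Prod.ext ?_ ?_
      · funext i; exact (h2 i).symm
      · funext i; exact (h3 i).symm
  -- disjointness of the K's
  have hKAdisj : ∀ σ σ', σ ≠ σ' → Disjoint (KA σ) (KA σ') := by
    intro σ σ' hne
    rw [disjoint_left]
    rintro x ⟨a, ⟨_, h2, h3⟩, rfl⟩ ⟨a', ⟨_, h2', h3'⟩, hval⟩
    have h4 : a' = a := Subtype.ext hval
    subst h4
    refine hne (Prod.ext ?_ ?_)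
    · funext i; rw [← h2 i, ← h2' i]
    · funext i; rw [← h3 i, ← h3' i]
  have hKBdisj : ∀ σ σ', σ ≠ σ' → Disjoint (KB σ) (KB σ') := by
    intro σ σ' hne
    rw [disjoint_left]
    rintro y ⟨b, ⟨_, h2, h3⟩, rfl⟩ ⟨b', ⟨_, h2', h3'⟩, hval⟩
    have h4 : b' = b := Subtype.ext hval
    subst h4
    refine hne (Prod.ext ?_ ?_)
    · funext i; rw [← h2 i, ← h2' i]
    · funext i; rw [← h3 i, ← h3' i]
  -- separation families
  obtain ⟨WA, hWAclop, hKAWA, hWAO, hWAdisj, hWAKdisj, hWAzero⟩ :=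
    sepFam (K := KA) (O := fun σ => U ∩ AgF σ.1) hKAcomp
      (fun σ => hU.isOpen.inter (isClopen_AgF σ.1).isOpen)
      (by rintro σ x ⟨a, ⟨h1, h2, _⟩, rfl⟩; exact ⟨h1, fun i => h2 i⟩)
      hKAdisj
  obtain ⟨WB, hWBclop, hKBWB, hWBO, hWBdisj, hWBKdisj, hWBzero⟩ :=
    sepFam (K := KB) (O := fun σ => V ∩ AgF σ.2) hKBcomp
      (fun σ => hV.isOpen.inter (isClopen_AgF σ.2).isOpen)
      (by rintro σ y ⟨b, ⟨h1, _, h3⟩, rfl⟩; exact ⟨h1, fun i => h3 i⟩)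
      hKBdisj
  -- room for the free piece
  obtain ⟨xs, hxsU, hxsA⟩ := exists_notMem_of_nwd hU.isOpen (hUA.mono inter_subset_left) hAnd
  obtain ⟨DU, hDUclop, hxsDU, hDUU, hDUA⟩ := sep2 isCompact_singleton hU.isOpen hA
    (singleton_subset_iff.2 hxsU) (disjoint_singleton_left.2 hxsA)
  have hVne : V.Nonempty := by
    obtain ⟨a, haU, haA⟩ := hUA
    exact ⟨(f ⟨a, haA⟩ : X), (hcompat ⟨a, haA⟩).1 haU⟩
  obtain ⟨ys, hysV, hysB⟩ := exists_notMem_of_nwd hV.isOpen hVne hBnd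
  obtain ⟨EV, hEVclop, hysEV, hEVV, hEVB⟩ := sep2 isCompact_singleton hV.isOpen hB
    (singleton_subset_iff.2 hysV) (disjoint_singleton_left.2 hysB)
  set WA' : ι → Set X := fun σ => WA σ \ DU with hWA'
  set WB' : ι → Set X := fun σ => WB σ \ EV with hWB'
  set Wf : Set X := U \ ⋃ σ, WA' σ with hWf
  set Zf : Set X := V \ ⋃ σ, WB' σ with hZf
  have hWA'clop : ∀ σ, IsClopen (WA' σ) := fun σ => (hWAclop σ).diff hDUclop
  have hWB'clop : ∀ σ, IsClopen (WB' σ) := fun σ => (hWBclop σ).diff hEVclop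
  have hWfclop : IsClopen Wf := hU.diff (isClopen_iUnion_of_finite hWA'clop)
  have hZfclop : IsClopen Zf := hV.diff (isClopen_iUnion_of_finite hWB'clop)
  have hKAWA' : ∀ σ, KA σ ⊆ WA' σ := by
    intro σ x hx
    exact ⟨hKAWA σ hx, fun hd => (disjoint_left.1 hDUA) hd (hKA_A σ hx)⟩
  have hKBWB' : ∀ σ, KB σ ⊆ WB' σ := by
    intro σ y hy
    exact ⟨hKBWB σ hy, fun hd => (disjoint_left.1 hEVB) hd (hKB_B σ hy)⟩
  have hWA'int : ∀ σ x, x ∈ WA' σ → x ∈ A → x ∈ KA σ := by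
    intro σ x hx hxA
    have hxU : x ∈ U := ((hWAO σ) hx.1).1
    obtain ⟨σ0, hσ0, huniq⟩ := hcanA x hxA hxU
    by_cases h : σ0 = σ
    · subst h; exact hσ0
    · exact absurd hσ0 (disjoint_left.1 (hWAKdisj σ σ0 (fun he => h he.symm)) hx.1)
  have hWB'int : ∀ σ y, y ∈ WB' σ → y ∈ B → y ∈ KB σ := by
    intro σ y hy hyB
    have hyV : y ∈ V := ((hWBO σ) hy.1).1
    obtain ⟨σ0, hσ0, huniq⟩ := hcanB y hyB hyV
    by_cases h : σ0 = σ
    · subst h; exact hσ0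
    · exact absurd hσ0 (disjoint_left.1 (hWBKdisj σ σ0 (fun he => h he.symm)) hy.1)
  have hWfA : Wf ∩ A = ∅ := by
    rw [eq_empty_iff_forall_notMem]
    rintro x ⟨⟨hxU, hxn⟩, hxA⟩
    obtain ⟨σ0, hσ0, -⟩ := hcanA x hxA hxU
    exact hxn (mem_iUnion.2 ⟨σ0, hKAWA' σ0 hσ0⟩)
  have hZfB : Zf ∩ B = ∅ := by
    rw [eq_empty_iff_forall_notMem]
    rintro y ⟨⟨hyV, hyn⟩, hyB⟩
    obtain ⟨σ0, hσ0, -⟩ := hcanB y hyB hyV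
    exact hyn (mem_iUnion.2 ⟨σ0, hKBWB' σ0 hσ0⟩)
  have hxsWf : xs ∈ Wf := by
    refine ⟨hxsU, fun hx => ?_⟩
    obtain ⟨σ, hσ⟩ := mem_iUnion.1 hx
    exact hσ.2 (hxsDU rfl)
  have hysZf : ys ∈ Zf := by
    refine ⟨hysV, fun hy => ?_⟩
    obtain ⟨σ, hσ⟩ := mem_iUnion.1 hy
    exact hσ.2 (hysEV rfl)
  obtain ⟨g, g', hg⟩ := clopen_homF hWfclop hZfclop ⟨xs, hxsWf⟩ ⟨ys, hysZf⟩
  set pf : Pc := ⟨Wf, Zf, g, g', true⟩ with hpf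
  set pa : ι → Pc := fun σ => ⟨WA' σ, WB' σ, id, id, false⟩ with hpa
  set M : List Pc := pf :: (Finset.univ : Finset ι).toList.filterMap
    (fun σ => if (KA σ).Nonempty then some (pa σ) else none) with hM
  have hmemM : ∀ q, q ∈ M ↔ (q = pf ∨ ∃ σ, (KA σ).Nonempty ∧ q = pa σ) := by
    intro q
    rw [hM, List.mem_cons, List.mem_filterMap]
    constructor
    · rintro (h | ⟨σ, -, hσ⟩)
      · exact Or.inl h
      · by_cases hne : (KA σ).Nonempty
        · rw [if_pos hne] at hσ
          exact Or.inr ⟨σ, hne, (Option.some_inj.1 hσ).symm⟩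
        · rw [if_neg hne] at hσ; cases hσ
    · rintro (h | ⟨σ, hne, rfl⟩)
      · exact Or.inl h
      · refine Or.inr ⟨σ, Finset.mem_toList.2 (Finset.mem_univ σ), ?_⟩
        rw [if_pos hne]
  have hKBne : ∀ σ, (KA σ).Nonempty → (KB σ).Nonempty := by
    rintro σ ⟨x, a, haS, rfl⟩
    exact ⟨(f a : X), (link σ a).1 ⟨a, haS, rfl⟩⟩
  refine ⟨M, ?_, ?_, ?_, ?_, ?_⟩
  · -- cover U
    intro x hxU
    by_cases hx : x ∈ ⋃ σ, WA' σ
    · obtain ⟨σ, hσ⟩ := mem_iUnion.1 hx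
      have hne : (KA σ).Nonempty := by
        rcases eq_empty_or_nonempty (KA σ) with he | hne
        · have h2 := hσ.1
          rw [hWAzero σ he] at h2; exact absurd h2 (notMem_empty x)
        · exact hne
      exact ⟨pa σ, (hmemM _).2 (Or.inr ⟨σ, hne, rfl⟩), hσ⟩
    · exact ⟨pf, (hmemM _).2 (Or.inl rfl), ⟨hxU, hx⟩⟩
  · -- cover V
    intro y hyV
    by_cases hy : y ∈ ⋃ σ, WB' σ
    · obtain ⟨σ, hσ⟩ := mem_iUnion.1 hy
      have hne : (KA σ).Nonempty := by
        rcases eq_empty_or_nonempty (KA σ) with he | hne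
        · have hKBe : KB σ = ∅ := by
            rw [eq_empty_iff_forall_notMem]
            rintro y' ⟨b, hbS, rfl⟩
            have : ((f.symm b : A) : X) ∈ KA σ := by
              rw [link σ (f.symm b), f.apply_symm_apply]
              exact ⟨b, hbS, rfl⟩
            rw [he] at this; exact notMem_empty _ this
          have h2 := hσ.1
          rw [hWBzero σ hKBe] at h2; exact absurd h2 (notMem_empty y)
        · exact hne
      exact ⟨pa σ, (hmemM _).2 (Or.inr ⟨σ, hne, rfl⟩), hσ⟩
    · exact ⟨pf, (hmemM _).2 (Or.inl rfl), ⟨hyV, hy⟩⟩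
  · -- subsets
    intro q hq
    rcases (hmemM q).1 hq with rfl | ⟨σ, hne, rfl⟩
    · exact ⟨diff_subset, diff_subset⟩
    · exact ⟨diff_subset.trans ((hWAO σ).trans inter_subset_left),
        diff_subset.trans ((hWBO σ).trans inter_subset_left)⟩
  · -- disjointness
    intro q hq q' hq' hne
    rcases (hmemM q).1 hq with rfl | ⟨σ, hσ, rfl⟩ <;>
      rcases (hmemM q').1 hq' with rfl | ⟨σ', hσ', rfl⟩
    · exact absurd rfl hne
    · constructor <;> rw [eq_empty_iff_forall_notMem]
      · rintro x ⟨⟨-, hxn⟩, hx⟩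
        exact hxn (mem_iUnion.2 ⟨σ', hx⟩)
      · rintro y ⟨⟨-, hyn⟩, hy⟩
        exact hyn (mem_iUnion.2 ⟨σ', hy⟩)
    · constructor <;> rw [eq_empty_iff_forall_notMem]
      · rintro x ⟨hx, ⟨-, hxn⟩⟩
        exact hxn (mem_iUnion.2 ⟨σ, hx⟩)
      · rintro y ⟨hy, ⟨-, hyn⟩⟩
        exact hyn (mem_iUnion.2 ⟨σ, hy⟩)
    · have hσσ' : σ ≠ σ' := by
        rintro rfl; exact hne rfl
      constructor <;> rw [eq_empty_iff_forall_notMem]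
      · rintro x ⟨hx, hx'⟩
        exact disjoint_left.1 (hWAdisj σ σ' hσσ') hx.1 hx'.1
      · rintro y ⟨hy, hy'⟩
        exact disjoint_left.1 (hWBdisj σ σ' hσσ') hy.1 hy'.1
  · -- PcOK
    intro q hq
    rcases (hmemM q).1 hq with rfl | ⟨σ, hσ, rfl⟩
    · refine ⟨hWfclop, hZfclop, ⟨xs, hxsWf⟩, ⟨ys, hysZf⟩, ?_, ?_⟩
      · intro a
        constructor
        · intro h
          exact absurd (mem_inter h a.2) (by rw [hWfA]; exact notMem_empty _)
        · intro h
          exact absurd (mem_inter h (f a).2) (by rw [hZfB]; exact notMem_empty _)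
      · show if true then FreeOK A B pf else _
        rw [if_pos rfl]
        exact ⟨hg, hWfA, hZfB⟩
    · have hcomp2 : ∀ a : A, ((a : X) ∈ WA' σ ↔ (f a : X) ∈ WB' σ) := by
        intro a
        constructor
        · intro h
          exact hKBWB' σ ((link σ a).1 (hWA'int σ _ h a.2))
        · intro h
          exact hKAWA' σ ((link σ a).2 (hWB'int σ _ h (f a).2))
      refine ⟨hWA'clop σ, hWB'clop σ, hσ.mono (hKAWA' σ), (hKBne σ hσ).mono (hKBWB' σ),
        hcomp2, ?_⟩
      show if false then _ else _
      rw [if_neg (by simp)]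
      refine ⟨?_, ?_, ?_⟩
      · obtain ⟨x, hx⟩ := hσ
        exact ⟨x, hKAWA' σ hx, hKA_A σ hx⟩
      · exact fun x hx y hy => small_AgF σ.1 x ((hWAO σ) hx.1).2 y ((hWAO σ) hy.1).2
      · exact fun x hx y hy => small_AgF σ.2 x ((hWBO σ) hx.1).2 y ((hWBO σ) hy.1).2

lemma stageEx (hA : IsClosed A) (hAnd : IsNowhereDense A) (hB : IsClosed B)
    (hBnd : IsNowhereDense B) (n : ℕ) (L : List Pc) (hL : Inv f n L) :
    ∃ L', Inv f (n+1) L' ∧ Refines L L' := by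
  classical
  set r : Pc → List Pc := fun p =>
    if h : IsClopen p.W ∧ IsClopen p.Z ∧ (p.W ∩ A).Nonempty ∧
        (∀ a : A, ((a : X) ∈ p.W ↔ (f a : X) ∈ p.Z)) then
      Classical.choose (refineEx f hA hAnd hB hBnd n p.W p.Z h.1 h.2.1 h.2.2.1 h.2.2.2)
    else [p] with hr
  have keyfree : ∀ p, PcOK f n p → p.free = true → r p = [p] := by
    intro p pok hfree
    have h6 := pok.2.2.2.2.2
    rw [if_pos hfree] at h6
    have hcond : ¬(IsClopen p.W ∧ IsClopen p.Z ∧ (p.W ∩ A).Nonempty ∧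
        (∀ a : A, ((a : X) ∈ p.W ↔ (f a : X) ∈ p.Z))) := by
      rintro ⟨-, -, hne, -⟩
      rw [h6.2.1] at hne
      exact hne.ne_empty rfl
    simp only [hr]
    exact dif_neg hcond
  have keyact : ∀ p, PcOK f n p → p.free = false →
      ((∀ x ∈ p.W, ∃ q ∈ r p, x ∈ q.W) ∧ (∀ y ∈ p.Z, ∃ q ∈ r p, y ∈ q.Z) ∧
       (∀ q ∈ r p, q.W ⊆ p.W ∧ q.Z ⊆ p.Z) ∧
       (∀ q ∈ r p, ∀ q' ∈ r p, q ≠ q' → q.W ∩ q'.W = ∅ ∧ q.Z ∩ q'.Z = ∅) ∧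
       (∀ q ∈ r p, PcOK f (n+1) q)) := by
    intro p pok hfree
    have h6 := pok.2.2.2.2.2
    rw [hfree, if_neg (by simp)] at h6
    have hcond : IsClopen p.W ∧ IsClopen p.Z ∧ (p.W ∩ A).Nonempty ∧
        (∀ a : A, ((a : X) ∈ p.W ↔ (f a : X) ∈ p.Z)) :=
      ⟨pok.1, pok.2.1, h6.1, pok.2.2.2.2.1⟩
    have hre : r p = Classical.choose (refineEx f hA hAnd hB hBnd n p.W p.Z
        hcond.1 hcond.2.1 hcond.2.2.1 hcond.2.2.2) := by
      simp only [hr]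
      exact dif_pos hcond
    rw [hre]
    exact Classical.choose_spec (refineEx f hA hAnd hB hBnd n p.W p.Z
        hcond.1 hcond.2.1 hcond.2.2.1 hcond.2.2.2)
  have freeok_lift : ∀ p, PcOK f n p → p.free = true → PcOK f (n+1) p := by
    intro p pok hfree
    have h6 := pok.2.2.2.2.2
    rw [if_pos hfree] at h6
    exact ⟨pok.1, pok.2.1, pok.2.2.1, pok.2.2.2.1, pok.2.2.2.2.1, by rw [if_pos hfree]; exact h6⟩
  have hsub : ∀ p, PcOK f n p → ∀ q ∈ r p, q.W ⊆ p.W ∧ q.Z ⊆ p.Z := by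
    intro p pok q hq
    rcases Bool.eq_false_or_eq_true p.free with hfree | hfree
    · rw [keyfree p pok hfree, List.mem_singleton] at hq
      subst hq
      exact ⟨subset_rfl, subset_rfl⟩
    · exact (keyact p pok hfree).2.2.1 q hq
  refine ⟨L.flatMap r, ⟨?_, ?_, ?_, ?_⟩, ?_, ?_⟩
  · -- cover W
    intro x
    obtain ⟨p, hp, hx⟩ := hL.1 x
    have pok := hL.2.2.2 p hp
    rcases Bool.eq_false_or_eq_true p.free with hfree | hfree
    · exact ⟨p, List.mem_flatMap.2 ⟨p, hp, by rw [keyfree p pok hfree]; exact List.mem_singleton.2 rfl⟩, hx⟩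
    · obtain ⟨q, hq, hxq⟩ := (keyact p pok hfree).1 x hx
      exact ⟨q, List.mem_flatMap.2 ⟨p, hp, hq⟩, hxq⟩
  · -- cover Z
    intro y
    obtain ⟨p, hp, hy⟩ := hL.2.1 y
    have pok := hL.2.2.2 p hp
    rcases Bool.eq_false_or_eq_true p.free with hfree | hfree
    · exact ⟨p, List.mem_flatMap.2 ⟨p, hp, by rw [keyfree p pok hfree]; exact List.mem_singleton.2 rfl⟩, hy⟩
    · obtain ⟨q, hq, hyq⟩ := (keyact p pok hfree).2.1 y hy
      exact ⟨q, List.mem_flatMap.2 ⟨p, hp, hq⟩, hyq⟩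
  · -- disjointness
    intro q hq q' hq' hne
    obtain ⟨p, hp, hqr⟩ := List.mem_flatMap.1 hq
    obtain ⟨p', hp', hqr'⟩ := List.mem_flatMap.1 hq'
    by_cases hpp : p = p'
    · subst hpp
      have pok := hL.2.2.2 p hp
      rcases Bool.eq_false_or_eq_true p.free with hfree | hfree
      · rw [keyfree p pok hfree, List.mem_singleton] at hqr hqr'
        exact absurd (hqr.trans hqr'.symm) hne
      · exact (keyact p pok hfree).2.2.2.1 q hqr q' hqr' hne
    · have hd := hL.2.2.1 p hp p' hp' hpp
      have hs := hsub p (hL.2.2.2 p hp) q hqr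
      have hs' := hsub p' (hL.2.2.2 p' hp') q' hqr'
      constructor <;> rw [eq_empty_iff_forall_notMem]
      · intro x hx
        have : x ∈ p.W ∩ p'.W := ⟨hs.1 hx.1, hs'.1 hx.2⟩
        rw [hd.1] at this
        exact notMem_empty x this
      · intro y hy
        have : y ∈ p.Z ∩ p'.Z := ⟨hs.2 hy.1, hs'.2 hy.2⟩
        rw [hd.2] at this
        exact notMem_empty y this
  · -- PcOK (n+1)
    intro q hq
    obtain ⟨p, hp, hqr⟩ := List.mem_flatMap.1 hq
    have pok := hL.2.2.2 p hp
    rcases Bool.eq_false_or_eq_true p.free with hfree | hfree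
    · rw [keyfree p pok hfree, List.mem_singleton] at hqr
      subst hqr
      exact freeok_lift q pok hfree
    · exact (keyact p pok hfree).2.2.2.2 q hqr
  · -- refinement: parents
    intro q hq
    obtain ⟨p, hp, hqr⟩ := List.mem_flatMap.1 hq
    exact ⟨p, hp, hsub p (hL.2.2.2 p hp) q hqr⟩
  · -- free persistence
    intro p hp hfree
    refine List.mem_flatMap.2 ⟨p, hp, ?_⟩
    rw [keyfree p (hL.2.2.2 p hp) hfree]
    exact List.mem_singleton.2 rfl

end Main

end KR

open KR in
/-- Any homeomorphism between closed nowhere dense subsets of the Cantor cube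
extends to a homeomorphism of the whole cube. -/
theorem stmt1 (A B : Set (ℕ → Bool))
    (hA : IsClosed A) (hAnd : IsNowhereDense A)
    (hB : IsClosed B) (hBnd : IsNowhereDense B)
    (f : A ≃ₜ B) :
    ∃ F : (ℕ → Bool) ≃ₜ (ℕ → Bool), ∀ a : A, F (a : ℕ → Bool) = (f a : ℕ → Bool) := by
  classical
  rcases A.eq_empty_or_nonempty with hAe | hAne
  · refine ⟨Homeomorph.refl _, fun a => ?_⟩
    exact absurd a.2 (by simp [hAe])
  · -- base stage
    set L0 : List Pc := [⟨univ, univ, id, id, false⟩] with hL0def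
    have hL0 : Inv f 0 L0 := by
      refine ⟨fun x => ⟨_, List.mem_singleton.2 rfl, mem_univ x⟩,
              fun y => ⟨_, List.mem_singleton.2 rfl, mem_univ y⟩, ?_, ?_⟩
      · intro p hp q hq hne
        rw [List.mem_singleton] at hp hq
        exact absurd (hp.trans hq.symm) hne
      · intro p hp
        rw [List.mem_singleton] at hp
        subst hp
        refine ⟨isClopen_univ, isClopen_univ, univ_nonempty, univ_nonempty,
          fun a => by simp, ?_⟩
        show if false then _ else _
        rw [if_neg (by simp)]
        refine ⟨by rwa [univ_inter], ?_, ?_⟩ <;> exact fun x _ y _ i hi => absurd hi (by omega)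
    -- the chain of stages
    have step : ∀ n (L : {L : List Pc // Inv f n L}), ∃ L', Inv f (n+1) L' ∧ Refines L.1 L' :=
      fun n L => stageEx f hA hAnd hB hBnd n L.1 L.2
    let T : ∀ n, {L : List Pc // Inv f n L} := fun n => Nat.rec ⟨L0, hL0⟩
      (fun n p => ⟨Classical.choose (step n p), (Classical.choose_spec (step n p)).1⟩) n
    set S : ℕ → List Pc := fun n => (T n).1 with hSdef
    have hSinv : ∀ n, Inv f n (S n) := fun n => (T n).2
    have hSref : ∀ n, Refines (S n) (S (n+1)) := fun n => (Classical.choose_spec (step n (T n))).2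
    -- persistence and ancestors
    have persist : ∀ n m, n ≤ m → ∀ p ∈ S n, p.free = true → p ∈ S m := by
      intro n m h
      induction m, h using Nat.le_induction with
      | base => exact fun p hp _ => hp
      | succ m hm ih => exact fun p hp hf => (hSref m).2 p (ih p hp hf) hf
    have ancestor : ∀ n m, n ≤ m → ∀ q ∈ S m, ∃ p ∈ S n, q.W ⊆ p.W ∧ q.Z ⊆ p.Z := by
      intro n m h
      induction m, h using Nat.le_induction with
      | base => exact fun q hq => ⟨q, hq, subset_rfl, subset_rfl⟩
      | succ m hm ih =>
        intro q hq
        obtain ⟨p1, hp1, hw1, hz1⟩ := (hSref m).1 q hq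
        obtain ⟨p, hp, hw, hz⟩ := ih p1 hp1
        exact ⟨p, hp, hw1.trans hw, hz1.trans hz⟩
    set Fr : Pc → Prop := fun p => ∃ n, p ∈ S n ∧ p.free = true with hFrdef
    have hfrprops : ∀ p, Fr p → IsClopen p.W ∧ IsClopen p.Z ∧
        HomF p.W p.Z p.g p.g' ∧ p.W ∩ A = ∅ ∧ p.Z ∩ B = ∅ := by
      rintro p ⟨n, hp, hfree⟩
      have pok := (hSinv n).2.2.2 p hp
      have h6 := pok.2.2.2.2.2
      rw [if_pos hfree] at h6
      exact ⟨pok.1, pok.2.1, h6.1, h6.2.1, h6.2.2⟩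
    have uniq : ∀ p q, Fr p → Fr q → p ≠ q → p.W ∩ q.W = ∅ ∧ p.Z ∩ q.Z = ∅ := by
      rintro p q ⟨n, hp, hfp⟩ ⟨m, hq, hfq⟩ hne
      have hp' := persist n (max n m) (le_max_left n m) p hp hfp
      have hq' := persist m (max n m) (le_max_right n m) q hq hfq
      exact (hSinv (max n m)).2.2.1 p hp' q hq' hne
    -- coverage of the complements by free pieces
    have coverW : ∀ x, x ∉ A → ∃ p, Fr p ∧ x ∈ p.W := by
      intro x hx
      by_contra hcon
      push_neg at hcon
      have hcl : ∀ n, ∃ a ∈ A, a ∈ Ag n x := by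
        intro n
        obtain ⟨p, hp, hxp⟩ := (hSinv n).1 x
        have pok := (hSinv n).2.2.2 p hp
        rcases Bool.eq_false_or_eq_true p.free with hfree | hfree
        · exact absurd hxp (hcon p ⟨n, hp, hfree⟩)
        · have h6 := pok.2.2.2.2.2
          rw [hfree, if_neg (by simp)] at h6
          obtain ⟨⟨a, haW, haA⟩, hsm, -⟩ := h6
          exact ⟨a, haA, fun i hi => hsm a haW x hxp i hi⟩
      exact hx (by rw [← hA.closure_eq]; exact mem_closure_of_Ag hcl)
    have coverZ : ∀ y, y ∉ B → ∃ p, Fr p ∧ y ∈ p.Z := by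
      intro y hy
      by_contra hcon
      push_neg at hcon
      have hcl : ∀ n, ∃ b ∈ B, b ∈ Ag n y := by
        intro n
        obtain ⟨p, hp, hyp⟩ := (hSinv n).2.1 y
        have pok := (hSinv n).2.2.2 p hp
        rcases Bool.eq_false_or_eq_true p.free with hfree | hfree
        · exact absurd hyp (hcon p ⟨n, hp, hfree⟩)
        · have h6 := pok.2.2.2.2.2
          rw [hfree, if_neg (by simp)] at h6
          obtain ⟨⟨a, haW, haA⟩, -, hsm⟩ := h6
          have hbz : ((f ⟨a, haA⟩ : B) : X) ∈ p.Z := (pok.2.2.2.2.1 ⟨a, haA⟩).1 haW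
          exact ⟨(f ⟨a, haA⟩ : X), (f ⟨a, haA⟩).2, fun i hi => hsm _ hbz y hyp i hi⟩
      exact hy (by rw [← hB.closure_eq]; exact mem_closure_of_Ag hcl)
    -- the extension and its inverse
    set Φ : X → X := fun x =>
      if h : x ∈ A then (f ⟨x, h⟩ : X) else (Classical.choose (coverW x h)).g x with hΦdef
    set Ψ : X → X := fun y =>
      if h : y ∈ B then ((f.symm ⟨y, h⟩ : A) : X) else (Classical.choose (coverZ y h)).g' y with hΨdef
    have hΦnot : ∀ x (h : x ∉ A),
        Φ x ∈ (Classical.choose (coverW x h)).Z ∧ Φ x ∉ B := by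
      intro x h
      have hsp := Classical.choose_spec (coverW x h)
      have props := hfrprops _ hsp.1
      have hmem : Φ x ∈ (Classical.choose (coverW x h)).Z := by
        have e : Φ x = (Classical.choose (coverW x h)).g x := dif_neg h
        rw [e]
        exact props.2.2.1.1 hsp.2
      refine ⟨hmem, fun hb => ?_⟩
      have : Φ x ∈ (Classical.choose (coverW x h)).Z ∩ B := ⟨hmem, hb⟩
      rw [props.2.2.2.2] at this
      exact notMem_empty _ this
    have hΨnot : ∀ y (h : y ∉ B),
        Ψ y ∈ (Classical.choose (coverZ y h)).W ∧ Ψ y ∉ A := by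
      intro y h
      have hsp := Classical.choose_spec (coverZ y h)
      have props := hfrprops _ hsp.1
      have hmem : Ψ y ∈ (Classical.choose (coverZ y h)).W := by
        have e : Ψ y = (Classical.choose (coverZ y h)).g' y := dif_neg h
        rw [e]
        exact props.2.2.1.2.1 hsp.2
      refine ⟨hmem, fun ha => ?_⟩
      have : Ψ y ∈ (Classical.choose (coverZ y h)).W ∩ A := ⟨hmem, ha⟩
      rw [props.2.2.2.1] at this
      exact notMem_empty _ this
    have linv : ∀ x, Ψ (Φ x) = x := by
      intro x
      by_cases hx : x ∈ A
      · have e : Φ x = (f ⟨x, hx⟩ : X) := dif_pos hx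
        rw [e]
        have hbm : (f ⟨x, hx⟩ : X) ∈ B := (f ⟨x, hx⟩).2
        have e2 : Ψ (f ⟨x, hx⟩ : X) = ((f.symm ⟨(f ⟨x, hx⟩ : X), hbm⟩ : A) : X) := dif_pos hbm
        rw [e2, Subtype.coe_eta, f.symm_apply_apply]
      · have e : Φ x = (Classical.choose (coverW x hx)).g x := dif_neg hx
        have hnb := (hΦnot x hx).2
        have e2 : Ψ (Φ x) = (Classical.choose (coverZ (Φ x) hnb)).g' (Φ x) := dif_neg hnb
        have hq := Classical.choose_spec (coverZ (Φ x) hnb)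
        have hp := Classical.choose_spec (coverW x hx)
        have heqpq : Classical.choose (coverZ (Φ x) hnb) = Classical.choose (coverW x hx) := by
          by_contra hne
          have hd := uniq _ _ hq.1 hp.1 hne
          have : Φ x ∈ (Classical.choose (coverZ (Φ x) hnb)).Z ∩
              (Classical.choose (coverW x hx)).Z := ⟨hq.2, (hΦnot x hx).1⟩
          rw [hd.2] at this
          exact notMem_empty _ this
        rw [e2, heqpq, e]
        exact (hfrprops _ hp.1).2.2.1.2.2.1 x hp.2
    have rinv : ∀ y, Φ (Ψ y) = y := by
      intro y
      by_cases hy : y ∈ B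
      · have e : Ψ y = ((f.symm ⟨y, hy⟩ : A) : X) := dif_pos hy
        rw [e]
        have ham : ((f.symm ⟨y, hy⟩ : A) : X) ∈ A := (f.symm ⟨y, hy⟩).2
        have e2 : Φ ((f.symm ⟨y, hy⟩ : A) : X) =
            (f ⟨((f.symm ⟨y, hy⟩ : A) : X), ham⟩ : X) := dif_pos ham
        rw [e2, Subtype.coe_eta, f.apply_symm_apply]
      · have e : Ψ y = (Classical.choose (coverZ y hy)).g' y := dif_neg hy
        have hna := (hΨnot y hy).2
        have e2 : Φ (Ψ y) = (Classical.choose (coverW (Ψ y) hna)).g (Ψ y) := dif_neg hna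
        have hq := Classical.choose_spec (coverW (Ψ y) hna)
        have hp := Classical.choose_spec (coverZ y hy)
        have heqpq : Classical.choose (coverW (Ψ y) hna) = Classical.choose (coverZ y hy) := by
          by_contra hne
          have hd := uniq _ _ hq.1 hp.1 hne
          have : Ψ y ∈ (Classical.choose (coverW (Ψ y) hna)).W ∩
              (Classical.choose (coverZ y hy)).W := ⟨hq.2, (hΨnot y hy).1⟩
          rw [hd.1] at this
          exact notMem_empty _ this
        rw [e2, heqpq, e]
        exact (hfrprops _ hp.1).2.2.1.2.2.2.1 y hp.2
    -- continuity of Φ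
    have hcont : Continuous Φ := by
      rw [continuous_iff_continuousAt]
      intro x₀
      by_cases hx₀ : x₀ ∈ A
      · apply continuousAt_pi'
        intro i
        obtain ⟨P, hP, hx₀P⟩ := (hSinv (i+1)).1 x₀
        have pok := (hSinv (i+1)).2.2.2 P hP
        have hPnf : P.free = false := by
          rcases Bool.eq_false_or_eq_true P.free with hfree | hfree
          · have props := hfrprops P ⟨i+1, hP, hfree⟩
            have : x₀ ∈ P.W ∩ A := ⟨hx₀P, hx₀⟩
            rw [props.2.2.2.1] at this
            exact absurd this (notMem_empty _)
          · exact hfree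
        have h6 := pok.2.2.2.2.2
        rw [hPnf, if_neg (by simp)] at h6
        have smallZ := h6.2.2
        have hΦin : ∀ y ∈ P.W, Φ y ∈ P.Z := by
          intro y hy
          by_cases hyA : y ∈ A
          · have e : Φ y = (f ⟨y, hyA⟩ : X) := dif_pos hyA
            rw [e]
            exact (pok.2.2.2.2.1 ⟨y, hyA⟩).1 hy
          · have e : Φ y = (Classical.choose (coverW y hyA)).g y := dif_neg hyA
            rw [e]
            obtain ⟨⟨m, hqm, hqf⟩, hyq⟩ := Classical.choose_spec (coverW y hyA)
            have hqm' : Classical.choose (coverW y hyA) ∈ S (max m (i+1)) :=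
              persist m _ (le_max_left _ _) _ hqm hqf
            obtain ⟨P₁, hP₁, hsubW, hsubZ⟩ := ancestor (i+1) _ (le_max_right _ _) _ hqm'
            have hPP : P₁ = P := by
              by_contra hne
              have hd := (hSinv (i+1)).2.2.1 P₁ hP₁ P hP hne
              have : y ∈ P₁.W ∩ P.W := ⟨hsubW hyq, hy⟩
              rw [hd.1] at this
              exact notMem_empty _ this
            rw [hPP] at hsubZ
            exact hsubZ ((hfrprops _ ⟨m, hqm, hqf⟩).2.2.1.1 hyq)
        have hev : ∀ᶠ y in nhds x₀, Φ y i = Φ x₀ i := by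
          filter_upwards [pok.1.isOpen.mem_nhds hx₀P] with y hy
          exact smallZ _ (hΦin y hy) _ (hΦin x₀ hx₀P) i (Nat.lt_succ_self i)
        exact Filter.EventuallyEq.continuousAt hev
      · have hp := Classical.choose_spec (coverW x₀ hx₀)
        have props := hfrprops _ hp.1
        have heq : ∀ y ∈ (Classical.choose (coverW x₀ hx₀)).W, Φ y =
            (Classical.choose (coverW x₀ hx₀)).g y := by
          intro y hy
          have hyA : y ∉ A := by
            intro hyA
            have : y ∈ (Classical.choose (coverW x₀ hx₀)).W ∩ A := ⟨hy, hyA⟩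
            rw [props.2.2.2.1] at this
            exact notMem_empty _ this
          have e : Φ y = (Classical.choose (coverW y hyA)).g y := dif_neg hyA
          have hqs := Classical.choose_spec (coverW y hyA)
          have hqe : Classical.choose (coverW y hyA) = Classical.choose (coverW x₀ hx₀) := by
            by_contra hne
            have hd := uniq _ _ hqs.1 hp.1 hne
            have : y ∈ (Classical.choose (coverW y hyA)).W ∩
                (Classical.choose (coverW x₀ hx₀)).W := ⟨hqs.2, hy⟩
            rw [hd.1] at this
            exact notMem_empty _ this
          rw [e, hqe]
        have hg : ContinuousAt (Classical.choose (coverW x₀ hx₀)).g x₀ :=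
          props.2.2.1.2.2.2.2.1.continuousAt (props.1.isOpen.mem_nhds hp.2)
        exact hg.congr (Filter.eventuallyEq_of_mem (props.1.isOpen.mem_nhds hp.2)
          (fun y hy => (heq y hy).symm))
    -- assemble the homeomorphism
    set E : (ℕ → Bool) ≃ (ℕ → Bool) := ⟨Φ, Ψ, linv, rinv⟩ with hEdef
    have hcontE : Continuous E := hcont
    refine ⟨hcontE.homeoOfEquivCompactToT2, fun a => ?_⟩
    show Φ (a : X) = (f a : X)
    have e : Φ (a : X) = (f ⟨(a : X), a.2⟩ : X) := dif_pos a.2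
    rw [e, Subtype.coe_eta]
end

section
/- Let (X,μ) be a good Cantor measure space. Any measure-preserving homeomorphism f : A → B between closed nowhere dense subsets A, B ⊆ X extends to a measure-preserving homeomorphism of X onto itself. -/
open MeasureTheory Set Topology
open scoped ENNReal NNReal

set_option linter.unusedSectionVars false
namespace KRproof

variable {X : Type*} [MetricSpace X] [CompactSpace X] [TotallyDisconnectedSpace X]
  [MeasurableSpace X] [BorelSpace X]

/-- Union of a list of sets. -/
def US (l : List (Set X)) : Set X := ⋃ s ∈ l, s

@[simp] theorem US_nil : US ([] : List (Set X)) = ∅ := by simp [US]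

@[simp] theorem US_cons (a : Set X) (l : List (Set X)) : US (a :: l) = a ∪ US l := by
  simp [US]

@[simp] theorem US_append (l₁ l₂ : List (Set X)) : US (l₁ ++ l₂) = US l₁ ∪ US l₂ := by
  induction l₁ with
  | nil => simp
  | cons a l ih => simp [ih, union_assoc]

theorem mem_US {x : X} {l : List (Set X)} : x ∈ US l ↔ ∃ s ∈ l, x ∈ s := by
  simp [US]

theorem isClopen_US {l : List (Set X)} (h : ∀ s ∈ l, IsClopen s) : IsClopen (US l) := by
  induction l with
  | nil => simpa using isClopen_empty
  | cons a l ih =>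
      rw [US_cons]
      exact (h a (by simp)).union (ih fun s hs => h s (List.mem_cons_of_mem _ hs))

theorem measurableSet_US {l : List (Set X)} (h : ∀ s ∈ l, MeasurableSet s) :
    MeasurableSet (US l) := by
  induction l with
  | nil => simp
  | cons a l ih =>
      rw [US_cons]
      exact (h a (by simp)).union (ih fun s hs => h s (List.mem_cons_of_mem _ hs))

theorem measure_US (μ : Measure X) {l : List (Set X)} (hcl : ∀ s ∈ l, MeasurableSet s)
    (hd : l.Pairwise Disjoint) : μ (US l) = (l.map (fun s => μ s)).sum := by
  induction l with
  | nil => simp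
  | cons a l ih =>
      rw [US_cons, List.map_cons, List.sum_cons]
      rw [List.pairwise_cons] at hd
      have hdisj : Disjoint a (US l) := by
        rw [disjoint_iff_inter_eq_empty]
        ext x
        simp only [mem_inter_iff, mem_US, mem_empty_iff_false, iff_false, not_and]
        rintro hxa ⟨s, hs, hxs⟩
        exact (hd.1 s hs).ne_of_mem hxa hxs rfl
      rw [measure_union hdisj (measurableSet_US (fun s hs => hcl s (List.mem_cons_of_mem _ hs)))]
      rw [ih (fun s hs => hcl s (List.mem_cons_of_mem _ hs)) hd.2]


/-- A clopen set between a compact set and an open superset. -/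
theorem clopen_between {K U : Set X} (hK : IsCompact K) (hU : IsOpen U) (hKU : K ⊆ U) :
    ∃ Z : Set X, IsClopen Z ∧ K ⊆ Z ∧ Z ⊆ U := by
  have h : ∀ x ∈ K, ∃ V : Set X, IsClopen V ∧ x ∈ V ∧ V ⊆ U := fun x hx =>
    compact_exists_isClopen_in_isOpen hU (hKU hx)
  choose! V hV hxV hVU using h
  obtain ⟨t, htK, htfin, htcover⟩ := hK.elim_finite_subcover_image
    (fun x hx => (hV x hx).2) (fun x hx => mem_biUnion hx (hxV x hx))
  refine ⟨⋃ x ∈ t, V x, htfin.isClopen_biUnion (fun x hx => hV x (htK hx)), htcover, ?_⟩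
  exact iUnion₂_subset fun x hx => hVU x (htK hx)


variable (μ : Measure X) [IsFiniteMeasure μ]

theorem msX {s : Set X} (h : IsClopen s) : MeasurableSet s := h.isClosed.measurableSet

/-- Outer approximation of a compact set by a clopen set inside a given open set. -/
theorem clopen_outer {K U : Set X} (hK : IsCompact K) (hU : IsOpen U) (hKU : K ⊆ U)
    {η : ℝ≥0∞} (hη : 0 < η) :
    ∃ Z : Set X, IsClopen Z ∧ K ⊆ Z ∧ Z ⊆ U ∧ μ Z < μ K + η := by
  have h1 : μ K < μ K + η := ENNReal.lt_add_right (measure_ne_top μ K) hη.ne'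
  obtain ⟨V, hKV, hVopen, hVμ⟩ := Set.exists_isOpen_lt_of_lt (μ := μ) K _ h1
  obtain ⟨Z, hZ, hKZ, hZV⟩ := clopen_between hK (hU.inter hVopen) (subset_inter hKU hKV)
  exact ⟨Z, hZ, hKZ, hZV.trans inter_subset_left,
    lt_of_le_of_lt (measure_mono (hZV.trans inter_subset_right)) hVμ⟩

section hsc

variable (hpos : ∀ U : Set X, IsOpen U → U.Nonempty → 0 < μ U)
variable (hsc : ∀ U V : Set X, IsClopen U → IsClopen V → μ U < μ V →
      ∃ W, W ⊆ V ∧ IsClopen W ∧ μ W = μ U)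

include hsc

/-- Non-strict version of the subset condition. -/
theorem hsc' {U V : Set X} (hU : IsClopen U) (hV : IsClopen V) (h : μ U ≤ μ V) :
    ∃ W, W ⊆ V ∧ IsClopen W ∧ μ W = μ U := by
  rcases lt_or_eq_of_le h with h | h
  · exact hsc U V hU hV h
  · exact ⟨V, subset_rfl, hV, h.symm⟩

/-- The set of clopen values is closed under truncated subtraction. -/
theorem clopen_sub {P Q : Set X} (hP : IsClopen P) (hQ : IsClopen Q) (h : μ Q ≤ μ P) :
    ∃ R : Set X, IsClopen R ∧ μ R = μ P - μ Q := by
  obtain ⟨W, hWP, hW, hWμ⟩ := hsc' μ hsc hQ hP h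
  refine ⟨P \ W, hP.diff hW, ?_⟩
  rw [measure_diff hWP (msX hW).nullMeasurableSet (measure_ne_top μ W), hWμ]

/-- Realize an exact clopen value inside a clopen set, containing a prescribed compact set. -/
theorem clopen_exact_between {K V Q : Set X} (hK : IsCompact K) (hV : IsClopen V)
    (hQ : IsClopen Q) (hKV : K ⊆ V) (h1 : μ K < μ Q) (h2 : μ Q ≤ μ V) :
    ∃ W : Set X, IsClopen W ∧ K ⊆ W ∧ W ⊆ V ∧ μ W = μ Q := by
  obtain ⟨Z, hZ, hKZ, hZV, hZμ⟩ := clopen_outer μ hK hV.isOpen hKV (tsub_pos_of_lt h1)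
  have hZQ : μ Z ≤ μ Q := by
    calc μ Z ≤ μ K + (μ Q - μ K) := hZμ.le
    _ = μ Q := add_tsub_cancel_of_le h1.le
  obtain ⟨R, hR, hRμ⟩ := clopen_sub μ hsc hQ hZ hZQ
  have hRle : μ R ≤ μ (V \ Z) := by
    rw [hRμ, measure_diff hZV (msX hZ).nullMeasurableSet (measure_ne_top μ Z)]
    exact tsub_le_tsub h2 le_rfl
  obtain ⟨W1, hW1sub, hW1, hW1μ⟩ := hsc' μ hsc hR (hV.diff hZ) hRle
  refine ⟨Z ∪ W1, hZ.union hW1, hKZ.trans subset_union_left,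
    union_subset hZV (hW1sub.trans diff_subset), ?_⟩
  have hd : Disjoint Z W1 := (disjoint_sdiff_self_right.mono_right hW1sub).symm.symm
  rw [measure_union (disjoint_sdiff_right.mono_right hW1sub) (msX hW1), hW1μ, hRμ,
    add_tsub_cancel_of_le hZQ]

end hsc


/-- Disjointify a list of sets. -/
def djy : List (Set X) → List (Set X)
  | [] => []
  | a :: l => a :: (djy l).map (fun s => s \ a)

theorem djy_sub {l : List (Set X)} : ∀ s ∈ djy l, ∃ t ∈ l, s ⊆ t := by
  induction l with
  | nil => simp [djy]
  | cons a l ih =>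
      intro s hs
      rw [djy] at hs
      rcases List.mem_cons.mp hs with h | h
      · exact ⟨a, by simp, h ▸ subset_rfl⟩
      · obtain ⟨s', hs', rfl⟩ := List.mem_map.mp h
        obtain ⟨t, ht, hst⟩ := ih s' hs'
        exact ⟨t, List.mem_cons_of_mem _ ht, diff_subset.trans hst⟩

theorem djy_clopen {l : List (Set X)} (h : ∀ t ∈ l, IsClopen t) : ∀ s ∈ djy l, IsClopen s := by
  induction l with
  | nil => simp [djy]
  | cons a l ih =>
      intro s hs
      rw [djy] at hs
      rcases List.mem_cons.mp hs with h' | h'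
      · exact h' ▸ h a (by simp)
      · obtain ⟨s', hs', rfl⟩ := List.mem_map.mp h'
        exact (ih (fun t ht => h t (List.mem_cons_of_mem _ ht)) s' hs').diff (h a (by simp))

theorem US_djy {l : List (Set X)} : US (djy l) = US l := by
  induction l with
  | nil => simp [djy]
  | cons a l ih =>
      rw [djy, US_cons, US_cons, ← ih]
      have : US ((djy l).map (fun s => s \ a)) = US (djy l) \ a := by
        ext x
        simp only [mem_US, List.mem_map, mem_diff]
        constructor
        · rintro ⟨s, ⟨s', hs', rfl⟩, hx⟩
          exact ⟨⟨s', hs', hx.1⟩, hx.2⟩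
        · rintro ⟨⟨s', hs', hx⟩, hxa⟩
          exact ⟨s' \ a, ⟨s', hs', rfl⟩, hx, hxa⟩
      rw [this]
      ext x
      by_cases hx : x ∈ a <;> simp [hx]

theorem djy_pairwise {l : List (Set X)} : (djy l).Pairwise Disjoint := by
  induction l with
  | nil => simp [djy]
  | cons a l ih =>
      rw [djy, List.pairwise_cons]
      constructor
      · intro s hs
        obtain ⟨s', _, rfl⟩ := List.mem_map.mp hs
        exact disjoint_sdiff_self_right
      · exact List.Pairwise.map _ (fun {u v} h => h.mono diff_subset diff_subset) ih

/-- Partition a clopen set into small clopen pieces. -/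
theorem clopen_partition_small {U : Set X} (hU : IsClopen U) {ε : ℝ≥0∞} (hε : 0 < ε) :
    ∃ l : List (Set X), (∀ s ∈ l, IsClopen s ∧ s ⊆ U ∧ EMetric.diam s ≤ ε) ∧
      l.Pairwise Disjoint ∧ US l = U := by
  have h : ∀ x ∈ U, ∃ V : Set X, IsClopen V ∧ x ∈ V ∧ V ⊆ U ∩ EMetric.ball x (ε / 2) := by
    intro x hx
    have hball : IsOpen (U ∩ EMetric.ball x (ε / 2)) := hU.isOpen.inter EMetric.isOpen_ball
    obtain ⟨V, hV, hxV, hVU⟩ := compact_exists_isClopen_in_isOpen hball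
      ⟨hx, EMetric.mem_ball_self (ENNReal.div_pos hε.ne' (by norm_num))⟩
    exact ⟨V, hV, hxV, hVU⟩
  choose! V hV hxV hVU using h
  obtain ⟨t, htK, htfin, htcover⟩ := hU.isClosed.isCompact.elim_finite_subcover_image
    (fun x hx => (hV x hx).2) (fun x hx => mem_biUnion hx (hxV x hx))
  have hdiam : ∀ x ∈ t, EMetric.diam (V x) ≤ ε := by
    intro x hx
    calc EMetric.diam (V x) ≤ EMetric.diam (EMetric.ball x (ε / 2)) :=
          EMetric.diam_mono ((hVU x (htK hx)).trans inter_subset_right)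
    _ ≤ 2 * (ε / 2) := EMetric.diam_ball
    _ = ε := ENNReal.mul_div_cancel' (by norm_num) (by norm_num)
  classical
  refine ⟨djy (htfin.toFinset.toList.map V), ?_, djy_pairwise, ?_⟩
  · intro s hs
    obtain ⟨w, hw, hsw⟩ := djy_sub s hs
    obtain ⟨x, hx, rfl⟩ := List.mem_map.mp hw
    rw [Finset.mem_toList, htfin.mem_toFinset] at hx
    refine ⟨djy_clopen ?_ s hs, hsw.trans ((hVU x (htK hx)).trans inter_subset_left),
      le_trans (EMetric.diam_mono hsw) (hdiam x hx)⟩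
    intro w' hw'
    obtain ⟨x', hx', rfl⟩ := List.mem_map.mp hw'
    rw [Finset.mem_toList, htfin.mem_toFinset] at hx'
    exact hV x' (htK hx')
  · rw [US_djy]
    apply Subset.antisymm
    · intro y hy
      obtain ⟨w, hw, hyw⟩ := mem_US.mp hy
      obtain ⟨x, hx, rfl⟩ := List.mem_map.mp hw
      rw [Finset.mem_toList, htfin.mem_toFinset] at hx
      exact (hVU x (htK hx)) hyw |>.1
    · intro y hy
      obtain ⟨x, hx, hyx⟩ : ∃ x ∈ t, y ∈ V x := by
        simpa only [mem_iUnion, exists_prop] using htcover hy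
      exact mem_US.mpr ⟨V x,
        List.mem_map.mpr ⟨x, Finset.mem_toList.mpr (htfin.mem_toFinset.mpr hx), rfl⟩, hyx⟩


section matching

variable (hpos : ∀ U : Set X, IsOpen U → U.Nonempty → 0 < μ U)
variable (hsc : ∀ U V : Set X, IsClopen U → IsClopen V → μ U < μ V →
      ∃ W, W ⊆ V ∧ IsClopen W ∧ μ W = μ U)

include hpos hsc

theorem US_empty_of_zero {vs : List (Set X)} (hcl : ∀ v ∈ vs, IsClopen v)
    (h : (vs.map (fun s => μ s)).sum = 0) : US vs = ∅ := by
  ext x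
  simp only [mem_US, mem_empty_iff_false, iff_false, not_exists, not_and]
  intro v hv hxv
  have h0 : μ v = 0 := List.sum_eq_zero_iff.mp h _ (List.mem_map.mpr ⟨v, hv, rfl⟩)
  exact absurd h0 (ne_of_gt (hpos v (hcl v hv).isOpen ⟨x, hxv⟩))

/-- The matching lemma: two pairwise disjoint families of clopen sets with equal total
measure admit a common measure-matched clopen refinement. -/
theorem matching : ∀ (n : ℕ) (us vs : List (Set X)),
    us.length + vs.length ≤ n →
    (∀ u ∈ us, IsClopen u) → (∀ v ∈ vs, IsClopen v) →
    us.Pairwise Disjoint → vs.Pairwise Disjoint →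
    (us.map (fun s => μ s)).sum = (vs.map (fun s => μ s)).sum →
    ∃ l : List (Set X × Set X),
      (∀ r ∈ l, IsClopen r.1 ∧ IsClopen r.2 ∧ μ r.1 = μ r.2 ∧
        (∃ u ∈ us, r.1 ⊆ u) ∧ (∃ v ∈ vs, r.2 ⊆ v)) ∧
      (l.map Prod.fst).Pairwise Disjoint ∧ (l.map Prod.snd).Pairwise Disjoint ∧
      US (l.map Prod.fst) = US us ∧ US (l.map Prod.snd) = US vs := by
  intro n
  induction n with
  | zero =>
      intro us vs hlen hus hvs _ _ hsum
      have h1 : us = [] := List.eq_nil_of_length_eq_zero (by omega)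
      have h2 : vs = [] := List.eq_nil_of_length_eq_zero (by omega)
      subst h1; subst h2
      exact ⟨[], by simp, by simp, by simp, by simp, by simp⟩
  | succ n ih =>
      intro us vs hlen hus hvs hud hvd hsum
      match us, vs with
      | [], vs =>
          refine ⟨[], by simp, by simp, by simp, by simp, ?_⟩
          simp only [List.map_nil, US_nil]
          exact (US_empty_of_zero μ hpos hsc hvs (by simpa using hsum.symm)).symm
      | u :: us, [] =>
          refine ⟨[], by simp, by simp, by simp, ?_, by simp⟩
          simp only [List.map_nil, US_nil]
          exact (US_empty_of_zero μ hpos hsc hus (by simpa using hsum)).symm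
      | u :: us, v :: vs => ?_
      have hu : IsClopen u := hus u (by simp)
      have hv : IsClopen v := hvs v (by simp)
      have hus' : ∀ x ∈ us, IsClopen x := fun x hx => hus x (List.mem_cons_of_mem _ hx)
      have hvs' : ∀ x ∈ vs, IsClopen x := fun x hx => hvs x (List.mem_cons_of_mem _ hx)
      rw [List.pairwise_cons] at hud hvd
      rw [List.map_cons, List.sum_cons, List.map_cons, List.sum_cons] at hsum
      rcases lt_trichotomy (μ u) (μ v) with hlt | heq | hgt
      · obtain ⟨w, hwv, hw, hwμ⟩ := hsc u v hu hv hlt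
        have hvw : μ (v \ w) = μ v - μ u := by
          rw [measure_diff hwv (msX hw).nullMeasurableSet (measure_ne_top μ w), hwμ]
        have hsum' : (us.map (fun s => μ s)).sum =
            (((v \ w) :: vs).map (fun s => μ s)).sum := by
          rw [List.map_cons, List.sum_cons, hvw]
          have hv' : μ v = μ u + (μ v - μ u) := (add_tsub_cancel_of_le hlt.le).symm
          rw [hv', add_assoc] at hsum
          exact (ENNReal.add_right_inj (measure_ne_top μ u)).mp hsum
        obtain ⟨l, hl, hld1, hld2, hlU1, hlU2⟩ := ih us ((v \ w) :: vs)
          (by simp only [List.length_cons] at hlen ⊢; omega) hus'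
          (by
            intro x hx
            rcases List.mem_cons.mp hx with rfl | hx
            · exact hv.diff hw
            · exact hvs' x hx)
          hud.2
          (by
            rw [List.pairwise_cons]
            exact ⟨fun v' hv' => (hvd.1 v' hv').mono_left diff_subset, hvd.2⟩)
          hsum'
        refine ⟨(u, w) :: l, ?_, ?_, ?_, ?_, ?_⟩
        · intro r hr
          rcases List.mem_cons.mp hr with rfl | hr
          · exact ⟨hu, hw, hwμ.symm, ⟨u, by simp, subset_rfl⟩, ⟨v, by simp, hwv⟩⟩
          · obtain ⟨h1, h2, h3, ⟨u', hu', hru⟩, ⟨v', hv', hrv⟩⟩ := hl r hr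
            refine ⟨h1, h2, h3, ⟨u', List.mem_cons_of_mem _ hu', hru⟩, ?_⟩
            rcases List.mem_cons.mp hv' with rfl | hv'
            · exact ⟨v, by simp, hrv.trans diff_subset⟩
            · exact ⟨v', List.mem_cons_of_mem _ hv', hrv⟩
        · rw [List.map_cons, List.pairwise_cons]
          refine ⟨?_, hld1⟩
          intro s hs
          obtain ⟨r, hr, rfl⟩ := List.mem_map.mp hs
          obtain ⟨_, _, _, ⟨u', hu', hru⟩, _⟩ := hl r hr
          exact (hud.1 u' hu').mono_right hru
        · rw [List.map_cons, List.pairwise_cons]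
          refine ⟨?_, hld2⟩
          intro s hs
          obtain ⟨r, hr, rfl⟩ := List.mem_map.mp hs
          obtain ⟨_, _, _, _, ⟨v', hv', hrv⟩⟩ := hl r hr
          rcases List.mem_cons.mp hv' with rfl | hv'
          · exact (disjoint_sdiff_self_right.mono_right hrv)
          · exact ((hvd.1 v' hv').mono_left hwv).mono_right hrv
        · rw [List.map_cons, US_cons, hlU1, US_cons]
        · rw [List.map_cons, US_cons, hlU2, US_cons, US_cons, ← union_assoc,
            union_diff_cancel hwv]
      · obtain ⟨l, hl, hld1, hld2, hlU1, hlU2⟩ := ih us vs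
          (by simp only [List.length_cons] at hlen ⊢; omega) hus' hvs' hud.2 hvd.2
          ((ENNReal.add_right_inj (measure_ne_top μ u)).mp (by rw [hsum, heq]))
        refine ⟨(u, v) :: l, ?_, ?_, ?_, ?_, ?_⟩
        · intro r hr
          rcases List.mem_cons.mp hr with rfl | hr
          · exact ⟨hu, hv, heq, ⟨u, by simp, subset_rfl⟩, ⟨v, by simp, subset_rfl⟩⟩
          · obtain ⟨h1, h2, h3, ⟨u', hu', hru⟩, ⟨v', hv', hrv⟩⟩ := hl r hr
            exact ⟨h1, h2, h3, ⟨u', List.mem_cons_of_mem _ hu', hru⟩,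
              ⟨v', List.mem_cons_of_mem _ hv', hrv⟩⟩
        · rw [List.map_cons, List.pairwise_cons]
          refine ⟨?_, hld1⟩
          intro s hs
          obtain ⟨r, hr, rfl⟩ := List.mem_map.mp hs
          obtain ⟨_, _, _, ⟨u', hu', hru⟩, _⟩ := hl r hr
          exact (hud.1 u' hu').mono_right hru
        · rw [List.map_cons, List.pairwise_cons]
          refine ⟨?_, hld2⟩
          intro s hs
          obtain ⟨r, hr, rfl⟩ := List.mem_map.mp hs
          obtain ⟨_, _, _, _, ⟨v', hv', hrv⟩⟩ := hl r hr
          exact (hvd.1 v' hv').mono_right hrv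
        · rw [List.map_cons, US_cons, hlU1, US_cons]
        · rw [List.map_cons, US_cons, hlU2, US_cons]
      · obtain ⟨w, hwu, hw, hwμ⟩ := hsc v u hv hu hgt
        have huw : μ (u \ w) = μ u - μ v := by
          rw [measure_diff hwu (msX hw).nullMeasurableSet (measure_ne_top μ w), hwμ]
        have hsum' : (((u \ w) :: us).map (fun s => μ s)).sum =
            (vs.map (fun s => μ s)).sum := by
          rw [List.map_cons, List.sum_cons, huw]
          have hu' : μ u = μ v + (μ u - μ v) := (add_tsub_cancel_of_le hgt.le).symm
          rw [hu', add_assoc] at hsum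
          exact (ENNReal.add_right_inj (measure_ne_top μ v)).mp hsum
        obtain ⟨l, hl, hld1, hld2, hlU1, hlU2⟩ := ih ((u \ w) :: us) vs
          (by simp only [List.length_cons] at hlen ⊢; omega)
          (by
            intro x hx
            rcases List.mem_cons.mp hx with rfl | hx
            · exact hu.diff hw
            · exact hus' x hx)
          hvs'
          (by
            rw [List.pairwise_cons]
            exact ⟨fun u' hu' => (hud.1 u' hu').mono_left diff_subset, hud.2⟩)
          hvd.2 hsum'
        refine ⟨(w, v) :: l, ?_, ?_, ?_, ?_, ?_⟩
        · intro r hr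
          rcases List.mem_cons.mp hr with rfl | hr
          · exact ⟨hw, hv, hwμ, ⟨u, by simp, hwu⟩, ⟨v, by simp, subset_rfl⟩⟩
          · obtain ⟨h1, h2, h3, ⟨u', hu', hru⟩, ⟨v', hv', hrv⟩⟩ := hl r hr
            refine ⟨h1, h2, h3, ?_, ⟨v', List.mem_cons_of_mem _ hv', hrv⟩⟩
            rcases List.mem_cons.mp hu' with rfl | hu'
            · exact ⟨u, by simp, hru.trans diff_subset⟩
            · exact ⟨u', List.mem_cons_of_mem _ hu', hru⟩
        · rw [List.map_cons, List.pairwise_cons]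
          refine ⟨?_, hld1⟩
          intro s hs
          obtain ⟨r, hr, rfl⟩ := List.mem_map.mp hs
          obtain ⟨_, _, _, ⟨u', hu', hru⟩, _⟩ := hl r hr
          rcases List.mem_cons.mp hu' with rfl | hu'
          · exact (disjoint_sdiff_self_right.mono_right hru)
          · exact ((hud.1 u' hu').mono_left hwu).mono_right hru
        · rw [List.map_cons, List.pairwise_cons]
          refine ⟨?_, hld2⟩
          intro s hs
          obtain ⟨r, hr, rfl⟩ := List.mem_map.mp hs
          obtain ⟨_, _, _, _, ⟨v', hv', hrv⟩⟩ := hl r hr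
          exact (hvd.1 v' hv').mono_right hrv
        · rw [List.map_cons, US_cons, hlU1, US_cons, US_cons, ← union_assoc,
            union_diff_cancel hwu]
        · rw [List.map_cons, US_cons, hlU2, US_cons]

end matching


section fIm

variable {A B : Set X} (f : A ≃ₜ B)

/-- Transfer of a subset of `X` through `f`. -/
def fIm (s : Set X) : Set X := Subtype.val '' (f '' (Subtype.val ⁻¹' s))

theorem mem_fIm {s : Set X} {y : X} :
    y ∈ fIm f s ↔ ∃ a : A, (a : X) ∈ s ∧ (f a : X) = y := by
  simp only [fIm, mem_image, mem_preimage]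
  constructor
  · rintro ⟨b, ⟨a, ha, rfl⟩, rfl⟩
    exact ⟨a, ha, rfl⟩
  · rintro ⟨a, ha, rfl⟩
    exact ⟨f a, ⟨a, ha, rfl⟩, rfl⟩

theorem fIm_subset {s : Set X} : fIm f s ⊆ B := by
  rintro y hy
  obtain ⟨a, _, rfl⟩ := (mem_fIm f).mp hy
  exact (f a).2

theorem fIm_inter_A {s : Set X} : fIm f (s ∩ A) = fIm f s := by
  ext y
  simp only [mem_fIm, mem_inter_iff]
  exact ⟨fun ⟨a, ha, h⟩ => ⟨a, ha.1, h⟩, fun ⟨a, ha, h⟩ => ⟨a, ⟨ha, a.2⟩, h⟩⟩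

theorem fIm_mono {s t : Set X} (h : s ⊆ t) : fIm f s ⊆ fIm f t := by
  intro y hy
  obtain ⟨a, ha, rfl⟩ := (mem_fIm f).mp hy
  exact (mem_fIm f).mpr ⟨a, h ha, rfl⟩

@[simp] theorem fIm_empty : fIm f ∅ = ∅ := by
  ext y; simp [mem_fIm]

theorem fIm_union {s t : Set X} : fIm f (s ∪ t) = fIm f s ∪ fIm f t := by
  ext y
  simp only [mem_fIm, mem_union]
  constructor
  · rintro ⟨a, ha | ha, rfl⟩
    · exact Or.inl ⟨a, ha, rfl⟩
    · exact Or.inr ⟨a, ha, rfl⟩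
  · rintro (⟨a, ha, rfl⟩ | ⟨a, ha, rfl⟩)
    · exact ⟨a, Or.inl ha, rfl⟩
    · exact ⟨a, Or.inr ha, rfl⟩

theorem fIm_US {l : List (Set X)} : fIm f (US l) = US (l.map (fIm f)) := by
  induction l with
  | nil => simp
  | cons a l ih => rw [US_cons, fIm_union, List.map_cons, US_cons, ih]

theorem fIm_disjoint {s t : Set X} (h : Disjoint s t) : Disjoint (fIm f s) (fIm f t) := by
  rw [disjoint_iff_inter_eq_empty]
  ext y
  simp only [mem_inter_iff, mem_empty_iff_false, iff_false, not_and]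
  rintro h1 h2
  obtain ⟨a, ha, rfl⟩ := (mem_fIm f).mp h1
  obtain ⟨a', ha', he⟩ := (mem_fIm f).mp h2
  have : a' = a := Subtype.ext_iff.mpr (congrArg Subtype.val (f.injective (Subtype.ext he)))
  subst this
  exact h.ne_of_mem ha ha' rfl

theorem fIm_nonempty {s : Set X} (h : (s ∩ A).Nonempty) : (fIm f s).Nonempty := by
  obtain ⟨x, hxs, hxA⟩ := h
  exact ⟨f ⟨x, hxA⟩, (mem_fIm f).mpr ⟨⟨x, hxA⟩, hxs, rfl⟩⟩

theorem fIm_compact (hA : IsClosed A) {s : Set X} (hs : IsClosed s) : IsCompact (fIm f s) := by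
  haveI : CompactSpace A := isCompact_iff_compactSpace.mp hA.isCompact
  have h1 : IsCompact (Subtype.val ⁻¹' s : Set A) :=
    (hs.preimage continuous_subtype_val).isCompact
  exact ((h1.image f.continuous).image continuous_subtype_val)

theorem fIm_relatively_open (hB : IsClosed B) {s : Set X} (hs : IsOpen s) :
    IsClosed (B \ fIm f s) := by
  have : B \ fIm f s = Subtype.val '' ((f '' (Subtype.val ⁻¹' s))ᶜ : Set B) := by
    ext y
    simp only [mem_diff, mem_image, mem_compl_iff]
    constructor
    · rintro ⟨hyB, hy⟩
      refine ⟨⟨y, hyB⟩, fun hc => hy ?_, rfl⟩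
      exact ⟨⟨y, hyB⟩, hc, rfl⟩
    · rintro ⟨b, hb, rfl⟩
      exact ⟨b.2, fun hc => hb (by
        obtain ⟨b', hb', he⟩ := hc
        exact (Subtype.ext he : b' = b) ▸ hb')⟩
  rw [this]
  apply hB.isClosedEmbedding_subtypeVal.isClosedMap
  rw [isClosed_compl_iff]
  exact f.isOpenMap _ (hs.preimage continuous_subtype_val)

theorem fIm_measure (μ : Measure X) (hA : IsClosed A)
    (hf : ∀ C : Set A, MeasurableSet (Subtype.val '' C) →
      μ (Subtype.val '' (f '' C)) = μ (Subtype.val '' C))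
    {s : Set X} (hs : MeasurableSet s) : μ (fIm f s) = μ (s ∩ A) := by
  have h1 : Subtype.val '' (Subtype.val ⁻¹' s : Set A) = s ∩ A := by
    rw [Subtype.image_preimage_coe]
    exact inter_comm _ _
  have := hf (Subtype.val ⁻¹' s) (h1 ▸ hs.inter hA.measurableSet)
  rw [h1] at this
  exact this


theorem fIm_small (hA : IsClosed A) {ε : ℝ≥0∞} (hε : 0 < ε) :
    ∃ δ : ℝ≥0∞, 0 < δ ∧ ∀ s : Set X, EMetric.diam s ≤ δ → EMetric.diam (fIm f s) ≤ ε := by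
  haveI : CompactSpace A := isCompact_iff_compactSpace.mp hA.isCompact
  have hg : UniformContinuous (fun a : A => (f a : X)) :=
    CompactSpace.uniformContinuous_of_continuous
      (continuous_subtype_val.comp f.continuous)
  obtain ⟨δ, hδ, hδ'⟩ := EMetric.uniformContinuous_iff.mp hg ε hε
  refine ⟨min δ 1 / 2, ENNReal.div_pos (by simp [lt_min_iff, hδ, zero_lt_one, pos_iff_ne_zero.mp (lt_min hδ zero_lt_one)]) (by norm_num), ?_⟩
  intro s hs
  apply EMetric.diam_le
  rintro x hx y hy
  obtain ⟨a, ha, rfl⟩ := (mem_fIm f).mp hx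
  obtain ⟨a', ha', rfl⟩ := (mem_fIm f).mp hy
  have hd : edist a a' < δ := by
    rw [Subtype.edist_eq]
    calc edist (a : X) (a' : X) ≤ EMetric.diam s := EMetric.edist_le_diam_of_mem ha ha'
    _ ≤ min δ 1 / 2 := hs
    _ < min δ 1 := ENNReal.half_lt_self (pos_iff_ne_zero.mp (lt_min hδ zero_lt_one)) (by
        exact ne_top_of_le_ne_top (by norm_num) (min_le_right _ _))
    _ ≤ δ := min_le_left _ _
  exact (hδ' hd).le

end fIm



theorem measure_inter_lt (μ : Measure X) [IsFiniteMeasure μ]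
    (hpos : ∀ U : Set X, IsOpen U → U.Nonempty → 0 < μ U)
    {A p : Set X} (hA : IsClosed A) (hAnd : IsNowhereDense A) (hp : IsClopen p)
    (hpne : p.Nonempty) : μ (p ∩ A) < μ p := by
  have hne : (p \ A).Nonempty := by
    rw [diff_nonempty]
    intro hsub
    have h1 : p ⊆ interior A := hp.isOpen.subset_interior_iff.mpr hsub
    have hAint : interior A = ∅ := by
      have := hAnd
      rwa [IsNowhereDense, hA.closure_eq] at this
    rw [hAint] at h1
    exact hpne.not_subset_empty h1
  have h2 : 0 < μ (p \ A) := hpos _ (hp.isOpen.sdiff hA) hne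
  calc μ (p ∩ A) < μ (p ∩ A) + μ (p \ A) :=
        ENNReal.lt_add_right (measure_ne_top μ _) h2.ne'
  _ = μ p := measure_inter_add_diff p hA.measurableSet


section stage1

variable (μ : Measure X) [IsFiniteMeasure μ]
variable {A B : Set X} (f : A ≃ₜ B)

theorem stage1
    (hpos : ∀ U : Set X, IsOpen U → U.Nonempty → 0 < μ U)
    (hsc : ∀ U V : Set X, IsClopen U → IsClopen V → μ U < μ V →
      ∃ W, W ⊆ V ∧ IsClopen W ∧ μ W = μ U)
    (hA : IsClosed A) (hAnd : IsNowhereDense A) (hB : IsClosed B) (hBnd : IsNowhereDense B)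
    (hf : ∀ C : Set A, MeasurableSet (Subtype.val '' C) →
      μ (Subtype.val '' (f '' C)) = μ (Subtype.val '' C))
    {η : ℝ≥0∞} (hη : 0 < η) :
    ∀ (ps : List (Set X)) (q : Set X), IsClopen q →
    (∀ r ∈ ps, IsClopen r) → ps.Pairwise Disjoint →
    fIm f (US ps) ⊆ q →
    ∃ out : List (Set X × Set X × Set X),
      out.map (fun t => t.1 ∪ t.2.2) = ps ∧
      (∀ t ∈ out, IsClopen t.1 ∧ IsClopen t.2.1 ∧ IsClopen t.2.2 ∧
        Disjoint t.1 t.2.2 ∧ t.2.2 ∩ A = ∅ ∧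
        μ t.1 = μ t.2.1 ∧ t.2.1 ∩ B = fIm f t.1 ∧ t.2.1 ⊆ q ∧
        EMetric.diam t.2.1 ≤ EMetric.diam (fIm f t.1) + 2 * η) ∧
      (out.map (fun t => t.2.1)).Pairwise Disjoint ∧
      fIm f (US ps) ⊆ US (out.map (fun t => t.2.1)) := by
  intro ps
  induction ps with
  | nil =>
      intro q hq _ _ _
      exact ⟨[], rfl, by simp, by simp, by simp⟩
  | cons p ps ih =>
      intro q hq hcl hdisj hsub
      have hp : IsClopen p := hcl p (by simp)
      have hps : ∀ r ∈ ps, IsClopen r := fun r hr => hcl r (List.mem_cons_of_mem _ hr)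
      rw [List.pairwise_cons] at hdisj
      have hsubp : fIm f p ⊆ q := fun y hy =>
        hsub ((fIm_mono f (by rw [US_cons]; exact subset_union_left)) hy)
      have hsubps : fIm f (US ps) ⊆ q := fun y hy =>
        hsub ((fIm_mono f (by rw [US_cons]; exact subset_union_right)) hy)
      by_cases hpA : (p ∩ A).Nonempty
      · -- the interesting case
        have hpne : p.Nonempty := hpA.mono inter_subset_left
        set K : Set X := fIm f p with hK
        have hKc : IsCompact K := fIm_compact f hA hp.isClosed
        have hKB : K ⊆ B := fIm_subset f
        have hKne : K.Nonempty := fIm_nonempty f hpA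
        have hKμ : μ K = μ (p ∩ A) := fIm_measure f μ hA hf (msX hp)
        have hpAμ : μ (p ∩ A) < μ p := measure_inter_lt μ hpos hA hAnd hp hpne
        have hKp : μ K < μ p := by rw [hKμ]; exact hpAμ
        set N : Set X := {x | EMetric.infEdist x K < η} with hN
        have hNopen : IsOpen N := isOpen_lt EMetric.continuous_infEdist continuous_const
        have hKN : K ⊆ N := fun x hx => by
          simp only [hN, mem_setOf_eq, EMetric.infEdist_zero_of_mem hx]
          exact (EMetric.infEdist_zero_of_mem hx).trans_lt hη
        have hOopen : IsOpen ((q ∩ N) \ (B \ fIm f p)) :=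
          (hq.isOpen.inter hNopen).sdiff (fIm_relatively_open f hB hp.isOpen)
        have hKO : K ⊆ (q ∩ N) \ (B \ fIm f p) := fun x hx =>
          ⟨⟨hsubp hx, hKN hx⟩, fun hc => hc.2 hx⟩
        obtain ⟨Q, hQ, hKQ, hQO, hQμ⟩ := clopen_outer μ hKc hOopen hKO
          (tsub_pos_of_lt hKp)
        have hQq : Q ⊆ q := hQO.trans (diff_subset.trans inter_subset_left)
        have hQN : Q ⊆ N := hQO.trans (diff_subset.trans inter_subset_right)
        have hQB : Q ∩ B = K := by
          apply Subset.antisymm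
          · rintro x ⟨hxQ, hxB⟩
            by_contra hxK
            exact (hQO hxQ).2 ⟨hxB, hxK⟩
          · exact subset_inter hKQ hKB
        have hQμp : μ Q < μ p := by
          calc μ Q < μ K + (μ p - μ K) := hQμ
          _ = μ p := add_tsub_cancel_of_le hKp.le
        have hQne : Q.Nonempty := hKne.mono hKQ
        have hKQμ : μ K < μ Q := by
          have := measure_inter_lt μ hpos hB hBnd hQ hQne
          rwa [hQB] at this
        obtain ⟨P, hP, hPA, hPp, hPμ⟩ := clopen_exact_between μ hsc
          (hp.isClosed.inter hA).isCompact hp hQ inter_subset_left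
          (by rw [← hKμ]; exact hKQμ) hQμp.le
        have hPAeq : P ∩ A = p ∩ A :=
          Subset.antisymm (inter_subset_inter_left _ hPp) (subset_inter hPA inter_subset_right)
        have hfImP : fIm f P = K := by
          rw [← fIm_inter_A, hPAeq, fIm_inter_A]
        have hQdiam : EMetric.diam Q ≤ EMetric.diam (fIm f P) + 2 * η := by
          rw [hfImP]
          apply EMetric.diam_le
          intro x hx y hy
          obtain ⟨kx, hkx, hkx'⟩ := EMetric.infEdist_lt_iff.mp (hQN hx)
          obtain ⟨ky, hky, hky'⟩ := EMetric.infEdist_lt_iff.mp (hQN hy)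
          calc edist x y ≤ edist x kx + edist kx ky + edist ky y := edist_triangle4 x kx ky y
          _ ≤ η + EMetric.diam K + η := by
              refine add_le_add (add_le_add hkx'.le (EMetric.edist_le_diam_of_mem hkx hky)) ?_
              rw [edist_comm]
              exact hky'.le
          _ = EMetric.diam K + 2 * η := by ring
        have hdisjQps : fIm f (US ps) ⊆ q \ Q := by
          intro x hx
          refine ⟨hsubps hx, fun hxQ => ?_⟩
          have hxK : x ∈ K := hQB ▸ ⟨hxQ, fIm_subset f hx⟩
          have hdisjp : Disjoint p (US ps) := by
            rw [disjoint_iff_inter_eq_empty]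
            ext z
            simp only [mem_inter_iff, mem_US, mem_empty_iff_false, iff_false, not_and]
            rintro hzp ⟨s, hs, hzs⟩
            exact (hdisj.1 s hs).ne_of_mem hzp hzs rfl
          exact (fIm_disjoint f hdisjp).ne_of_mem hxK hx rfl
        obtain ⟨out, houteq, hout, houtd, houtc⟩ := ih (q \ Q) (hq.diff hQ) hps hdisj.2 hdisjQps
        refine ⟨(P, Q, p \ P) :: out, ?_, ?_, ?_, ?_⟩
        · rw [List.map_cons, houteq, union_diff_cancel hPp]
        · intro t ht
          rcases List.mem_cons.mp ht with rfl | ht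
          · refine ⟨hP, hQ, hp.diff hP, disjoint_sdiff_self_right, ?_, hPμ, ?_, hQq, hQdiam⟩
            · ext z
              simp only [mem_inter_iff, mem_diff, mem_empty_iff_false, iff_false, not_and]
              rintro ⟨hzp, hzP⟩ hzA
              exact hzP (hPA ⟨hzp, hzA⟩)
            · rw [hQB, hfImP]
          · obtain ⟨h1, h2, h3, h4, h5, h6, h7, h8, h9⟩ := hout t ht
            exact ⟨h1, h2, h3, h4, h5, h6, h7, h8.trans diff_subset, h9⟩
        · rw [List.map_cons, List.pairwise_cons]
          refine ⟨fun s hs => ?_, houtd⟩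
          obtain ⟨t, ht, rfl⟩ := List.mem_map.mp hs
          exact Disjoint.symm (disjoint_sdiff_self_left.mono_left (hout t ht).2.2.2.2.2.2.2.1)
        · rw [US_cons, fIm_union, List.map_cons, US_cons]
          refine union_subset_union ?_ houtc
          rw [hK] at hKQ
          exact hKQ
      · -- trivial case
        obtain ⟨out, houteq, hout, houtd, houtc⟩ := ih q hq hps hdisj.2 hsubps
        have hpA' : p ∩ A = ∅ := not_nonempty_iff_eq_empty.mp hpA
        have hfImp : fIm f p = ∅ := by
          rw [← fIm_inter_A, hpA', fIm_empty]
        refine ⟨(∅, ∅, p) :: out, ?_, ?_, ?_, ?_⟩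
        · rw [List.map_cons, houteq, empty_union]
        · intro t ht
          rcases List.mem_cons.mp ht with rfl | ht
          · exact ⟨isClopen_empty, isClopen_empty, hp, disjoint_bot_left, hpA',
              rfl, by simp [hfImp], empty_subset _, by simp⟩
          · exact hout t ht
        · rw [List.map_cons, List.pairwise_cons]
          exact ⟨fun s _ => disjoint_bot_left, houtd⟩
        · rw [US_cons, List.map_cons, US_cons, fIm_union, hfImp]
          exact union_subset_union subset_rfl houtc

end stage1


theorem sum_map_add {α : Type*} (l : List α) (g h : α → ℝ≥0∞) :
    (l.map (fun x => g x + h x)).sum = (l.map g).sum + (l.map h).sum := by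
  induction l with
  | nil => simp
  | cons a l ih => simp only [List.map_cons, List.sum_cons, ih]; ring

theorem US_map_union {α : Type*} (l : List α) (g h : α → Set X) :
    US (l.map (fun t => g t ∪ h t)) = US (l.map g) ∪ US (l.map h) := by
  induction l with
  | nil => simp
  | cons a l ih =>
      simp only [List.map_cons, US_cons, ih]
      ext x
      simp only [mem_union]
      tauto

section step

variable (μ : Measure X) [IsFiniteMeasure μ]
variable {A B : Set X} (f : A ≃ₜ B)
variable (hpos : ∀ U : Set X, IsOpen U → U.Nonempty → 0 < μ U)
variable (hsc : ∀ U V : Set X, IsClopen U → IsClopen V → μ U < μ V →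
      ∃ W, W ⊆ V ∧ IsClopen W ∧ μ W = μ U)
variable (hA : IsClosed A) (hAnd : IsNowhereDense A)
variable (hB : IsClosed B) (hBnd : IsNowhereDense B)
variable (hf : ∀ C : Set A, MeasurableSet (Subtype.val '' C) →
      μ (Subtype.val '' (f '' C)) = μ (Subtype.val '' C))

include hpos hsc hA hAnd hB hBnd hf

theorem step_pair {ε : ℝ≥0∞} (hε : 0 < ε)
    {p q : Set X} (hp : IsClopen p) (hq : IsClopen q) (hμpq : μ p = μ q)
    (hinv : q ∩ B = fIm f p) :
    ∃ l : List (Set X × Set X),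
      (∀ r ∈ l, IsClopen r.1 ∧ IsClopen r.2 ∧ r.1 ⊆ p ∧ r.2 ⊆ q ∧ μ r.1 = μ r.2 ∧
        r.2 ∩ B = fIm f r.1 ∧ EMetric.diam r.1 ≤ ε ∧ EMetric.diam r.2 ≤ ε) ∧
      (l.map Prod.fst).Pairwise Disjoint ∧ (l.map Prod.snd).Pairwise Disjoint ∧
      US (l.map Prod.fst) = p ∧ US (l.map Prod.snd) = q := by
  classical
  have hε4 : (0 : ℝ≥0∞) < ε / 4 := ENNReal.div_pos hε.ne' (by norm_num)
  obtain ⟨δ0, hδ0, hδ0'⟩ := fIm_small f hA hε4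
  set δ : ℝ≥0∞ := min δ0 ε with hδdef
  have hδ : 0 < δ := lt_min hδ0 hε
  obtain ⟨ps, hps, hpsd, hpsU⟩ := clopen_partition_small hp hδ
  have hpscl : ∀ r ∈ ps, IsClopen r := fun r hr => (hps r hr).1
  have hfUSps : fIm f (US ps) ⊆ q := by
    rw [hpsU, ← hinv]
    exact inter_subset_left
  obtain ⟨out, houteq, hout, houtd, houtc⟩ := stage1 μ f hpos hsc hA hAnd hB hBnd hf hε4
    ps q hq hpscl hpsd hfUSps
  set g : Set X × Set X × Set X → Set X := fun t => t.1 ∪ t.2.2 with hg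
  have houtp : out.Pairwise (fun a b => Disjoint (g a) (g b)) := by
    have := houteq ▸ hpsd
    exact List.pairwise_map.mp this
  have hmemps : ∀ t ∈ out, g t ∈ ps := by
    intro t ht
    rw [← houteq]
    exact List.mem_map.mpr ⟨t, ht, rfl⟩
  -- the B-free remainder on the q side
  set Qs : List (Set X) := out.map (fun t => t.2.1) with hQs
  have hQscl : ∀ s ∈ Qs, IsClopen s := by
    intro s hs
    obtain ⟨t, ht, rfl⟩ := List.mem_map.mp hs
    exact (hout t ht).2.1
  have hQsq : US Qs ⊆ q := by
    intro x hx
    obtain ⟨s, hs, hxs⟩ := mem_US.mp hx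
    obtain ⟨t, ht, rfl⟩ := List.mem_map.mp hs
    exact (hout t ht).2.2.2.2.2.2.2.1 hxs
  set L : Set X := q \ US Qs with hL
  have hLcl : IsClopen L := hq.diff (isClopen_US hQscl)
  have hLB : L ∩ B = ∅ := by
    ext x
    simp only [mem_inter_iff, mem_empty_iff_false, iff_false, not_and]
    rintro ⟨hxq, hxQ⟩ hxB
    apply hxQ
    apply houtc
    rw [hpsU, ← hinv]
    exact ⟨hxq, hxB⟩
  obtain ⟨ls, hls, hlsd, hlsU⟩ := clopen_partition_small hLcl hε
  -- sources
  set us : List (Set X) := out.map (fun t => t.2.2) with hus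
  have huscl : ∀ s ∈ us, IsClopen s := by
    intro s hs
    obtain ⟨t, ht, rfl⟩ := List.mem_map.mp hs
    exact (hout t ht).2.2.1
  have husd : us.Pairwise Disjoint := by
    refine List.Pairwise.map _ ?_ houtp
    intro a b hab
    exact hab.mono subset_union_right subset_union_right
  have hPsd : (out.map (fun t => t.1)).Pairwise Disjoint := by
    refine List.Pairwise.map _ ?_ houtp
    intro a b hab
    exact hab.mono subset_union_left subset_union_left
  -- sum bookkeeping
  have hsum1 : μ p = (out.map (fun t => μ t.1)).sum + (out.map (fun t => μ t.2.2)).sum := by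
    rw [← sum_map_add]
    have : out.map (fun t => μ t.1 + μ t.2.2) = out.map (fun t => μ (g t)) := by
      apply List.map_congr_left
      intro t ht
      exact (measure_union (hout t ht).2.2.2.1 (msX (hout t ht).2.2.1)).symm
    rw [this]
    have h3 : out.map (fun t => μ (g t)) = (out.map g).map (fun s => μ s) := by
      rw [List.map_map]; rfl
    rw [h3, houteq, ← measure_US μ (fun s hs => msX (hpscl s hs)) hpsd, hpsU]
  have hsum2 : (out.map (fun t => μ t.1)).sum = (Qs.map (fun s => μ s)).sum := by
    rw [hQs, List.map_map]
    apply congrArg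
    apply List.map_congr_left
    intro t ht
    exact (hout t ht).2.2.2.2.2.1
  have hsum3 : μ q = (Qs.map (fun s => μ s)).sum + μ L := by
    rw [← measure_US μ (fun s hs => msX (hQscl s hs)) houtd, hL,
      ← measure_union disjoint_sdiff_right (msX hLcl), union_diff_cancel hQsq]
  have hsum4 : μ L = (ls.map (fun s => μ s)).sum := by
    rw [← measure_US μ (fun s hs => msX (hls s hs).1) hlsd, hlsU]
  have hsumfin : (out.map (fun t => μ t.1)).sum ≠ ⊤ := by
    rw [hsum2, ← measure_US μ (fun s hs => msX (hQscl s hs)) houtd]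
    exact measure_ne_top μ _
  have hsummain : (us.map (fun s => μ s)).sum = (ls.map (fun s => μ s)).sum := by
    have h1 : (out.map (fun t => μ t.1)).sum + (us.map (fun s => μ s)).sum =
        (out.map (fun t => μ t.1)).sum + (ls.map (fun s => μ s)).sum := by
      rw [hus, List.map_map]
      have h2 : (out.map ((fun s => μ s) ∘ fun t => t.2.2)) = out.map (fun t => μ t.2.2) := rfl
      rw [h2, ← hsum1, hμpq, hsum3, hsum2, hsum4]
    exact (ENNReal.add_right_inj hsumfin).mp h1
  obtain ⟨l', hl', hl'd1, hl'd2, hl'U1, hl'U2⟩ := matching μ hpos hsc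
    (us.length + ls.length) us ls le_rfl huscl (fun s hs => (hls s hs).1) husd hlsd hsummain
  have hmapfst : (out.map (fun t => (t.1, t.2.1))).map Prod.fst = out.map (fun t => t.1) := by
    rw [List.map_map]; rfl
  have hmapsnd : (out.map (fun t => (t.1, t.2.1))).map Prod.snd = Qs := by
    rw [List.map_map]; rfl
  refine ⟨out.map (fun t => (t.1, t.2.1)) ++ l', ?_, ?_, ?_, ?_, ?_⟩
  · intro r hr
    rcases List.mem_append.mp hr with hr | hr
    · obtain ⟨t, ht, rfl⟩ := List.mem_map.mp hr
      obtain ⟨h1, h2, h3, h4, h5, h6, h7, h8, h9⟩ := hout t ht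
      have hgps := hps _ (hmemps t ht)
      have ht1p : t.1 ⊆ p := subset_union_left.trans hgps.2.1
      have ht1d : EMetric.diam t.1 ≤ δ :=
        le_trans (EMetric.diam_mono subset_union_left) hgps.2.2
      refine ⟨h1, h2, ht1p, h8, h6, h7, ht1d.trans (min_le_right _ _), ?_⟩
      calc EMetric.diam t.2.1 ≤ EMetric.diam (fIm f t.1) + 2 * (ε / 4) := h9
      _ ≤ ε / 4 + 2 * (ε / 4) :=
          add_le_add (hδ0' _ (ht1d.trans (min_le_left _ _))) le_rfl
      _ = 3 * (ε / 4) := by ring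
      _ ≤ 4 * (ε / 4) := by gcongr <;> norm_num
      _ ≤ ε := ENNReal.mul_div_le
    · obtain ⟨h1, h2, h3, ⟨u, hu, hru⟩, ⟨v, hv, hrv⟩⟩ := hl' r hr
      obtain ⟨t, ht, rfl⟩ := List.mem_map.mp hu
      have hgps := hps _ (hmemps t ht)
      have hrp : r.1 ⊆ p := hru.trans (subset_union_right.trans hgps.2.1)
      have hrq : r.2 ⊆ q := hrv.trans ((hls v hv).2.1.trans diff_subset)
      have hr1A : r.1 ∩ A = ∅ := by
        apply eq_empty_of_subset_empty
        rw [← (hout t ht).2.2.2.2.1]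
        exact inter_subset_inter_left _ hru
      have hfimr : fIm f r.1 = ∅ := by rw [← fIm_inter_A, hr1A, fIm_empty]
      have hr2B : r.2 ∩ B = ∅ := by
        apply eq_empty_of_subset_empty
        rw [← hLB]
        exact inter_subset_inter_left _ (hrv.trans (hls v hv).2.1)
      refine ⟨h1, h2, hrp, hrq, h3, by rw [hr2B, hfimr], ?_, ?_⟩
      · exact ((EMetric.diam_mono (hru.trans subset_union_right)).trans hgps.2.2).trans
          (min_le_right _ _)
      · exact (EMetric.diam_mono hrv).trans (hls v hv).2.2
  · rw [List.map_append, hmapfst, List.pairwise_append]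
    refine ⟨hPsd, hl'd1, ?_⟩
    intro a ha b hb
    obtain ⟨t, ht, rfl⟩ := List.mem_map.mp ha
    obtain ⟨r, hr, rfl⟩ := List.mem_map.mp hb
    obtain ⟨_, _, _, ⟨u, hu, hru⟩, _⟩ := hl' r hr
    obtain ⟨t', ht', rfl⟩ := List.mem_map.mp hu
    by_cases hteq : t = t'
    · subst hteq
      exact ((hout t ht).2.2.2.1).mono_right hru
    · exact ((by haveI : Std.Symm (fun a b : Set X × Set X × Set X => Disjoint (g a) (g b)) := ⟨fun _ _ h => h.symm⟩; exact houtp.forall ht ht' hteq : Disjoint (g t) (g t')).mono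
        subset_union_left (hru.trans subset_union_right))
  · rw [List.map_append, hmapsnd, List.pairwise_append]
    refine ⟨houtd, hl'd2, ?_⟩
    intro a ha b hb
    obtain ⟨r, hr, rfl⟩ := List.mem_map.mp hb
    obtain ⟨_, _, _, _, ⟨v, hv, hrv⟩⟩ := hl' r hr
    have haQ : a ⊆ US Qs := fun x hx => mem_US.mpr ⟨a, ha, hx⟩
    have hbL : r.2 ⊆ L := hrv.trans (hls v hv).2.1
    have hdisjQL : Disjoint (US Qs) L := by
      rw [hL]
      exact disjoint_sdiff_self_right
    exact hdisjQL.mono haQ hbL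
  · rw [List.map_append, hmapfst, US_append, hl'U1, hus]
    rw [← US_map_union out (fun t => t.1) (fun t => t.2.2), houteq, hpsU]
  · rw [List.map_append, hmapsnd, US_append, hl'U2, hlsU, union_diff_cancel hQsq]


theorem step_list {ε' : ℝ≥0∞} (hε' : 0 < ε') :
    ∀ (L : List (Set X × Set X)),
    (∀ r ∈ L, IsClopen r.1 ∧ IsClopen r.2 ∧ μ r.1 = μ r.2 ∧ r.2 ∩ B = fIm f r.1) →
    (L.map Prod.fst).Pairwise Disjoint → (L.map Prod.snd).Pairwise Disjoint →
    ∃ L' : List (Set X × Set X),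
      (∀ r ∈ L', IsClopen r.1 ∧ IsClopen r.2 ∧ μ r.1 = μ r.2 ∧ r.2 ∩ B = fIm f r.1 ∧
        EMetric.diam r.1 ≤ ε' ∧ EMetric.diam r.2 ≤ ε') ∧
      (L'.map Prod.fst).Pairwise Disjoint ∧ (L'.map Prod.snd).Pairwise Disjoint ∧
      US (L'.map Prod.fst) = US (L.map Prod.fst) ∧
      US (L'.map Prod.snd) = US (L.map Prod.snd) ∧
      (∀ r' ∈ L', ∃ r ∈ L, r'.1 ⊆ r.1 ∧ r'.2 ⊆ r.2) := by
  intro L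
  induction L with
  | nil =>
      intro _ _ _
      exact ⟨[], by simp, by simp, by simp, by simp, by simp, by simp⟩
  | cons r L ih =>
      intro hL hd1 hd2
      rw [List.map_cons, List.pairwise_cons] at hd1 hd2
      obtain ⟨h1, h2, h3, h4⟩ := hL r (by simp)
      obtain ⟨l, hl, hld1, hld2, hlU1, hlU2⟩ :=
        step_pair μ f hpos hsc hA hAnd hB hBnd hf hε' h1 h2 h3 h4
      obtain ⟨L', hL', hL'd1, hL'd2, hL'U1, hL'U2, hL'ref⟩ :=
        ih (fun s hs => hL s (List.mem_cons_of_mem _ hs)) hd1.2 hd2.2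
      refine ⟨l ++ L', ?_, ?_, ?_, ?_, ?_, ?_⟩
      · intro s hs
        rcases List.mem_append.mp hs with hs | hs
        · obtain ⟨a1, a2, a3, a4, a5, a6, a7, a8⟩ := hl s hs
          exact ⟨a1, a2, a5, a6, a7, a8⟩
        · exact hL' s hs
      · rw [List.map_append, List.pairwise_append]
        refine ⟨hld1, hL'd1, ?_⟩
        intro a ha b hb
        obtain ⟨s, hs, rfl⟩ := List.mem_map.mp ha
        obtain ⟨s', hs', rfl⟩ := List.mem_map.mp hb
        obtain ⟨t, ht, ht1, _⟩ := hL'ref s' hs'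
        exact ((hd1.1 t.1 (List.mem_map.mpr ⟨t, ht, rfl⟩)).mono
          (hl s hs).2.2.1 ht1)
      · rw [List.map_append, List.pairwise_append]
        refine ⟨hld2, hL'd2, ?_⟩
        intro a ha b hb
        obtain ⟨s, hs, rfl⟩ := List.mem_map.mp ha
        obtain ⟨s', hs', rfl⟩ := List.mem_map.mp hb
        obtain ⟨t, ht, _, ht2⟩ := hL'ref s' hs'
        exact ((hd2.1 t.2 (List.mem_map.mpr ⟨t, ht, rfl⟩)).mono
          (hl s hs).2.2.2.1 ht2)
      · rw [List.map_append, US_append, hlU1, hL'U1, List.map_cons, US_cons]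
      · rw [List.map_append, US_append, hlU2, hL'U2, List.map_cons, US_cons]
      · intro s hs
        rcases List.mem_append.mp hs with hs | hs
        · exact ⟨r, by simp, (hl s hs).2.2.1, (hl s hs).2.2.2.1⟩
        · obtain ⟨t, ht, h⟩ := hL'ref s hs
          exact ⟨t, List.mem_cons_of_mem _ ht, h⟩

end step


theorem main_metric (μ : Measure X) [IsFiniteMeasure μ]
    (hpos : ∀ U : Set X, IsOpen U → U.Nonempty → 0 < μ U)
    (hsc : ∀ U V : Set X, IsClopen U → IsClopen V → μ U < μ V →
      ∃ W, W ⊆ V ∧ IsClopen W ∧ μ W = μ U)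
    (A B : Set X) (hA : IsClosed A) (hAnd : IsNowhereDense A)
    (hB : IsClosed B) (hBnd : IsNowhereDense B)
    (f : A ≃ₜ B)
    (hf : ∀ C : Set A, MeasurableSet (Subtype.val '' C) →
      μ (Subtype.val '' (f '' C)) = μ (Subtype.val '' C)) :
    ∃ F : X ≃ₜ X, (∀ S : Set X, MeasurableSet S → μ (F '' S) = μ S) ∧
      ∀ a : A, F (a : X) = (f a : X) := by
  classical
  set Inv : List (Set X × Set X) → Prop := fun L =>
    (∀ r ∈ L, IsClopen r.1 ∧ IsClopen r.2 ∧ μ r.1 = μ r.2 ∧ r.2 ∩ B = fIm f r.1) ∧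
    (L.map Prod.fst).Pairwise Disjoint ∧ (L.map Prod.snd).Pairwise Disjoint ∧
    US (L.map Prod.fst) = univ ∧ US (L.map Prod.snd) = univ with hInvDef
  have hfImuniv : fIm f univ = B := by
    apply Subset.antisymm (fIm_subset f)
    intro b hb
    exact (mem_fIm f).mpr ⟨f.symm ⟨b, hb⟩, mem_univ _, by simp⟩
  have h0 : Inv [(univ, univ)] := by
    refine ⟨?_, by simp, by simp, by simp [US], by simp [US]⟩
    intro r hr
    rw [List.mem_singleton] at hr
    subst hr
    exact ⟨isClopen_univ, isClopen_univ, rfl, by simp [hfImuniv]⟩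
  have hstep : ∀ (n : ℕ) (L : List (Set X × Set X)), Inv L →
      ∃ L', Inv L' ∧
        (∀ r ∈ L', EMetric.diam r.1 ≤ (n : ℝ≥0∞)⁻¹ ∧ EMetric.diam r.2 ≤ (n : ℝ≥0∞)⁻¹) ∧
        (∀ r' ∈ L', ∃ r ∈ L, r'.1 ⊆ r.1 ∧ r'.2 ⊆ r.2) := by
    intro n L hL
    have hεpos : (0 : ℝ≥0∞) < (n : ℝ≥0∞)⁻¹ := ENNReal.inv_pos.mpr (ENNReal.natCast_ne_top n)
    obtain ⟨L', h1, h2, h3, h4, h5, h6⟩ := step_list μ f hpos hsc hA hAnd hB hBnd hf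
      hεpos L hL.1 hL.2.1 hL.2.2.1
    refine ⟨L', ⟨fun r hr => ⟨(h1 r hr).1, (h1 r hr).2.1, (h1 r hr).2.2.1, (h1 r hr).2.2.2.1⟩,
      h2, h3, by rw [h4, hL.2.2.2.1], by rw [h5, hL.2.2.2.2]⟩,
      fun r hr => ⟨(h1 r hr).2.2.2.2.1, (h1 r hr).2.2.2.2.2⟩, h6⟩
  choose! stepL hstep1 hstep2 hstep3 using hstep
  set seq : ℕ → List (Set X × Set X) :=
    fun n => Nat.rec [(univ, univ)] (fun k ih => stepL (k + 1) ih) n with hseqdef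
  have hInv : ∀ n, Inv (seq n) := by
    intro n
    induction n with
    | zero => exact h0
    | succ n ih => exact hstep1 (n + 1) (seq n) ih
  have hmesh : ∀ n, ∀ r ∈ seq n,
      EMetric.diam r.1 ≤ (n : ℝ≥0∞)⁻¹ ∧ EMetric.diam r.2 ≤ (n : ℝ≥0∞)⁻¹ := by
    intro n
    cases n with
    | zero => intro r _; simp
    | succ n => exact hstep2 (n + 1) (seq n) (hInv n)
  have href : ∀ n, ∀ r' ∈ seq (n + 1), ∃ r ∈ seq n, r'.1 ⊆ r.1 ∧ r'.2 ⊆ r.2 :=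
    fun n => hstep3 (n + 1) (seq n) (hInv n)
  -- entries containing a point
  have hex1 : ∀ (n : ℕ) (x : X), ∃ r, r ∈ seq n ∧ x ∈ r.1 := by
    intro n x
    have hx : x ∈ US ((seq n).map Prod.fst) := by rw [(hInv n).2.2.2.1]; trivial
    obtain ⟨s, hs, hxs⟩ := mem_US.mp hx
    obtain ⟨r, hr, rfl⟩ := List.mem_map.mp hs
    exact ⟨r, hr, hxs⟩
  have hex2 : ∀ (n : ℕ) (y : X), ∃ r, r ∈ seq n ∧ y ∈ r.2 := by
    intro n y
    have hy : y ∈ US ((seq n).map Prod.snd) := by rw [(hInv n).2.2.2.2]; trivial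
    obtain ⟨s, hs, hys⟩ := mem_US.mp hy
    obtain ⟨r, hr, rfl⟩ := List.mem_map.mp hs
    exact ⟨r, hr, hys⟩
  choose e1 he1 hxe1 using hex1
  choose e2 he2 hye2 using hex2
  have huniq1 : ∀ (n : ℕ) (x : X) (r : Set X × Set X), r ∈ seq n → x ∈ r.1 → r = e1 n x := by
    intro n x r hr hx
    by_contra hne
    have hpw : (seq n).Pairwise (fun a b => Disjoint a.1 b.1) :=
      List.pairwise_map.mp (hInv n).2.1
    exact ((by haveI : Std.Symm (fun a b : Set X × Set X => Disjoint a.1 b.1) := ⟨fun _ _ h => h.symm⟩; exact hpw.forall hr (he1 n x) hne : Disjoint r.1 (e1 n x).1)).ne_of_mem hx (hxe1 n x) rfl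
  have huniq2 : ∀ (n : ℕ) (y : X) (r : Set X × Set X), r ∈ seq n → y ∈ r.2 → r = e2 n y := by
    intro n y r hr hy
    by_contra hne
    have hpw : (seq n).Pairwise (fun a b => Disjoint a.2 b.2) :=
      List.pairwise_map.mp (hInv n).2.2.1
    exact ((by haveI : Std.Symm (fun a b : Set X × Set X => Disjoint a.2 b.2) := ⟨fun _ _ h => h.symm⟩; exact hpw.forall hr (he2 n y) hne : Disjoint r.2 (e2 n y).2)).ne_of_mem hy (hye2 n y) rfl
  have hnest1 : ∀ (n : ℕ) (x : X),
      (e1 (n + 1) x).1 ⊆ (e1 n x).1 ∧ (e1 (n + 1) x).2 ⊆ (e1 n x).2 := by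
    intro n x
    obtain ⟨r, hr, h1, h2⟩ := href n (e1 (n + 1) x) (he1 (n + 1) x)
    have heq : r = e1 n x := huniq1 n x r hr (h1 (hxe1 (n + 1) x))
    rw [heq] at h1 h2
    exact ⟨h1, h2⟩
  have hnest2 : ∀ (n : ℕ) (y : X),
      (e2 (n + 1) y).1 ⊆ (e2 n y).1 ∧ (e2 (n + 1) y).2 ⊆ (e2 n y).2 := by
    intro n y
    obtain ⟨r, hr, h1, h2⟩ := href n (e2 (n + 1) y) (he2 (n + 1) y)
    have heq : r = e2 n y := huniq2 n y r hr (h2 (hye2 (n + 1) y))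
    rw [heq] at h1 h2
    exact ⟨h1, h2⟩
  have hprops : ∀ (n : ℕ) (r : Set X × Set X), r ∈ seq n →
      IsClopen r.1 ∧ IsClopen r.2 ∧ μ r.1 = μ r.2 ∧ r.2 ∩ B = fIm f r.1 :=
    fun n r hr => (hInv n).1 r hr
  -- define F
  have hFex : ∀ x : X, ∃ y : X, ∀ n : ℕ, y ∈ (e1 n x).2 := by
    intro x
    have hne : ∀ n, ((e1 n x).2).Nonempty := by
      intro n
      have h1 := (hprops n _ (he1 n x)).2.2.1
      have h2 : 0 < μ (e1 n x).1 :=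
        hpos _ (hprops n _ (he1 n x)).1.isOpen ⟨x, hxe1 n x⟩
      rw [h1] at h2
      exact nonempty_of_measure_ne_zero h2.ne'
    obtain ⟨y, hy⟩ := IsCompact.nonempty_iInter_of_sequence_nonempty_isCompact_isClosed
      (fun n => (e1 n x).2) (fun n => (hnest1 n x).2) hne
      (hprops 0 _ (he1 0 x)).2.1.isClosed.isCompact
      (fun n => (hprops n _ (he1 n x)).2.1.isClosed)
    exact ⟨y, fun n => mem_iInter.mp hy n⟩
  choose F hF using hFex
  have hGex : ∀ y : X, ∃ x : X, ∀ n : ℕ, x ∈ (e2 n y).1 := by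
    intro y
    have hne : ∀ n, ((e2 n y).1).Nonempty := by
      intro n
      have h1 := (hprops n _ (he2 n y)).2.2.1
      have h2 : 0 < μ (e2 n y).2 :=
        hpos _ (hprops n _ (he2 n y)).2.1.isOpen ⟨y, hye2 n y⟩
      rw [← h1] at h2
      exact nonempty_of_measure_ne_zero h2.ne'
    obtain ⟨x, hx⟩ := IsCompact.nonempty_iInter_of_sequence_nonempty_isCompact_isClosed
      (fun n => (e2 n y).1) (fun n => (hnest2 n y).1) hne
      (hprops 0 _ (he2 0 y)).1.isClosed.isCompact
      (fun n => (hprops n _ (he2 n y)).1.isClosed)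
    exact ⟨x, fun n => mem_iInter.mp hx n⟩
  choose G hG using hGex
  -- points in common small sets are equal
  have hzero : ∀ u v : X,
      (∀ n : ℕ, ∃ s : Set X, u ∈ s ∧ v ∈ s ∧ EMetric.diam s ≤ (n : ℝ≥0∞)⁻¹) → u = v := by
    intro u v h
    rw [← edist_eq_zero]
    by_contra hne
    obtain ⟨n, hn⟩ := ENNReal.exists_inv_nat_lt hne
    obtain ⟨s, hus, hvs, hds⟩ := h n
    exact absurd ((EMetric.edist_le_diam_of_mem hus hvs).trans hds) (not_le.mpr hn)
  have hcompat1 : ∀ (n : ℕ) (x : X), e2 n (F x) = e1 n x :=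
    fun n x => (huniq2 n (F x) (e1 n x) (he1 n x) (hF x n)).symm
  have hcompat2 : ∀ (n : ℕ) (y : X), e1 n (G y) = e2 n y :=
    fun n y => (huniq1 n (G y) (e2 n y) (he2 n y) (hG y n)).symm
  have hGF : ∀ x, G (F x) = x := by
    intro x
    apply hzero
    intro n
    refine ⟨(e1 n x).1, ?_, hxe1 n x, (hmesh n _ (he1 n x)).1⟩
    have := hG (F x) n
    rwa [hcompat1 n x] at this
  have hFG : ∀ y, F (G y) = y := by
    intro y
    apply hzero
    intro n
    refine ⟨(e2 n y).2, ?_, hye2 n y, (hmesh n _ (he2 n y)).2⟩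
    have := hF (G y) n
    rwa [hcompat2 n y] at this
  have hFc : Continuous F := by
    rw [continuous_iff_continuousAt]
    intro x
    rw [ContinuousAt, EMetric.tendsto_nhds]
    intro ε hε
    obtain ⟨n, hn⟩ := ENNReal.exists_inv_nat_lt hε.ne'
    filter_upwards [(hprops n _ (he1 n x)).1.isOpen.mem_nhds (hxe1 n x)] with z hz
    have he : e1 n x = e1 n z := huniq1 n z (e1 n x) (he1 n x) hz
    calc edist (F z) (F x) ≤ EMetric.diam (e1 n x).2 :=
          EMetric.edist_le_diam_of_mem (by rw [he]; exact hF z n) (hF x n)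
    _ ≤ (n : ℝ≥0∞)⁻¹ := (hmesh n _ (he1 n x)).2
    _ < ε := hn
  have hGc : Continuous G := by
    rw [continuous_iff_continuousAt]
    intro y
    rw [ContinuousAt, EMetric.tendsto_nhds]
    intro ε hε
    obtain ⟨n, hn⟩ := ENNReal.exists_inv_nat_lt hε.ne'
    filter_upwards [(hprops n _ (he2 n y)).2.1.isOpen.mem_nhds (hye2 n y)] with z hz
    have he : e2 n y = e2 n z := huniq2 n z (e2 n y) (he2 n y) hz
    calc edist (G z) (G y) ≤ EMetric.diam (e2 n y).1 :=
          EMetric.edist_le_diam_of_mem (by rw [he]; exact hG z n) (hG y n)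
    _ ≤ (n : ℝ≥0∞)⁻¹ := (hmesh n _ (he2 n y)).1
    _ < ε := hn
  set E : X ≃ₜ X :=
    { toFun := F, invFun := G, left_inv := hGF, right_inv := hFG,
      continuous_toFun := hFc, continuous_invFun := hGc } with hEdef
  have hext : ∀ a : A, F (a : X) = (f a : X) := by
    intro a
    apply hzero
    intro n
    refine ⟨(e1 n (a : X)).2, hF _ n, ?_, (hmesh n _ (he1 n _)).2⟩
    have h4 := (hprops n _ (he1 n (a : X))).2.2.2
    have hmem : (f a : X) ∈ fIm f (e1 n (a : X)).1 :=
      (mem_fIm f).mpr ⟨a, hxe1 n _, rfl⟩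
    rw [← h4] at hmem
    exact hmem.1
  have hpre : ∀ (n : ℕ) (r : Set X × Set X), r ∈ seq n → F ⁻¹' r.2 = r.1 := by
    intro n r hr
    ext x
    simp only [mem_preimage]
    constructor
    · intro hx
      have h1 : r = e2 n (F x) := huniq2 n (F x) r hr hx
      rw [hcompat1 n x] at h1
      rw [h1]
      exact hxe1 n x
    · intro hx
      have h1 : r = e1 n x := huniq1 n x r hr hx
      rw [h1]
      exact hF x n
  have hFmeas : Measurable F := hFc.measurable
  have hGmeas : Measurable G := hGc.measurable
  have hmap : μ.map F = μ := by
    have hCdef : True := trivial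
    have hanc : ∀ (k n : ℕ) (r : Set X × Set X), r ∈ seq (n + k) →
        ∃ r' ∈ seq n, r.1 ⊆ r'.1 ∧ r.2 ⊆ r'.2 := by
      intro k
      induction k with
      | zero => exact fun n r hr => ⟨r, hr, subset_rfl, subset_rfl⟩
      | succ k ih =>
          intro n r hr
          obtain ⟨r'', hr'', h1, h2⟩ := href (n + k) r hr
          obtain ⟨r', hr', h3, h4⟩ := ih n r'' hr''
          exact ⟨r', hr', h1.trans h3, h2.trans h4⟩
    have hpi : IsPiSystem {s : Set X | ∃ n, ∃ r ∈ seq n, s = r.2} := by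
      rintro s ⟨n, r, hr, rfl⟩ t ⟨m, r', hr', rfl⟩ hne
      rcases le_total n m with hnm | hnm
      · obtain ⟨k, rfl⟩ := Nat.exists_eq_add_of_le hnm
        obtain ⟨r'', hr'', _, h2⟩ := hanc k n r' hr'
        by_cases heq : r'' = r
        · have hsub : r'.2 ⊆ r.2 := heq ▸ h2
          rw [inter_eq_right.mpr hsub]
          exact ⟨n + k, r', hr', rfl⟩
        · exfalso
          have hpw : (seq n).Pairwise (fun a b => Disjoint a.2 b.2) :=
            List.pairwise_map.mp (hInv n).2.2.1
          have hd : Disjoint r''.2 r.2 := by haveI : Std.Symm (fun a b : Set X × Set X => Disjoint a.2 b.2) := ⟨fun _ _ h => h.symm⟩; exact hpw.forall hr'' hr heq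
          obtain ⟨x, hx1, hx2⟩ := hne
          exact hd.ne_of_mem (h2 hx2) hx1 rfl
      · obtain ⟨k, rfl⟩ := Nat.exists_eq_add_of_le hnm
        obtain ⟨r'', hr'', _, h2⟩ := hanc k m r hr
        by_cases heq : r'' = r'
        · have hsub : r.2 ⊆ r'.2 := heq ▸ h2
          rw [inter_eq_left.mpr hsub]
          exact ⟨m + k, r, hr, rfl⟩
        · exfalso
          have hpw : (seq m).Pairwise (fun a b => Disjoint a.2 b.2) :=
            List.pairwise_map.mp (hInv m).2.2.1
          have hd : Disjoint r''.2 r'.2 := by haveI : Std.Symm (fun a b : Set X × Set X => Disjoint a.2 b.2) := ⟨fun _ _ h => h.symm⟩; exact hpw.forall hr'' hr' heq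
          obtain ⟨x, hx1, hx2⟩ := hne
          exact hd.ne_of_mem (h2 hx1) hx2 rfl
    have hgen : (inferInstance : MeasurableSpace X) =
        MeasurableSpace.generateFrom {s : Set X | ∃ n, ∃ r ∈ seq n, s = r.2} := by
      rw [BorelSpace.measurable_eq (α := X)]
      apply le_antisymm
      · rw [borel]
        apply MeasurableSpace.generateFrom_le
        intro U hU
        have hUeq : U = ⋃ n : ℕ, ⋃ r ∈ {r | r ∈ seq n ∧ r.2 ⊆ U}, r.2 := by
          apply Subset.antisymm
          · intro x hx
            obtain ⟨ε, hε, hball⟩ := EMetric.mem_nhds_iff.mp (hU.mem_nhds hx)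
            obtain ⟨n, hn⟩ := ENNReal.exists_inv_nat_lt hε.ne'
            refine mem_iUnion.mpr ⟨n, mem_biUnion ⟨he2 n x, ?_⟩ (hye2 n x)⟩
            intro z hz
            apply hball
            have : edist z x ≤ (n : ℝ≥0∞)⁻¹ :=
              (EMetric.edist_le_diam_of_mem hz (hye2 n x)).trans (hmesh n _ (he2 n x)).2
            exact EMetric.mem_ball.mpr (lt_of_le_of_lt this hn)
          · refine iUnion_subset fun n => iUnion₂_subset fun r hr => hr.2
        rw [hUeq]
        apply MeasurableSet.iUnion
        intro n
        apply Set.Finite.measurableSet_biUnion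
        · exact (List.finite_toSet (seq n)).subset (fun r hr => hr.1)
        · intro r hr
          exact MeasurableSpace.measurableSet_generateFrom ⟨n, r, hr.1, rfl⟩
      · apply MeasurableSpace.generateFrom_le
        rintro s ⟨n, r, hr, rfl⟩
        rw [borel]
        exact MeasurableSpace.measurableSet_generateFrom (hprops n r hr).2.1.isOpen
    refine ext_of_generate_finite {s : Set X | ∃ n, ∃ r ∈ seq n, s = r.2} hgen hpi ?_ ?_
    · rintro s ⟨n, r, hr, rfl⟩
      rw [Measure.map_apply hFmeas (msX (hprops n r hr).2.1), hpre n r hr]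
      exact (hprops n r hr).2.2.1
    · rw [Measure.map_apply hFmeas MeasurableSet.univ, preimage_univ]
  have hmap2 : μ.map G = μ := by
    have h1 := congrArg (fun ν : Measure X => ν.map G) hmap
    rw [Measure.map_map hGmeas hFmeas] at h1
    have h2 : G ∘ F = id := funext hGF
    rw [h2, Measure.map_id] at h1
    exact h1.symm
  refine ⟨E, ?_, hext⟩
  intro S hS
  have h1 : E '' S = G ⁻¹' S := Equiv.image_eq_preimage_symm E.toEquiv S
  rw [h1, ← Measure.map_apply hGmeas hS, hmap2]

end KRproof

open MeasureTheory Set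

/-- Any measure-preserving homeomorphism between closed nowhere dense subsets of a
good Cantor measure space extends to a measure-preserving homeomorphism of the space. -/
theorem stmt2 {X : Type*} [TopologicalSpace X] [CompactSpace X] [T2Space X]
    [TopologicalSpace.MetrizableSpace X] [TotallyDisconnectedSpace X]
    [MeasurableSpace X] [BorelSpace X]
    (μ : Measure X) [IsFiniteMeasure μ]
    (hperf : ∀ x : X, ¬ IsOpen ({x} : Set X))
    (hcont : ∀ x : X, μ {x} = 0)
    (hpos : ∀ U : Set X, IsOpen U → U.Nonempty → 0 < μ U)
    (hsc : ∀ U V : Set X, IsClopen U → IsClopen V → μ U < μ V →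
      ∃ W, W ⊆ V ∧ IsClopen W ∧ μ W = μ U)
    (A B : Set X) (hA : IsClosed A) (hAnd : IsNowhereDense A)
    (hB : IsClosed B) (hBnd : IsNowhereDense B)
    (f : A ≃ₜ B)
    (hf : ∀ C : Set A, MeasurableSet (Subtype.val '' C) →
      μ (Subtype.val '' (f '' C)) = μ (Subtype.val '' C)) :
    ∃ F : X ≃ₜ X, (∀ S : Set X, MeasurableSet S → μ (F '' S) = μ S) ∧
      ∀ a : A, F (a : X) = (f a : X) := by
  letI : MetricSpace X := TopologicalSpace.metrizableSpaceMetric X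
  exact KRproof.main_metric μ hpos hsc A B hA hAnd hB hBnd f hf
end

section
/- Let (X,μ) be a good Cantor measure space and A ⊆ X a closed subset with μ(A) > 0. Then for every ε > 0 there exist finitely many measure-preserving homeomorphisms h_1, …, h_n of X such that μ(h_1(A) ∪ ⋯ ∪ h_n(A)) > μ(X) − ε. -/
open MeasureTheory Set ENNReal

section Aux
variable {X : Type*} [TopologicalSpace X] [CompactSpace X] [T2Space X]
    [TotallyDisconnectedSpace X]

theorem clopen_between {A O : Set X} (hA : IsCompact A) (hO : IsOpen O)
    (hAO : A ⊆ O) : ∃ U, IsClopen U ∧ A ⊆ U ∧ U ⊆ O := by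
  have h : ∀ x : A, ∃ V : Set X, IsClopen V ∧ (x : X) ∈ V ∧ V ⊆ O :=
    fun x => compact_exists_isClopen_in_isOpen hO (hAO x.2)
  choose V hV hxV hVO using h
  obtain ⟨t, ht⟩ := hA.elim_finite_subcover V (fun x => (hV x).2)
    (fun x hx => mem_iUnion.2 ⟨⟨x, hx⟩, hxV ⟨x, hx⟩⟩)
  refine ⟨⋃ x ∈ t, V x, ?_, ht, by simp only [iUnion_subset_iff]; exact fun x _ => hVO x⟩
  exact isClopen_biUnion_finset (fun x _ => hV x)

/-- A countable family of clopen sets separating points. -/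
theorem exists_separating_clopens [TopologicalSpace.MetrizableSpace X] :
    ∃ B : ℕ → Set X, (∀ n, IsClopen (B n)) ∧
      ∀ x y : X, x ≠ y → ∃ n, x ∈ B n ∧ y ∉ B n := by
  obtain ⟨b, hbc, -, hb⟩ := TopologicalSpace.exists_countable_basis X
  classical
  let Φ : Set X × Set X → Prop := fun p => ∃ C, IsClopen C ∧ p.1 ⊆ C ∧ p.2 ⊆ Cᶜ
  let g : Set X × Set X → Set X := fun p => if h : Φ p then h.choose else ∅
  have hgclopen : ∀ p, IsClopen (g p) := by
    intro p
    by_cases h : Φ p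
    · simp only [g, dif_pos h]; exact h.choose_spec.1
    · simp only [g, dif_neg h]; exact isClopen_empty
  have hS : (g '' (b ×ˢ b) ∪ {∅}).Countable :=
    ((hbc.prod hbc).image g).union (countable_singleton _)
  obtain ⟨f, hf⟩ := Set.Countable.exists_eq_range hS (by simp)
  refine ⟨f, ?_, ?_⟩
  · intro n
    have : f n ∈ g '' (b ×ˢ b) ∪ {∅} := hf ▸ Set.mem_range_self n
    rcases this with ⟨p, -, hp⟩ | h
    · rw [← hp]; exact hgclopen p
    · simp only [mem_singleton_iff] at h; rw [h]; exact isClopen_empty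
  · intro x y hxy
    obtain ⟨C, hC, hxC, hyC⟩ := exists_isClopen_of_totally_separated hxy
    obtain ⟨u, hu, hxu, huC⟩ := hb.exists_subset_of_mem_open hxC hC.2
    obtain ⟨v, hv, hyv, hvC⟩ := hb.exists_subset_of_mem_open (by simpa using hyC) hC.compl.2
    have hΦ : Φ (u, v) := ⟨C, hC, huC, hvC⟩
    have hg : g (u, v) ∈ g '' (b ×ˢ b) ∪ {∅} := Or.inl ⟨(u, v), ⟨hu, hv⟩, rfl⟩
    rw [hf] at hg
    obtain ⟨n, hn⟩ := hg
    have hspec := hΦ.choose_spec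
    refine ⟨n, ?_, ?_⟩
    · rw [hn]; simp only [g, dif_pos hΦ]; exact hspec.2.1 hxu
    · rw [hn]; simp only [g, dif_pos hΦ]; exact hspec.2.2 hyv
set_option linter.unusedSectionVars false
section Lists
variable {X : Type*} [TopologicalSpace X] [MeasurableSpace X] [BorelSpace X]

/-- uniqueness of the piece containing a point, in a pairwise disjoint list -/
theorem mem_unique_of_pairwise {α : Type*} {f : α → Set X} {l : List α} {p q : α} {x : X}
    (hl : l.Pairwise (fun p q => Disjoint (f p) (f q))) (hp : p ∈ l) (hq : q ∈ l)
    (hxp : x ∈ f p) (hxq : x ∈ f q) : p = q := by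
  by_contra hne
  have hsymm : Symmetric (fun p q : α => Disjoint (f p) (f q)) := fun a b h => h.symm
  have hd : Disjoint (f p) (f q) := by haveI : Std.Symm (fun p q : α => Disjoint (f p) (f q)) := ⟨fun a b h => hsymm h⟩; exact List.Pairwise.forall hl hp hq hne
  exact hd.ne_of_mem hxp hxq rfl

theorem measure_list_biUnion (μ : Measure X) {α : Type*} {f : α → Set X} {l : List α}
    (hm : ∀ p ∈ l, MeasurableSet (f p))
    (hd : l.Pairwise (fun p q => Disjoint (f p) (f q))) :
    μ (⋃ p ∈ l, f p) = (l.map (fun p => μ (f p))).sum := by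
  induction l with
  | nil => simp
  | cons a t ih =>
    have h1 : (⋃ p ∈ a :: t, f p) = f a ∪ ⋃ p ∈ t, f p := by
      ext x; simp [List.mem_cons, or_and_right, exists_or]
    rw [h1, List.map_cons, List.sum_cons]
    rw [measure_union ?_ ?_]
    · rw [ih (fun p hp => hm p (List.mem_cons_of_mem a hp)) (List.Pairwise.of_cons hd)]
    · have hdis : ∀ p ∈ t, Disjoint (f a) (f p) := fun p hp => (List.pairwise_cons.1 hd).1 p hp
      exact Set.disjoint_iUnion₂_right.2 hdis
    · exact MeasurableSet.biUnion (t.finite_toSet.countable)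
        (fun p hp => hm p (List.mem_cons_of_mem a hp))
end Lists
section Step
variable {X : Type*} [TopologicalSpace X] [MeasurableSpace X] [BorelSpace X]

/-- List of matched clopen pairs with equal measures, pairwise disjoint, covering. -/
structure GoodL (μ : Measure X) (l : List (Set X × Set X)) : Prop where
  clopen1 : ∀ p ∈ l, IsClopen p.1
  clopen2 : ∀ p ∈ l, IsClopen p.2
  meq : ∀ p ∈ l, μ p.1 = μ p.2
  disj1 : l.Pairwise (fun p q => Disjoint p.1 q.1)
  disj2 : l.Pairwise (fun p q => Disjoint p.2 q.2)
  cov1 : ∀ x : X, ∃ p ∈ l, x ∈ p.1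
  cov2 : ∀ x : X, ∃ p ∈ l, x ∈ p.2

theorem GoodL.swap {μ : Measure X} {l : List (Set X × Set X)} (h : GoodL μ l) :
    GoodL μ (l.map Prod.swap) := by
  refine ⟨?_, ?_, ?_, ?_, ?_, ?_, ?_⟩
  · intro p hp; obtain ⟨q, hq, rfl⟩ := List.mem_map.1 hp; exact h.clopen2 q hq
  · intro p hp; obtain ⟨q, hq, rfl⟩ := List.mem_map.1 hp; exact h.clopen1 q hq
  · intro p hp; obtain ⟨q, hq, rfl⟩ := List.mem_map.1 hp; exact (h.meq q hq).symm
  · exact (List.pairwise_map).2 h.disj2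
  · exact (List.pairwise_map).2 h.disj1
  · intro x; obtain ⟨p, hp, hx⟩ := h.cov2 x
    exact ⟨p.swap, List.mem_map.2 ⟨p, hp, rfl⟩, hx⟩
  · intro x; obtain ⟨p, hp, hx⟩ := h.cov1 x
    exact ⟨p.swap, List.mem_map.2 ⟨p, hp, rfl⟩, hx⟩

variable {μ : Measure X} [IsFiniteMeasure μ]

/-- Matching a two-piece split of `P` inside `Q`. -/
theorem match_split
    (hsc : ∀ U V : Set X, IsClopen U → IsClopen V → μ U < μ V →
      ∃ W, W ⊆ V ∧ IsClopen W ∧ μ W = μ U)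
    {P Q S : Set X} (hP : IsClopen P) (hQ : IsClopen Q) (hS : IsClopen S)
    (hm : μ P = μ Q) :
    ∃ W, W ⊆ Q ∧ IsClopen W ∧ μ W = μ (P ∩ S) ∧ μ (Q \ W) = μ (P \ S) := by
  have hPS : IsClopen (P ∩ S) := hP.inter hS
  have key : ∃ W, W ⊆ Q ∧ IsClopen W ∧ μ W = μ (P ∩ S) := by
    rcases lt_or_ge (μ (P ∩ S)) (μ Q) with h | h
    · obtain ⟨W, h1, h2, h3⟩ := hsc (P ∩ S) Q hPS hQ h
      exact ⟨W, h1, h2, h3⟩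
    · refine ⟨Q, subset_rfl, hQ, le_antisymm h ?_⟩
      · exact hm ▸ measure_mono inter_subset_left
  obtain ⟨W, hWQ, hWc, hWm⟩ := key
  refine ⟨W, hWQ, hWc, hWm, ?_⟩
  have h1 : μ (Q \ W) = μ Q - μ W :=
    measure_diff hWQ hWc.isOpen.measurableSet.nullMeasurableSet (measure_ne_top μ W)
  have h2 : μ (P \ S) = μ P - μ (P ∩ S) := by
    rw [show P \ S = P \ (P ∩ S) by rw [diff_self_inter]]
    exact measure_diff inter_subset_left
      hPS.isOpen.measurableSet.nullMeasurableSet (measure_ne_top μ _)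
  rw [h1, h2, hWm, hm]
theorem stepFirst_exists
    (hsc : ∀ U V : Set X, IsClopen U → IsClopen V → μ U < μ V →
      ∃ W, W ⊆ V ∧ IsClopen W ∧ μ W = μ U)
    {S : Set X} (hS : IsClopen S) :
    ∀ l : List (Set X × Set X),
    (∀ p ∈ l, IsClopen p.1) → (∀ p ∈ l, IsClopen p.2) → (∀ p ∈ l, μ p.1 = μ p.2) →
    l.Pairwise (fun p q => Disjoint p.1 q.1) → l.Pairwise (fun p q => Disjoint p.2 q.2) →
    ∃ l' : List (Set X × Set X),
      (∀ p ∈ l', IsClopen p.1) ∧ (∀ p ∈ l', IsClopen p.2) ∧ (∀ p ∈ l', μ p.1 = μ p.2) ∧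
      l'.Pairwise (fun p q => Disjoint p.1 q.1) ∧ l'.Pairwise (fun p q => Disjoint p.2 q.2) ∧
      (∀ p ∈ l', ∃ q ∈ l, p.1 ⊆ q.1 ∧ p.2 ⊆ q.2) ∧
      (∀ p ∈ l', p.1 ⊆ S ∨ p.1 ⊆ Sᶜ) ∧
      (∀ x : X, (∃ p ∈ l, x ∈ p.1) → ∃ p ∈ l', x ∈ p.1) ∧
      (∀ x : X, (∃ p ∈ l, x ∈ p.2) → ∃ p ∈ l', x ∈ p.2) := by
  intro l
  induction l with
  | nil =>
    intro _ _ _ _ _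
    exact ⟨[], by simp, by simp, by simp, by simp, by simp, by simp, by simp,
      by simp, by simp⟩
  | cons a t ih =>
    intro hc1 hc2 hmeq hd1 hd2
    obtain ⟨P, Q⟩ := a
    have hP : IsClopen P := hc1 (P, Q) (List.mem_cons_self)
    have hQ : IsClopen Q := hc2 (P, Q) (List.mem_cons_self)
    have hPQ : μ P = μ Q := hmeq (P, Q) (List.mem_cons_self)
    obtain ⟨W, hWQ, hWc, hWm, hWm'⟩ := match_split hsc hP hQ hS hPQ
    obtain ⟨t', h1, h2, h3, h4, h5, h6, h7, h8, h9⟩ :=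
      ih (fun p hp => hc1 p (List.mem_cons_of_mem _ hp))
        (fun p hp => hc2 p (List.mem_cons_of_mem _ hp))
        (fun p hp => hmeq p (List.mem_cons_of_mem _ hp))
        hd1.of_cons hd2.of_cons
    have hdP : ∀ q ∈ t, Disjoint P q.1 := fun q hq => (List.pairwise_cons.1 hd1).1 q hq
    have hdQ : ∀ q ∈ t, Disjoint Q q.2 := fun q hq => (List.pairwise_cons.1 hd2).1 q hq
    refine ⟨(P ∩ S, W) :: (P \ S, Q \ W) :: t', ?_, ?_, ?_, ?_, ?_, ?_, ?_, ?_, ?_⟩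
    · rintro p hp
      rcases List.mem_cons.1 hp with rfl | hp
      · exact hP.inter hS
      rcases List.mem_cons.1 hp with rfl | hp
      · exact hP.diff hS
      · exact h1 p hp
    · rintro p hp
      rcases List.mem_cons.1 hp with rfl | hp
      · exact hWc
      rcases List.mem_cons.1 hp with rfl | hp
      · exact hQ.diff hWc
      · exact h2 p hp
    · rintro p hp
      rcases List.mem_cons.1 hp with rfl | hp
      · exact hWm.symm
      rcases List.mem_cons.1 hp with rfl | hp
      · exact hWm'.symm
      · exact h3 p hp
    · refine List.pairwise_cons.2 ⟨?_, List.pairwise_cons.2 ⟨?_, h4⟩⟩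
      · rintro p hp
        rcases List.mem_cons.1 hp with rfl | hp
        · exact Set.disjoint_left.2 (fun x hx hx' => hx'.2 hx.2)
        · obtain ⟨q, hq, hq1, _⟩ := h6 p hp
          exact ((hdP q hq).mono_right hq1).mono_left inter_subset_left
      · rintro p hp
        obtain ⟨q, hq, hq1, _⟩ := h6 p hp
        exact ((hdP q hq).mono_right hq1).mono_left diff_subset
    · refine List.pairwise_cons.2 ⟨?_, List.pairwise_cons.2 ⟨?_, h5⟩⟩
      · rintro p hp
        rcases List.mem_cons.1 hp with rfl | hp
        · exact disjoint_sdiff_right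
        · obtain ⟨q, hq, _, hq2⟩ := h6 p hp
          exact ((hdQ q hq).mono_right hq2).mono_left hWQ
      · rintro p hp
        obtain ⟨q, hq, _, hq2⟩ := h6 p hp
        exact ((hdQ q hq).mono_right hq2).mono_left diff_subset
    · rintro p hp
      rcases List.mem_cons.1 hp with rfl | hp
      · exact ⟨(P, Q), List.mem_cons_self, inter_subset_left, hWQ⟩
      rcases List.mem_cons.1 hp with rfl | hp
      · exact ⟨(P, Q), List.mem_cons_self, diff_subset, diff_subset⟩
      · obtain ⟨q, hq, hq1, hq2⟩ := h6 p hp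
        exact ⟨q, List.mem_cons_of_mem _ hq, hq1, hq2⟩
    · rintro p hp
      rcases List.mem_cons.1 hp with rfl | hp
      · exact Or.inl inter_subset_right
      rcases List.mem_cons.1 hp with rfl | hp
      · exact Or.inr (fun x hx => hx.2)
      · exact h7 p hp
    · rintro x ⟨p, hp, hx⟩
      rcases List.mem_cons.1 hp with rfl | hp
      · by_cases hxS : x ∈ S
        · exact ⟨(P ∩ S, W), List.mem_cons_self, hx, hxS⟩
        · exact ⟨(P \ S, Q \ W), List.mem_cons_of_mem _ (List.mem_cons_self), hx, hxS⟩
      · obtain ⟨p', hp', hx'⟩ := h8 x ⟨p, hp, hx⟩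
        exact ⟨p', List.mem_cons_of_mem _ (List.mem_cons_of_mem _ hp'), hx'⟩
    · rintro x ⟨p, hp, hx⟩
      rcases List.mem_cons.1 hp with rfl | hp
      · by_cases hxW : x ∈ W
        · exact ⟨(P ∩ S, W), List.mem_cons_self, hxW⟩
        · exact ⟨(P \ S, Q \ W), List.mem_cons_of_mem _ (List.mem_cons_self), hx, hxW⟩
      · obtain ⟨p', hp', hx'⟩ := h9 x ⟨p, hp, hx⟩
        exact ⟨p', List.mem_cons_of_mem _ (List.mem_cons_of_mem _ hp'), hx'⟩
theorem construct_map [CompactSpace X] [T2Space X]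
    (hpos : ∀ U : Set X, IsOpen U → U.Nonempty → 0 < μ U)
    {B : ℕ → Set X} {seq : ℕ → List (Set X × Set X)}
    (hgood : ∀ n, GoodL μ (seq n))
    (href : ∀ n, ∀ p ∈ seq (n + 1), ∃ q ∈ seq n, p.1 ⊆ q.1 ∧ p.2 ⊆ q.2)
    (hsplit : ∀ n, ∀ p ∈ seq (n + 1), p.2 ⊆ B n ∨ p.2 ⊆ (B n)ᶜ)
    (hBsep : ∀ x y : X, x ≠ y → ∃ k, x ∈ B k ∧ y ∉ B k) :
    ∃ f : X → X, Continuous f ∧ (∀ n, ∀ p ∈ seq n, ∀ x ∈ p.1, f x ∈ p.2) ∧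
      ∀ s : Set X, MeasurableSet s → μ (f ⁻¹' s) = μ s := by
  classical
  -- the piece containing x on the first side
  have hex : ∀ (n : ℕ) (x : X), ∃ p, p ∈ seq n ∧ x ∈ p.1 := by
    intro n x; obtain ⟨p, hp, hx⟩ := (hgood n).cov1 x; exact ⟨p, hp, hx⟩
  choose pr hpr hxpr using hex
  have huniq1 : ∀ n (p q : Set X × Set X), p ∈ seq n → q ∈ seq n → ∀ x : X,
      x ∈ p.1 → x ∈ q.1 → p = q := fun n p q hp hq x h1 h2 =>
    mem_unique_of_pairwise (f := Prod.fst) (hgood n).disj1 hp hq h1 h2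
  have huniq2 : ∀ n (p q : Set X × Set X), p ∈ seq n → q ∈ seq n → ∀ x : X,
      x ∈ p.2 → x ∈ q.2 → p = q := fun n p q hp hq x h1 h2 =>
    mem_unique_of_pairwise (f := Prod.snd) (hgood n).disj2 hp hq h1 h2
  -- nesting
  have hnest : ∀ n x, (pr (n + 1) x).1 ⊆ (pr n x).1 ∧ (pr (n + 1) x).2 ⊆ (pr n x).2 := by
    intro n x
    obtain ⟨q, hq, h1, h2⟩ := href n _ (hpr (n + 1) x)
    have hqx : q = pr n x := huniq1 n q _ hq (hpr n x) x (h1 (hxpr (n + 1) x)) (hxpr n x)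
    rw [← hqx]; exact ⟨h1, h2⟩
  have hmono2 : ∀ x, ∀ m n, m ≤ n → (pr n x).2 ⊆ (pr m x).2 := by
    intro x m n hmn
    induction n with
    | zero => rw [Nat.le_zero.1 hmn]
    | succ k ih =>
      rcases Nat.lt_or_ge m (k + 1) with h | h
      · exact (hnest k x).2.trans (ih (Nat.lt_succ_iff.1 h))
      · rw [Nat.le_antisymm hmn h]
  -- pieces are nonempty closed
  have hQclosed : ∀ n x, IsClosed (pr n x).2 :=
    fun n x => ((hgood n).clopen2 _ (hpr n x)).isClosed
  have hQne : ∀ n x, (pr n x).2.Nonempty := by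
    intro n x
    have hpos1 : 0 < μ (pr n x).1 :=
      hpos _ ((hgood n).clopen1 _ (hpr n x)).isOpen ⟨x, hxpr n x⟩
    have : 0 < μ (pr n x).2 := ((hgood n).meq _ (hpr n x)) ▸ hpos1
    exact nonempty_of_measure_ne_zero this.ne'
  -- intersection is a single point
  have hInter : ∀ x, (⋂ n, (pr n x).2).Nonempty := by
    intro x
    exact IsCompact.nonempty_iInter_of_sequence_nonempty_isCompact_isClosed _
      (fun n => (hnest n x).2) (fun n => hQne n x)
      ((hQclosed 0 x).isCompact) (fun n => hQclosed n x)
  have hsub : ∀ x, ∀ y ∈ ⋂ n, (pr n x).2, ∀ z ∈ ⋂ n, (pr n x).2, y = z := by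
    intro x y hy z hz
    by_contra hne
    obtain ⟨k, hyk, hzk⟩ := hBsep y z hne
    rcases hsplit k _ (hpr (k + 1) x) with h | h
    · exact hzk (h (mem_iInter.1 hz (k + 1)))
    · exact h (mem_iInter.1 hy (k + 1)) hyk
  set f : X → X := fun x => (hInter x).some with hfdef
  have hfQ : ∀ n x, f x ∈ (pr n x).2 := fun n x => mem_iInter.1 (hInter x).some_mem n
  -- master property
  have hmaster : ∀ n, ∀ p ∈ seq n, ∀ x ∈ p.1, f x ∈ p.2 := by
    intro n p hp x hx
    have : p = pr n x := huniq1 n p _ hp (hpr n x) x hx (hxpr n x)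
    rw [this]; exact hfQ n x
  -- shrinking lemma
  have hshrink : ∀ (Q : ℕ → Set X), (∀ n, IsClosed (Q n)) → (∀ n, Q (n + 1) ⊆ Q n) →
      ∀ O : Set X, IsOpen O → (⋂ n, Q n) ⊆ O → ∃ n, Q n ⊆ O := by
    intro Q hQc hQn O hO hQO
    by_contra hcon
    push_neg at hcon
    have hne : ∀ n, (Q n ∩ Oᶜ).Nonempty := by
      intro n
      obtain ⟨y, hy, hy2⟩ := not_subset.1 (hcon n)
      exact ⟨y, hy, hy2⟩
    have := IsCompact.nonempty_iInter_of_sequence_nonempty_isCompact_isClosed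
      (fun n => Q n ∩ Oᶜ) (fun n => inter_subset_inter_left _ (hQn n)) hne
      (((hQc 0).inter (isClosed_compl_iff.2 hO)).isCompact)
      (fun n => (hQc n).inter (isClosed_compl_iff.2 hO))
    obtain ⟨y, hy⟩ := this
    have hy1 : y ∈ ⋂ n, Q n := mem_iInter.2 (fun n => (mem_iInter.1 hy n).1)
    exact (mem_iInter.1 hy 0).2 (hQO hy1)
  -- continuity
  have hcont : Continuous f := by
    rw [continuous_iff_continuousAt]
    intro x
    rw [ContinuousAt, Filter.tendsto_def]
    intro s hs
    obtain ⟨O, hOs, hO, hfxO⟩ := mem_nhds_iff.1 hs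
    have hIO : (⋂ n, (pr n x).2) ⊆ O := by
      intro y hy
      have : y = f x := hsub x y hy (f x) (hInter x).some_mem
      rw [this]; exact hfxO
    obtain ⟨n, hn⟩ := hshrink _ (fun n => hQclosed n x) (fun n => (hnest n x).2) O hO hIO
    apply Filter.mem_of_superset
      (((hgood n).clopen1 _ (hpr n x)).isOpen.mem_nhds (hxpr n x))
    intro x' hx'
    exact hOs (hn (hmaster n _ (hpr n x) x' hx'))
  -- preimages of pieces
  have hpre : ∀ n, ∀ p ∈ seq n, f ⁻¹' p.2 = p.1 := by
    intro n p hp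
    ext x
    constructor
    · intro hx
      have : p = pr n x := huniq2 n p _ hp (hpr n x) (f x) hx (hfQ n x)
      rw [this]; exact hxpr n x
    · intro hx; exact hmaster n p hp x hx
  -- second-side chains
  have hex2 : ∀ (n : ℕ) (x : X), ∃ p, p ∈ seq n ∧ x ∈ p.2 := by
    intro n x; obtain ⟨p, hp, hx⟩ := (hgood n).cov2 x; exact ⟨p, hp, hx⟩
  choose pr2 hpr2 hxpr2 using hex2
  have hnest2 : ∀ n x, (pr2 (n + 1) x).2 ⊆ (pr2 n x).2 := by
    intro n x
    obtain ⟨q, hq, h1, h2⟩ := href n _ (hpr2 (n + 1) x)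
    have hqx : q = pr2 n x := huniq2 n q _ hq (hpr2 n x) x (h2 (hxpr2 (n + 1) x)) (hxpr2 n x)
    rw [← hqx]; exact h2
  have hsub2 : ∀ x : X, (⋂ n, (pr2 n x).2) ⊆ {x} := by
    intro x y hy
    simp only [mem_singleton_iff]
    by_contra hne
    obtain ⟨k, hyk, hzk⟩ := hBsep y x hne
    rcases hsplit k _ (hpr2 (k + 1) x) with h | h
    · exact hzk (h (hxpr2 (k + 1) x))
    · exact h (mem_iInter.1 hy (k + 1)) hyk
  -- measure of opens is preserved
  have hopen : ∀ O : Set X, IsOpen O → μ (f ⁻¹' O) = μ O := by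
    intro O hO
    set E : ℕ → Set X := fun n => ⋃ p ∈ (seq n).filter (fun p => decide (p.2 ⊆ O)), p.2
      with hEdef
    have hmemE : ∀ n (x : X), x ∈ E n ↔ ∃ p ∈ seq n, p.2 ⊆ O ∧ x ∈ p.2 := by
      intro n x
      simp only [hEdef, mem_iUnion, List.mem_filter, decide_eq_true_eq]
      constructor
      · rintro ⟨p, ⟨hp, hpO⟩, hx⟩; exact ⟨p, hp, hpO, hx⟩
      · rintro ⟨p, hp, hpO, hx⟩; exact ⟨p, ⟨hp, hpO⟩, hx⟩
    have hEmono : Monotone E := by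
      apply monotone_nat_of_le_succ
      intro n x hx
      obtain ⟨p, hp, hpO, hxp⟩ := (hmemE n x).1 hx
      obtain ⟨p', hp', hxp'⟩ := (hgood (n + 1)).cov2 x
      obtain ⟨q, hq, h1, h2⟩ := href n p' hp'
      have : q = p := huniq2 n q p hq hp x (h2 hxp') hxp
      exact (hmemE (n + 1) x).2 ⟨p', hp', (this ▸ h2).trans hpO, hxp'⟩
    have hEunion : (⋃ n, E n) = O := by
      apply Subset.antisymm
      · intro x hx
        obtain ⟨n, hn⟩ := mem_iUnion.1 hx
        obtain ⟨p, _, hpO, hxp⟩ := (hmemE n x).1 hn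
        exact hpO hxp
      · intro x hx
        have hclosed2 : ∀ n, IsClosed (pr2 n x).2 :=
          fun n => ((hgood n).clopen2 _ (hpr2 n x)).isClosed
        have hxO : (⋂ n, (pr2 n x).2) ⊆ O := (hsub2 x).trans (by simpa using hx)
        obtain ⟨n, hn⟩ := hshrink _ hclosed2 (fun n => hnest2 n x) O hO hxO
        exact mem_iUnion.2 ⟨n, (hmemE n x).2 ⟨pr2 n x, hpr2 n x, hn, hxpr2 n x⟩⟩
    have hEmeas : ∀ n, μ (f ⁻¹' E n) = μ (E n) := by
      intro n
      have hfilter : ∀ p ∈ (seq n).filter (fun p => decide (p.2 ⊆ O)), p ∈ seq n :=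
        fun p hp => (List.mem_filter.1 hp).1
      have hpreE : f ⁻¹' E n = ⋃ p ∈ (seq n).filter (fun p => decide (p.2 ⊆ O)), p.1 := by
        rw [hEdef]
        simp only [preimage_iUnion]
        apply iUnion_congr; intro p; apply iUnion_congr; intro hp
        exact hpre n p (hfilter p hp)
      rw [hpreE]
      rw [measure_list_biUnion μ (f := Prod.fst)
        (fun p hp => ((hgood n).clopen1 p (hfilter p hp)).isOpen.measurableSet)
        ((hgood n).disj1.sublist (List.filter_sublist))]
      rw [measure_list_biUnion μ (f := Prod.snd)
        (fun p hp => ((hgood n).clopen2 p (hfilter p hp)).isOpen.measurableSet)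
        ((hgood n).disj2.sublist (List.filter_sublist))]
      congr 1
      exact List.map_congr_left (fun p hp => (hgood n).meq p (hfilter p hp))
    calc μ (f ⁻¹' O) = μ (⋃ n, f ⁻¹' E n) := by rw [← preimage_iUnion, hEunion]
    _ = ⨆ n, μ (f ⁻¹' E n) := Monotone.measure_iUnion (fun a b hab => preimage_mono (hEmono hab))
    _ = ⨆ n, μ (E n) := by simp only [hEmeas]
    _ = μ (⋃ n, E n) := (Monotone.measure_iUnion hEmono).symm
    _ = μ O := by rw [hEunion]
  -- conclude: f is measure preserving
  have hmap : μ.map f = μ := by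
    have hfm : Measurable f := hcont.measurable
    apply MeasureTheory.ext_of_generate_finite {s : Set X | IsOpen s}
      ?_ isPiSystem_isOpen ?_ ?_
    · borelize X
      exact rfl
    · intro s hs
      rw [Measure.map_apply hfm hs.measurableSet]
      exact hopen s hs
    · rw [Measure.map_apply hfm MeasurableSet.univ, preimage_univ]
  refine ⟨f, hcont, hmaster, ?_⟩
  intro s hs
  conv_rhs => rw [← hmap]
  rw [Measure.map_apply hcont.measurable hs]
theorem mem_map_swap {l : List (Set X × Set X)} {p : Set X × Set X} :
    p ∈ l.map Prod.swap ↔ p.swap ∈ l := by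
  constructor
  · intro hp; obtain ⟨q, hq, rfl⟩ := List.mem_map.1 hp; rwa [Prod.swap_swap]
  · intro hp; exact List.mem_map.2 ⟨p.swap, hp, Prod.swap_swap p⟩

theorem step2_exists
    (hsc : ∀ U V : Set X, IsClopen U → IsClopen V → μ U < μ V →
      ∃ W, W ⊆ V ∧ IsClopen W ∧ μ W = μ U)
    {S : Set X} (hS : IsClopen S) {l : List (Set X × Set X)} (hl : GoodL μ l) :
    ∃ l', GoodL μ l' ∧ (∀ p ∈ l', ∃ q ∈ l, p.1 ⊆ q.1 ∧ p.2 ⊆ q.2) ∧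
      (∀ p ∈ l', p.1 ⊆ S ∨ p.1 ⊆ Sᶜ) ∧ (∀ p ∈ l', p.2 ⊆ S ∨ p.2 ⊆ Sᶜ) := by
  obtain ⟨l1, h1, h2, h3, h4, h5, h6, h7, h8, h9⟩ :=
    stepFirst_exists hsc hS l hl.clopen1 hl.clopen2 hl.meq hl.disj1 hl.disj2
  have hg1 : GoodL μ l1 :=
    ⟨h1, h2, h3, h4, h5, fun x => h8 x (hl.cov1 x), fun x => h9 x (hl.cov2 x)⟩
  obtain ⟨l2', g1, g2, g3, g4, g5, g6, g7, g8, g9⟩ :=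
    stepFirst_exists hsc hS (l1.map Prod.swap) hg1.swap.clopen1 hg1.swap.clopen2
      hg1.swap.meq hg1.swap.disj1 hg1.swap.disj2
  have hg2' : GoodL μ l2' :=
    ⟨g1, g2, g3, g4, g5, fun x => g8 x (hg1.swap.cov1 x), fun x => g9 x (hg1.swap.cov2 x)⟩
  refine ⟨l2'.map Prod.swap, hg2'.swap, ?_, ?_, ?_⟩
  · intro p hp
    obtain ⟨r, hr, hr1, hr2⟩ := g6 p.swap (mem_map_swap.1 hp)
    obtain ⟨q, hq, hq1, hq2⟩ := h6 r.swap (mem_map_swap.1 hr)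
    exact ⟨q, hq, hr2.trans hq1, hr1.trans hq2⟩
  · intro p hp
    obtain ⟨r, hr, hr1, hr2⟩ := g6 p.swap (mem_map_swap.1 hp)
    have hrs := h7 r.swap (mem_map_swap.1 hr)
    rcases hrs with h | h
    · exact Or.inl (hr2.trans h)
    · exact Or.inr (hr2.trans h)
  · intro p hp
    exact g7 p.swap (mem_map_swap.1 hp)

theorem exists_swap_homeo [CompactSpace X] [T2Space X] [TotallyDisconnectedSpace X]
    [TopologicalSpace.MetrizableSpace X]
    (hpos : ∀ U : Set X, IsOpen U → U.Nonempty → 0 < μ U)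
    (hsc : ∀ U V : Set X, IsClopen U → IsClopen V → μ U < μ V →
      ∃ W, W ⊆ V ∧ IsClopen W ∧ μ W = μ U)
    {C D : Set X} (hC : IsClopen C) (hD : IsClopen D) (hm : μ C = μ D) :
    ∃ e : X ≃ₜ X, (∀ S : Set X, MeasurableSet S → μ (⇑e '' S) = μ S) ∧ ⇑e '' C = D := by
  classical
  obtain ⟨B, hBclopen, hBsep⟩ := exists_separating_clopens (X := X)
  -- initial partition
  have hCD : μ Cᶜ = μ Dᶜ := by
    rw [measure_compl hC.isOpen.measurableSet (measure_ne_top μ C),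
      measure_compl hD.isOpen.measurableSet (measure_ne_top μ D), hm]
  have hgood0 : GoodL μ [(C, D), (Cᶜ, Dᶜ)] := by
    refine ⟨?_, ?_, ?_, ?_, ?_, ?_, ?_⟩
    · rintro p hp
      rcases List.mem_cons.1 hp with rfl | hp
      · exact hC
      rcases List.mem_cons.1 hp with rfl | hp
      · exact hC.compl
      · simp at hp
    · rintro p hp
      rcases List.mem_cons.1 hp with rfl | hp
      · exact hD
      rcases List.mem_cons.1 hp with rfl | hp
      · exact hD.compl
      · simp at hp
    · rintro p hp
      rcases List.mem_cons.1 hp with rfl | hp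
      · exact hm
      rcases List.mem_cons.1 hp with rfl | hp
      · exact hCD
      · simp at hp
    · simp only [List.pairwise_cons, List.mem_singleton, and_true]
      constructor
      · rintro p rfl; exact disjoint_compl_right
      · simp
    · simp only [List.pairwise_cons, List.mem_singleton, and_true]
      constructor
      · rintro p rfl; exact disjoint_compl_right
      · simp
    · intro x
      by_cases hx : x ∈ C
      · exact ⟨(C, D), List.mem_cons_self, hx⟩
      · exact ⟨(Cᶜ, Dᶜ), List.mem_cons_of_mem _ (List.mem_cons_self), hx⟩
    · intro x
      by_cases hx : x ∈ D
      · exact ⟨(C, D), List.mem_cons_self, hx⟩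
      · exact ⟨(Cᶜ, Dᶜ), List.mem_cons_of_mem _ (List.mem_cons_self), hx⟩
  -- build the sequence of matched partitions
  have hstep : ∀ (n : ℕ) (l : {l : List (Set X × Set X) // GoodL μ l}),
      ∃ l' : {l : List (Set X × Set X) // GoodL μ l},
        (∀ p ∈ l'.1, ∃ q ∈ l.1, p.1 ⊆ q.1 ∧ p.2 ⊆ q.2) ∧
        (∀ p ∈ l'.1, p.1 ⊆ B n ∨ p.1 ⊆ (B n)ᶜ) ∧
        (∀ p ∈ l'.1, p.2 ⊆ B n ∨ p.2 ⊆ (B n)ᶜ) := by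
    intro n l
    obtain ⟨l', hg, hr, hs1, hs2⟩ := step2_exists hsc (hBclopen n) l.2
    exact ⟨⟨l', hg⟩, hr, hs1, hs2⟩
  choose F hF1 hF2 hF3 using hstep
  set seqS : ℕ → {l : List (Set X × Set X) // GoodL μ l} :=
    fun n => Nat.rec ⟨[(C, D), (Cᶜ, Dᶜ)], hgood0⟩ (fun n l => F n l) n with hseqS
  set seq : ℕ → List (Set X × Set X) := fun n => (seqS n).1 with hseq
  have hseqsucc : ∀ n, seq (n + 1) = (F n (seqS n)).1 := fun n => rfl
  have hgood : ∀ n, GoodL μ (seq n) := fun n => (seqS n).2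
  have href : ∀ n, ∀ p ∈ seq (n + 1), ∃ q ∈ seq n, p.1 ⊆ q.1 ∧ p.2 ⊆ q.2 := by
    intro n p hp; exact hF1 n (seqS n) p hp
  have hsplit1 : ∀ n, ∀ p ∈ seq (n + 1), p.1 ⊆ B n ∨ p.1 ⊆ (B n)ᶜ := by
    intro n p hp; exact hF2 n (seqS n) p hp
  have hsplit2 : ∀ n, ∀ p ∈ seq (n + 1), p.2 ⊆ B n ∨ p.2 ⊆ (B n)ᶜ := by
    intro n p hp; exact hF3 n (seqS n) p hp
  -- construct f and g
  obtain ⟨f, hfc, hfm, hfμ⟩ := construct_map hpos hgood href hsplit2 hBsep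
  have hgoodS : ∀ n, GoodL μ ((seq n).map Prod.swap) := fun n => (hgood n).swap
  have hrefS : ∀ n, ∀ p ∈ (seq (n + 1)).map Prod.swap,
      ∃ q ∈ (seq n).map Prod.swap, p.1 ⊆ q.1 ∧ p.2 ⊆ q.2 := by
    intro n p hp
    obtain ⟨q, hq, h1, h2⟩ := href n p.swap (mem_map_swap.1 hp)
    exact ⟨q.swap, mem_map_swap.2 (by rwa [Prod.swap_swap]), h2, h1⟩
  have hsplitS : ∀ n, ∀ p ∈ (seq (n + 1)).map Prod.swap, p.2 ⊆ B n ∨ p.2 ⊆ (B n)ᶜ := by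
    intro n p hp
    exact hsplit1 n p.swap (mem_map_swap.1 hp)
  obtain ⟨g, hgc, hgm, hgμ⟩ := construct_map hpos hgoodS hrefS hsplitS hBsep
  have hgm' : ∀ n, ∀ p ∈ seq n, ∀ x ∈ p.2, g x ∈ p.1 := by
    intro n p hp x hx
    exact hgm n p.swap (mem_map_swap.2 (by rwa [Prod.swap_swap])) x hx
  -- inverse properties
  have hsame : ∀ x y : X, (∀ n, ∃ p ∈ seq n, x ∈ p.1 ∧ y ∈ p.1) → x = y := by
    intro x y hxy
    by_contra hne
    obtain ⟨k, h1, h2⟩ := hBsep x y hne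
    obtain ⟨p, hp, hx, hy⟩ := hxy (k + 1)
    rcases hsplit1 k p hp with h | h
    · exact h2 (h hy)
    · exact h hx h1
  have hsame2 : ∀ x y : X, (∀ n, ∃ p ∈ seq n, x ∈ p.2 ∧ y ∈ p.2) → x = y := by
    intro x y hxy
    by_contra hne
    obtain ⟨k, h1, h2⟩ := hBsep x y hne
    obtain ⟨p, hp, hx, hy⟩ := hxy (k + 1)
    rcases hsplit2 k p hp with h | h
    · exact h2 (h hy)
    · exact h hx h1
  have hgf : ∀ x, g (f x) = x := by
    intro x
    apply hsame (g (f x)) x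
    intro n
    obtain ⟨p, hp, hx⟩ := (hgood n).cov1 x
    exact ⟨p, hp, hgm' n p hp (f x) (hfm n p hp x hx), hx⟩
  have hfg : ∀ y, f (g y) = y := by
    intro y
    apply hsame2 (f (g y)) y
    intro n
    obtain ⟨p, hp, hy⟩ := (hgood n).cov2 y
    exact ⟨p, hp, hfm n p hp (g y) (hgm' n p hp y hy), hy⟩
  let e : X ≃ₜ X :=
    { toFun := f
      invFun := g
      left_inv := hgf
      right_inv := hfg
      continuous_toFun := hfc
      continuous_invFun := hgc }
  have himg : ∀ s : Set X, ⇑e '' s = g ⁻¹' s := by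
    intro s
    ext y
    constructor
    · rintro ⟨x, hx, rfl⟩
      show g (f x) ∈ s
      rwa [hgf x]
    · intro hy
      exact ⟨g y, hy, hfg y⟩
  refine ⟨e, ?_, ?_⟩
  · intro S hS
    rw [himg S]
    exact hgμ S hS
  · rw [himg C]
    ext y
    constructor
    · intro hy
      have := hfg y
      rw [← this]
      exact hfm 0 (C, D) (List.mem_cons_self) (g y) hy
    · intro hy
      exact hgm' 0 (C, D) (List.mem_cons_self) y hy
theorem clopen_approx [CompactSpace X] [T2Space X] [TotallyDisconnectedSpace X]
    [TopologicalSpace.MetrizableSpace X]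
    {A : Set X} (hA : IsClosed A) {δ : ℝ≥0∞} (hδ : δ ≠ 0) :
    ∃ U, IsClopen U ∧ A ⊆ U ∧ μ U < μ A + δ := by
  have h1 : μ A < μ A + δ := ENNReal.lt_add_right (measure_ne_top μ A) hδ
  obtain ⟨O, hAO, hO, hOμ⟩ := Set.exists_isOpen_lt_of_lt A _ h1
  obtain ⟨U, hU, hAU, hUO⟩ := clopen_between hA.isCompact hO hAO
  exact ⟨U, hU, hAU, lt_of_le_of_lt (measure_mono hUO) hOμ⟩

theorem covering_induction [CompactSpace X] [T2Space X] [TotallyDisconnectedSpace X]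
    [TopologicalSpace.MetrizableSpace X]
    (hpos : ∀ U : Set X, IsOpen U → U.Nonempty → 0 < μ U)
    (hsc : ∀ U V : Set X, IsClopen U → IsClopen V → μ U < μ V →
      ∃ W, W ⊆ V ∧ IsClopen W ∧ μ W = μ U)
    {A U : Set X} (hA : IsClosed A) (hU : IsClopen U) (hAU : A ⊆ U)
    {δ : ℝ≥0∞} (hUA : μ U ≤ μ A + δ) (k : ℕ) :
    ∃ (L : List (X ≃ₜ X)) (R : Set X), IsClopen R ∧
      (∀ e ∈ L, ∀ S : Set X, MeasurableSet S → μ (⇑e '' S) = μ S) ∧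
      (⋃ e ∈ L, ⇑e '' A) ⊆ Rᶜ ∧
      (L.length : ℝ≥0∞) ≤ (k : ℝ≥0∞) ∧
      μ Rᶜ ≤ μ (⋃ e ∈ L, ⇑e '' A) + (L.length : ℝ≥0∞) * δ ∧
      (μ R ≤ μ U ∨ (k : ℝ≥0∞) * μ A ≤ μ Rᶜ) := by
  have hAmeas : MeasurableSet A := hA.measurableSet
  have himgmeas : ∀ e : X ≃ₜ X, MeasurableSet (⇑e '' A) :=
    fun e => (e.isClosed_image.2 hA).measurableSet
  have hUnion_meas : ∀ L : List (X ≃ₜ X), MeasurableSet (⋃ e ∈ L, ⇑e '' A) :=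
    fun L => MeasurableSet.biUnion L.finite_toSet.countable (fun e _ => himgmeas e)
  induction k with
  | zero =>
    refine ⟨[], univ, isClopen_univ, by simp, by simp, by simp, by simp, Or.inr (by simp)⟩
  | succ k ih =>
    obtain ⟨L, R, hR, hLμ, hsub, hlen, hbound, hdisj⟩ := ih
    rcases le_or_gt (μ R) (μ U) with hRU | hRU
    · exact ⟨L, R, hR, hLμ, hsub, hlen.trans (by exact_mod_cast Nat.cast_le.2 (Nat.le_succ k)),
        hbound, Or.inl hRU⟩
    · obtain ⟨W, hWR, hW, hWm⟩ := hsc U R hU hR hRU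
      obtain ⟨e, he, heU⟩ := exists_swap_homeo hpos hsc hU hW hWm.symm
      have hRWc : (R \ W)ᶜ = Rᶜ ∪ W := by rw [diff_eq, compl_inter, compl_compl]
      have hunion : (⋃ e' ∈ e :: L, ⇑e' '' A) = ⇑e '' A ∪ ⋃ e' ∈ L, ⇑e' '' A := by
        ext x; simp [List.mem_cons, or_and_right, exists_or]
      have heA : ⇑e '' A ⊆ W := heU ▸ image_mono hAU
      have hdisjW : Disjoint W Rᶜ := disjoint_compl_right.mono_left hWR
      refine ⟨e :: L, R \ W, hR.diff hW, ?_, ?_, ?_, ?_, Or.inr ?_⟩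
      · rintro e' he'
        rcases List.mem_cons.1 he' with rfl | he'
        · exact he
        · exact hLμ e' he'
      · rw [hunion, hRWc]
        exact union_subset (heA.trans subset_union_right)
          (hsub.trans subset_union_left)
      · simp only [List.length_cons, Nat.cast_add, Nat.cast_one]
        push_cast
        exact add_le_add_left hlen 1
      · have hμRc : μ ((R \ W)ᶜ) = μ Rᶜ + μ W := by
          rw [hRWc]
          exact measure_union (disjoint_compl_left.mono_right hWR)
            hW.isOpen.measurableSet
        have hμW_le : μ W ≤ μ (⇑e '' A) + δ := by
          rw [hWm, he A hAmeas]
          exact hUA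
        have hdis2 : Disjoint (⇑e '' A) (⋃ e' ∈ L, ⇑e' '' A) :=
          (hdisjW.mono_left heA).mono_right hsub
        have hm_union : μ (⇑e '' A ∪ ⋃ e' ∈ L, ⇑e' '' A)
            = μ (⇑e '' A) + μ (⋃ e' ∈ L, ⇑e' '' A) :=
          measure_union hdis2 (hUnion_meas L)
        rw [hunion, hμRc, hm_union]
        calc μ Rᶜ + μ W
            ≤ (μ (⋃ e' ∈ L, ⇑e' '' A) + (L.length : ℝ≥0∞) * δ) + (μ (⇑e '' A) + δ) :=
              add_le_add hbound hμW_le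
          _ = (μ (⇑e '' A) + μ (⋃ e' ∈ L, ⇑e' '' A)) + ((L.length : ℝ≥0∞) + 1) * δ := by
              ring
          _ = (μ (⇑e '' A) + μ (⋃ e' ∈ L, ⇑e' '' A)) + ((e :: L).length : ℝ≥0∞) * δ := by
              simp only [List.length_cons]; push_cast; ring
      · rcases hdisj with h | h
        · exact absurd hRU (not_lt.2 h)
        · have hAW : μ A ≤ μ W := hWm ▸ measure_mono hAU
          have hμRc : μ ((R \ W)ᶜ) = μ Rᶜ + μ W := by
            rw [hRWc]
            exact measure_union (disjoint_compl_left.mono_right hWR)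
              hW.isOpen.measurableSet
          rw [hμRc]
          push_cast
          calc ((k : ℝ≥0∞) + 1) * μ A = (k : ℝ≥0∞) * μ A + μ A := by ring
            _ ≤ μ Rᶜ + μ W := add_le_add h hAW

theorem list_union_eq_fin {Y : Type*} (L : List (X ≃ₜ X)) (A : Set X)
    (f : (X ≃ₜ X) → Set X) : (⋃ i : Fin L.length, f (L.get i)) = ⋃ e ∈ L, f e := by
  ext x
  simp only [mem_iUnion]
  constructor
  · rintro ⟨i, hx⟩
    exact ⟨L.get i, ⟨L.get_mem i, hx⟩⟩
  · rintro ⟨e, he, hx⟩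
    obtain ⟨i, hi⟩ := List.mem_iff_get.1 he
    exact ⟨i, hi ▸ hx⟩
end Step
end Aux

/-- Ergodicity property of good Cantor measure spaces. -/
theorem stmt5 {X : Type*} [TopologicalSpace X] [CompactSpace X] [T2Space X]
    [TopologicalSpace.MetrizableSpace X] [TotallyDisconnectedSpace X]
    [MeasurableSpace X] [BorelSpace X]
    (μ : MeasureTheory.Measure X) [MeasureTheory.IsFiniteMeasure μ]
    (hperf : ∀ x : X, ¬ IsOpen ({x} : Set X))
    (hcont : ∀ x : X, μ {x} = 0)
    (hpos : ∀ U : Set X, IsOpen U → U.Nonempty → 0 < μ U)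
    (hsc : ∀ U V : Set X, IsClopen U → IsClopen V → μ U < μ V →
      ∃ W, W ⊆ V ∧ IsClopen W ∧ μ W = μ U)
    (A : Set X) (hA : IsClosed A) (hApos : 0 < μ A)
    (ε : ENNReal) (hε : 0 < ε) :
    ∃ (n : ℕ) (h : Fin n → X ≃ₜ X),
      (∀ i : Fin n, ∀ S : Set X, MeasurableSet S → μ ((h i) '' S) = μ S) ∧
      μ Set.univ - ε < μ (⋃ i : Fin n, (h i) '' A) := by
  classical
  have hAmeas : MeasurableSet A := hA.measurableSet
  have hA0 : μ A ≠ 0 := hApos.ne'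
  -- normalize ε
  set ε' : ℝ≥0∞ := min ε 1 with hε'def
  have hε'0 : ε' ≠ 0 := (lt_min hε zero_lt_one).ne'
  have hε'top : ε' ≠ ∞ := ((min_le_right ε 1).trans_lt ENNReal.one_lt_top).ne
  have hε'ε : ε' ≤ ε := min_le_left _ _
  -- choose N
  obtain ⟨N, hN⟩ := ENNReal.exists_nat_gt
    ((ENNReal.div_lt_top (measure_ne_top μ univ) hA0).ne)
  have hNbound : μ univ ≤ (N : ℝ≥0∞) * μ A :=
    ((ENNReal.div_lt_iff (Or.inl hA0) (Or.inl (measure_ne_top μ A))).1 hN).le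
  -- choose δ
  set δ : ℝ≥0∞ := (ε' / 2) / ((N : ℝ≥0∞) + 2) with hδdef
  have hhalf0 : ε' / 2 ≠ 0 := (ENNReal.div_pos hε'0 (by norm_num)).ne'
  have hδ0 : δ ≠ 0 := (ENNReal.div_pos hhalf0 (by
    refine ENNReal.add_ne_top.2 ⟨ENNReal.natCast_ne_top N, by norm_num⟩)).ne'
  have hδbound : ((N : ℝ≥0∞) + 2) * δ ≤ ε' / 2 := ENNReal.mul_div_le
  -- clopen approximation
  obtain ⟨U, hU, hAU, hUμ⟩ := clopen_approx (μ := μ) hA hδ0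
  have hUA : μ U ≤ μ A + δ := hUμ.le
  -- run the covering induction
  obtain ⟨L, R, hR, hLμ, hsub, hlen, hbound, hdisj⟩ :=
    covering_induction (μ := μ) hpos hsc hA hU hAU hUA (N + 1)
  have hfinal : μ R ≤ μ U := by
    rcases hdisj with h | h
    · exact h
    · exfalso
      have h1 : ((N : ℝ≥0∞) + 1) * μ A ≤ (N : ℝ≥0∞) * μ A := by
        calc ((N : ℝ≥0∞) + 1) * μ A ≤ μ Rᶜ := by push_cast at h ⊢; exact h
          _ ≤ μ univ := measure_mono (subset_univ _)
          _ ≤ (N : ℝ≥0∞) * μ A := hNbound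
      have h2 : (N : ℝ≥0∞) * μ A < ((N : ℝ≥0∞) + 1) * μ A := by
        rw [add_mul, one_mul]
        exact ENNReal.lt_add_right
          (ENNReal.mul_ne_top (ENNReal.natCast_ne_top N) (measure_ne_top μ A)) hA0
      exact absurd h1 (not_le.2 h2)
  -- final swap to cover the remainder
  have hWex : ∃ W, W ⊆ U ∧ IsClopen W ∧ μ W = μ R := by
    rcases hfinal.lt_or_eq with hlt | heq
    · obtain ⟨W, hWU, hW, hWm⟩ := hsc R U hR hU hlt
      exact ⟨W, hWU, hW, hWm⟩
    · exact ⟨U, subset_rfl, hU, heq.symm⟩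
  obtain ⟨W, hWU, hW, hWm⟩ := hWex
  obtain ⟨e, he, heW⟩ := exists_swap_homeo (μ := μ) hpos hsc hW hR hWm
  set Lf : List (X ≃ₜ X) := Homeomorph.refl X :: e :: L with hLfdef
  set T : Set X := ⋃ e' ∈ Lf, ⇑e' '' A with hTdef
  have hLfμ : ∀ e' ∈ Lf, ∀ S : Set X, MeasurableSet S → μ (⇑e' '' S) = μ S := by
    rintro e' he' S hS
    rcases List.mem_cons.1 he' with rfl | he'
    · simp
    rcases List.mem_cons.1 he' with rfl | he'
    · exact he S hS
    · exact hLμ e' he' S hS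
  have hAT : A ⊆ T := by
    intro x hx
    rw [hTdef]
    refine mem_biUnion (List.mem_cons_self) ?_
    simpa using hx
  have hTne : μ T ≠ ∞ := measure_ne_top μ T
  -- the key bound
  have hkey : μ univ ≤ μ T + ((N : ℝ≥0∞) + 2) * δ := by
    have hWA : μ W ≤ μ (A ∩ W) + δ := by
      have h1 : μ (W ∩ A) + μ (W \ A) = μ W := measure_inter_add_diff W hAmeas
      have h2 : μ (W \ A) ≤ μ (U \ A) := measure_mono (diff_subset_diff_left hWU)
      have h3 : μ (U \ A) ≤ δ := by
        have := measure_diff hAU hAmeas.nullMeasurableSet (measure_ne_top μ A)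
        rw [this]
        exact tsub_le_iff_left.2 hUA
      calc μ W = μ (W ∩ A) + μ (W \ A) := h1.symm
        _ ≤ μ (W ∩ A) + δ := add_le_add_right (h2.trans h3) _
        _ = μ (A ∩ W) + δ := by rw [inter_comm]
    have hAWmeas : MeasurableSet (A ∩ W) := hAmeas.inter hW.isOpen.measurableSet
    have hiμ : μ (⇑e '' (A ∩ W)) = μ (A ∩ W) := he _ hAWmeas
    have hiR : ⇑e '' (A ∩ W) ⊆ R := heW ▸ image_mono inter_subset_right
    have hold_meas : MeasurableSet (⋃ e' ∈ L, ⇑e' '' A) :=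
      MeasurableSet.biUnion L.finite_toSet.countable
        (fun e' _ => (e'.isClosed_image.2 hA).measurableSet)
    have hdisj2 : Disjoint (⇑e '' (A ∩ W)) (⋃ e' ∈ L, ⇑e' '' A) :=
      ((disjoint_compl_right.mono_left hiR).mono_right hsub)
    have hsumT : μ (⇑e '' (A ∩ W)) + μ (⋃ e' ∈ L, ⇑e' '' A) ≤ μ T := by
      rw [← measure_union hdisj2 hold_meas]
      apply measure_mono
      apply union_subset
      · refine (image_mono inter_subset_left).trans ?_
        rw [hTdef]
        intro x hx
        exact mem_biUnion (List.mem_cons_of_mem _ (List.mem_cons_self)) hx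
      · rw [hTdef]
        intro x hx
        obtain ⟨e', he', hxe⟩ := mem_iUnion₂.1 hx
        exact mem_biUnion (List.mem_cons_of_mem _ (List.mem_cons_of_mem _ he')) hxe
    have hlen2 : (L.length : ℝ≥0∞) + 1 ≤ (N : ℝ≥0∞) + 2 := by
      have : (L.length : ℝ≥0∞) ≤ (N : ℝ≥0∞) + 1 := by push_cast at hlen ⊢; exact hlen
      calc (L.length : ℝ≥0∞) + 1 ≤ ((N : ℝ≥0∞) + 1) + 1 := add_le_add_left this 1
        _ = (N : ℝ≥0∞) + 2 := by ring
    calc μ univ = μ R + μ Rᶜ := (measure_add_measure_compl hR.isOpen.measurableSet).symm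
      _ ≤ (μ (A ∩ W) + δ) + (μ (⋃ e' ∈ L, ⇑e' '' A) + (L.length : ℝ≥0∞) * δ) := by
          refine add_le_add ?_ hbound
          rw [← hWm]
          exact hWA
      _ = (μ (⇑e '' (A ∩ W)) + μ (⋃ e' ∈ L, ⇑e' '' A)) + ((L.length : ℝ≥0∞) + 1) * δ := by
          rw [hiμ]; ring
      _ ≤ μ T + ((L.length : ℝ≥0∞) + 1) * δ := add_le_add_left hsumT _
      _ ≤ μ T + ((N : ℝ≥0∞) + 2) * δ :=
          add_le_add_right (mul_le_mul_left hlen2 δ) _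
  -- conclusion
  have hc : ((N : ℝ≥0∞) + 2) * δ < ε' :=
    lt_of_le_of_lt hδbound (ENNReal.half_lt_self hε'0 hε'top)
  refine ⟨Lf.length, fun i => Lf.get i, ?_, ?_⟩
  · intro i S hS
    exact hLfμ _ (Lf.get_mem i) S hS
  · have hTfin : (⋃ i : Fin Lf.length, ⇑(Lf.get i) '' A) = T :=
      list_union_eq_fin (Y := ℕ) Lf A (fun e' => ⇑e' '' A)
    rw [hTfin]
    by_cases hce : μ univ ≤ ε
    · rw [tsub_eq_zero_iff_le.2 hce]
      exact lt_of_lt_of_le hApos (measure_mono hAT)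
    · push_neg at hce
      have hεtop : ε ≠ ∞ := (hce.trans (measure_lt_top μ univ)).ne
      rw [ENNReal.sub_lt_iff_lt_right hεtop hce.le]
      calc μ univ ≤ μ T + ((N : ℝ≥0∞) + 2) * δ := hkey
        _ < μ T + ε' := ENNReal.add_lt_add_left hTne hc
        _ ≤ μ T + ε := add_le_add_right hε'ε _
end
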